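/- arXiv:2501.07681 — 6 statements merged into one kernel-verified Lean document; each statement's English description precedes it below -/
import Mathlib

section
/- Let d ≥ 1, K ≥ 1, and let μ be a probability measure on ℝ^d with finite second moment. Then the quadratic distortion G_{K,μ} is finite at every tuple x ∈ (ℝ^d)^K, and there exists a tuple x* = (x₁*, …, x_K*) ∈ (ℝ^d)^K attaining the infimum of G_{K,μ} over (ℝ^d)^K (an optimal quantization of μ at level K exists). -/
open MeasureTheory Filter Topology
open scoped ENNReal NNReal

section Pieces
variable {E : Type*} [NormedAddCommGroup E] {K : ℕ}

lemma quant_cont (hK : 1 ≤ K) (x : Fin K → E) :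
    Continuous fun y : E => ⨅ i : Fin K, ‖y - x i‖ ^ 2 := by
  haveI : Nonempty (Fin K) := ⟨⟨0, hK⟩⟩
  have : ∀ y : E, (⨅ i : Fin K, ‖y - x i‖ ^ 2)
      = Finset.univ.inf' Finset.univ_nonempty (fun i => ‖y - x i‖ ^ 2) := by
    intro y; rw [Finset.inf'_univ_eq_ciInf]
  simp only [this]
  exact Continuous.finset_inf'_apply Finset.univ_nonempty
    (fun i _ => ((continuous_id.sub continuous_const).norm).pow 2)

lemma quant_nonneg (hK : 1 ≤ K) (x : Fin K → E) (y : E) :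
    0 ≤ ⨅ i : Fin K, ‖y - x i‖ ^ 2 := by
  haveI : Nonempty (Fin K) := ⟨⟨0, hK⟩⟩
  exact le_ciInf fun i => by positivity

lemma quant_le (x : Fin K → E) (y : E) (i : Fin K) :
    (⨅ j : Fin K, ‖y - x j‖ ^ 2) ≤ ‖y - x i‖ ^ 2 :=
  ciInf_le ⟨0, fun _ ⟨j, hj⟩ => hj ▸ by positivity⟩ i

lemma quant_bdd (hK : 1 ≤ K) (x : Fin K → E) (y : E) :
    (⨅ i : Fin K, ‖y - x i‖ ^ 2) ≤ 2 * ‖y‖ ^ 2 + 2 * ‖x ⟨0, hK⟩‖ ^ 2 := by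
  refine le_trans (quant_le x y ⟨0, hK⟩) ?_
  have h1 : ‖y - x ⟨0, hK⟩‖ ≤ ‖y‖ + ‖x ⟨0, hK⟩‖ := norm_sub_le _ _
  have h2 : ‖y - x ⟨0, hK⟩‖ ^ 2 ≤ (‖y‖ + ‖x ⟨0, hK⟩‖) ^ 2 :=
    pow_le_pow_left₀ (norm_nonneg _) h1 2
  nlinarith [sq_nonneg (‖y‖ - ‖x ⟨0, hK⟩‖)]

lemma exists_subseq_quant [ProperSpace E]
    (u : ℕ → Fin K → E) (T : Finset (Fin K)) :
    ∃ φ : ℕ → ℕ, StrictMono φ ∧ ∃ S : Finset (Fin K), S ⊆ T ∧ ∃ L : Fin K → E,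
      (∀ i ∈ S, Tendsto (fun n => u (φ n) i) atTop (𝓝 (L i))) ∧
      (∀ i ∈ T, i ∉ S → Tendsto (fun n => ‖u (φ n) i‖) atTop atTop) := by
  classical
  induction T using Finset.induction_on with
  | empty =>
      exact ⟨id, strictMono_id, ∅, Finset.Subset.refl _, fun _ => 0,
        by simp, by simp⟩
  | @insert i T hiT IH =>
      obtain ⟨φ, hφ, S, hST, L, hL, hFar⟩ := IH
      by_cases hc : Tendsto (fun n => ‖u (φ n) i‖) atTop atTop
      · refine ⟨φ, hφ, S, hST.trans (Finset.subset_insert _ _), L, hL, ?_⟩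
        intro j hj hjS
        rcases Finset.mem_insert.mp hj with rfl | hj
        · exact hc
        · exact hFar j hj hjS
      · rw [tendsto_atTop_atTop] at hc
        push_neg at hc
        obtain ⟨C, hC⟩ := hc
        have hfreq : ∃ᶠ n in atTop, ‖u (φ n) i‖ < C := by
          rw [frequently_atTop]
          intro N
          obtain ⟨n, hn, hn'⟩ := hC N
          exact ⟨n, hn, hn'⟩
        obtain ⟨ψ₁, hψ₁, hψ₁C⟩ := extraction_of_frequently_atTop hfreq
        have hball : ∀ n, u (φ (ψ₁ n)) i ∈ Metric.closedBall (0 : E) C := by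
          intro n
          simpa [Metric.mem_closedBall, dist_eq_norm] using (hψ₁C n).le
        obtain ⟨z, _, ψ₂, hψ₂, hz⟩ :=
          (isCompact_closedBall (0 : E) C).tendsto_subseq hball
        refine ⟨φ ∘ ψ₁ ∘ ψ₂, hφ.comp (hψ₁.comp hψ₂), insert i S,
          Finset.insert_subset_insert _ hST, Function.update L i z, ?_, ?_⟩
        · intro j hj
          rcases Finset.mem_insert.mp hj with rfl | hj'
          · simpa [Function.update_self, Function.comp_def] using hz
          · have hji : j ≠ i := fun h => hiT (hST (h ▸ hj'))
            rw [Function.update_of_ne hji]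
            exact (hL j hj').comp ((hψ₁.comp hψ₂).tendsto_atTop)
        · intro j hj hjS
          have hji : j ≠ i := by
            rintro rfl; exact hjS (Finset.mem_insert_self _ _)
          have hjT : j ∈ T := by
            rcases Finset.mem_insert.mp hj with rfl | h; · exact absurd rfl hji
            · exact h
          have hjS' : j ∉ S := fun h => hjS (Finset.mem_insert_of_mem h)
          exact (hFar j hjT hjS').comp ((hψ₁.comp hψ₂).tendsto_atTop)

end Pieces

lemma quant_integrable {d K : ℕ} (hK : 1 ≤ K) (μ : Measure (EuclideanSpace ℝ (Fin d)))
    [IsProbabilityMeasure μ] (hμ2 : Integrable (fun y => ‖y‖ ^ 2) μ)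
    (x : Fin K → EuclideanSpace ℝ (Fin d)) :
    Integrable (fun y => ⨅ i : Fin K, ‖y - x i‖ ^ 2) μ := by
  refine Integrable.mono' ((hμ2.const_mul 2).add (integrable_const (2 * ‖x ⟨0, hK⟩‖ ^ 2)))
    (quant_cont hK x).aestronglyMeasurable ?_
  filter_upwards with y
  rw [Real.norm_eq_abs, abs_of_nonneg (quant_nonneg hK x y)]
  exact quant_bdd hK x y

/-- The quadratic distortion of a quantization grid `x` w.r.t. `μ`. -/
noncomputable def distortion {d : ℕ} (μ : Measure (EuclideanSpace ℝ (Fin d))) (K : ℕ)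
    (x : Fin K → EuclideanSpace ℝ (Fin d)) : ℝ :=
  ∫ y, (⨅ i : Fin K, ‖y - x i‖ ^ 2) ∂μ

theorem stmt5 (d K : ℕ) (hd : 1 ≤ d) (hK : 1 ≤ K)
    (μ : Measure (EuclideanSpace ℝ (Fin d))) [IsProbabilityMeasure μ]
    (hμ2 : Integrable (fun y => ‖y‖ ^ 2) μ) :
    (∀ x : Fin K → EuclideanSpace ℝ (Fin d),
        Integrable (fun y => ⨅ i : Fin K, ‖y - x i‖ ^ 2) μ) ∧
    ∃ xstar : Fin K → EuclideanSpace ℝ (Fin d),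
      ∀ x : Fin K → EuclideanSpace ℝ (Fin d), distortion μ K xstar ≤ distortion μ K x := by
  classical
  have hInt : ∀ x : Fin K → EuclideanSpace ℝ (Fin d),
      Integrable (fun y => ⨅ i : Fin K, ‖y - x i‖ ^ 2) μ := quant_integrable hK μ hμ2
  refine ⟨hInt, ?_⟩
  haveI : Nonempty (Fin K) := ⟨⟨0, hK⟩⟩
  set Fl : (Fin K → EuclideanSpace ℝ (Fin d)) → ℝ≥0∞ :=
    fun x => ∫⁻ y, ENNReal.ofReal (⨅ i : Fin K, ‖y - x i‖ ^ 2) ∂μ with hFl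
  have hmeas : ∀ x : Fin K → EuclideanSpace ℝ (Fin d),
      Measurable fun y => ENNReal.ofReal (⨅ i : Fin K, ‖y - x i‖ ^ 2) :=
    fun x => (quant_cont hK x).measurable.ennreal_ofReal
  have hfin : ∀ x, Fl x ≠ ⊤ := by
    intro x
    have h1 : Fl x ≤ ∫⁻ y, (‖(⨅ i : Fin K, ‖y - x i‖ ^ 2 : ℝ)‖₊ : ℝ≥0∞) ∂μ :=
      lintegral_mono fun y => Real.ofReal_le_enorm _
    exact (h1.trans_lt (hInt x).hasFiniteIntegral).ne
  have hdist : ∀ x, distortion μ K x = (Fl x).toReal := by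
    intro x
    rw [distortion, integral_eq_lintegral_of_nonneg_ae
      (Eventually.of_forall (quant_nonneg hK x)) (quant_cont hK x).aestronglyMeasurable]
  set El : ℝ≥0∞ := ⨅ x, Fl x with hEl
  have hEtop : El ≠ ⊤ := ((iInf_le Fl (fun _ => 0)).trans_lt (hfin _).lt_top).ne
  have hu : ∀ n : ℕ, ∃ x, Fl x < El + ((n : ℝ≥0∞) + 1)⁻¹ := by
    intro n
    refine iInf_lt_iff.mp ?_
    exact ENNReal.lt_add_right hEtop (by simp)
  choose u hu' using hu
  obtain ⟨φ, hφ, S, -, L, hL, hFar'⟩ := exists_subseq_quant u Finset.univ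
  have hFar : ∀ i : Fin K, i ∉ S → Tendsto (fun n => ‖u (φ n) i‖) atTop atTop :=
    fun i hi => hFar' i (Finset.mem_univ i) hi
  have hball : ∃ r : ℝ, 0 < μ (Metric.closedBall 0 r) := by
    by_contra h
    push_neg at h
    have hz : ∀ n : ℕ, μ (Metric.closedBall (0 : EuclideanSpace ℝ (Fin d)) n) = 0 :=
      fun n => le_antisymm (h n) zero_le
    have huniv : (Set.univ : Set (EuclideanSpace ℝ (Fin d)))
        = ⋃ n : ℕ, Metric.closedBall 0 n := by
      ext y
      simp only [Set.mem_univ, Set.mem_iUnion, Metric.mem_closedBall, dist_zero_right, true_iff]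
      exact ⟨⌈‖y‖⌉₊, Nat.le_ceil _⟩
    have h0 : μ Set.univ = 0 := by rw [huniv]; exact measure_iUnion_null hz
    simp [measure_univ] at h0
  obtain ⟨r, hr⟩ := hball
  have hSne : S.Nonempty := by
    by_contra hS0
    rw [Finset.not_nonempty_iff_eq_empty] at hS0
    subst hS0
    set m := μ (Metric.closedBall (0 : EuclideanSpace ℝ (Fin d)) r) with hm
    have hmtop : m ≠ ⊤ := (measure_lt_top μ _).ne
    have hEtop1 : El + 1 ≠ ⊤ := by simp [hEtop]
    set t : ℝ := ((El + 1) / m).toReal + 1 with ht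
    have ht1 : (1:ℝ) ≤ t := le_add_of_nonneg_left ENNReal.toReal_nonneg
    have hdivtop : (El + 1) / m ≠ ⊤ := (ENNReal.div_lt_top hEtop1 hr.ne').ne
    have hlt : (El + 1) / m < ENNReal.ofReal t := by
      rw [ENNReal.lt_ofReal_iff_toReal_lt hdivtop]; linarith
    have hkey : El + 1 < ENNReal.ofReal (t ^ 2) * m := by
      have h2 : ENNReal.ofReal t ≤ ENNReal.ofReal (t ^ 2) :=
        ENNReal.ofReal_le_ofReal (by nlinarith)
      calc El + 1 = (El + 1) / m * m := (ENNReal.div_mul_cancel hr.ne' hmtop).symm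
        _ < ENNReal.ofReal t * m := by rw [mul_comm _ m, mul_comm _ m]; exact ENNReal.mul_lt_mul_right hr.ne' hmtop hlt
        _ ≤ _ := mul_le_mul_left h2 m
    have hev : ∀ᶠ n in atTop, ∀ i : Fin K, r + t ≤ ‖u (φ n) i‖ := by
      rw [eventually_all]
      intro i
      exact (tendsto_atTop.mp (hFar i (by simp))) (r + t)
    obtain ⟨n, hn⟩ := hev.exists
    have hlow : ENNReal.ofReal (t ^ 2) * m ≤ Fl (u (φ n)) := by
      calc ENNReal.ofReal (t ^ 2) * m
          = ∫⁻ _ in Metric.closedBall 0 r, ENNReal.ofReal (t ^ 2) ∂μ :=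
            (setLIntegral_const _ _).symm
        _ ≤ ∫⁻ y in Metric.closedBall 0 r,
              ENNReal.ofReal (⨅ i : Fin K, ‖y - u (φ n) i‖ ^ 2) ∂μ := by
            refine setLIntegral_mono (hmeas _) (fun y hy => ?_)
            refine ENNReal.ofReal_le_ofReal (le_ciInf fun i => ?_)
            have h1 : ‖u (φ n) i‖ - ‖y‖ ≤ ‖y - u (φ n) i‖ := by
              rw [norm_sub_rev]; exact norm_sub_norm_le _ _
            have hy' : ‖y‖ ≤ r := by
              simpa [Metric.mem_closedBall, dist_zero_right] using hy
            have h2 : t ≤ ‖y - u (φ n) i‖ := by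
              have h3 := hn i; linarith
            have ht0 : (0:ℝ) ≤ t := by linarith
            exact pow_le_pow_left₀ ht0 h2 2
        _ ≤ Fl (u (φ n)) := setLIntegral_le_lintegral _ _
    have hup : Fl (u (φ n)) < El + 1 := by
      refine (hu' (φ n)).trans_le (add_le_add_right ?_ _)
      exact ENNReal.inv_le_one.mpr (le_add_of_nonneg_left zero_le)
    exact absurd hkey (not_lt.mpr (hlow.trans hup.le))
  obtain ⟨j₀, hj₀⟩ := hSne
  set xstar : Fin K → EuclideanSpace ℝ (Fin d) :=
    fun i => if i ∈ S then L i else L j₀ with hxstar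
  refine ⟨xstar, fun x => ?_⟩
  rw [hdist, hdist]
  refine (ENNReal.toReal_le_toReal (hfin _) (hfin _)).mpr ?_
  refine le_trans ?_ (iInf_le Fl x)
  have hpt : ∀ y, ENNReal.ofReal (⨅ i : Fin K, ‖y - xstar i‖ ^ 2)
      ≤ atTop.liminf fun n => ENNReal.ofReal (⨅ i : Fin K, ‖y - u (φ n) i‖ ^ 2) := by
    intro y
    rw [le_liminf_iff]
    intro b hb
    have hbtop : b ≠ ⊤ := (hb.trans ENNReal.ofReal_lt_top).ne
    set c : ℝ := b.toReal with hc
    have hc0 : 0 ≤ c := ENNReal.toReal_nonneg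
    have hca : c < ⨅ i : Fin K, ‖y - xstar i‖ ^ 2 := by
      rw [← ENNReal.lt_ofReal_iff_toReal_lt hbtop]
      exact hb
    have hev : ∀ i : Fin K, ∀ᶠ n in atTop, c < ‖y - u (φ n) i‖ ^ 2 := by
      intro i
      by_cases hiS : i ∈ S
      · have hlim : Tendsto (fun n => ‖y - u (φ n) i‖ ^ 2) atTop (𝓝 (‖y - L i‖ ^ 2)) :=
          ((tendsto_const_nhds.sub (hL i hiS)).norm).pow 2
        have hclt : c < ‖y - L i‖ ^ 2 := by
          refine hca.trans_le ?_
          have hx : xstar i = L i := by simp [hxstar, hiS]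
          calc (⨅ j : Fin K, ‖y - xstar j‖ ^ 2) ≤ ‖y - xstar i‖ ^ 2 := quant_le xstar y i
            _ = ‖y - L i‖ ^ 2 := by rw [hx]
        exact hlim.eventually_const_lt hclt
      · have h1 : Tendsto (fun n => ‖y - u (φ n) i‖) atTop atTop := by
          refine tendsto_atTop_mono (fun n => ?_)
            (tendsto_atTop_add_const_right atTop (-‖y‖) (hFar i hiS))
          rw [norm_sub_rev]
          have h2 := norm_sub_norm_le (u (φ n) i) y
          linarith
        filter_upwards [h1.eventually_ge_atTop (max 1 (c + 1))] with n hn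
        have h2 : (1:ℝ) ≤ ‖y - u (φ n) i‖ := le_trans (le_max_left _ _) hn
        have h3 : c + 1 ≤ ‖y - u (φ n) i‖ := le_trans (le_max_right _ _) hn
        nlinarith
    filter_upwards [eventually_all.mpr hev] with n hn
    have h4 : c < ⨅ i : Fin K, ‖y - u (φ n) i‖ ^ 2 := by
      rw [← Finset.inf'_univ_eq_ciInf]
      exact Finset.lt_inf'_iff _ |>.mpr fun i _ => hn i
    calc b = ENNReal.ofReal c := (ENNReal.ofReal_toReal hbtop).symm
      _ < ENNReal.ofReal (⨅ i : Fin K, ‖y - u (φ n) i‖ ^ 2) := by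
          rw [ENNReal.ofReal_lt_ofReal_iff (lt_of_le_of_lt hc0 h4)]
          exact h4
  calc Fl xstar ≤ ∫⁻ y, atTop.liminf
        (fun n => ENNReal.ofReal (⨅ i : Fin K, ‖y - u (φ n) i‖ ^ 2)) ∂μ :=
        lintegral_mono hpt
    _ ≤ atTop.liminf (fun n => Fl (u (φ n))) := lintegral_liminf_le (fun n => hmeas _)
    _ ≤ liminf (fun n : ℕ => El + ((n : ℝ≥0∞) + 1)⁻¹) atTop := by
        have hev2 : ∀ᶠ n in atTop, Fl (u (φ n)) ≤ El + ((n : ℝ≥0∞) + 1)⁻¹ := by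
          refine Eventually.of_forall fun n => ?_
          refine (hu' (φ n)).le.trans (add_le_add_right ?_ _)
          refine ENNReal.inv_le_inv.mpr (add_le_add_left ?_ 1)
          exact Nat.cast_le.mpr hφ.le_apply
        exact liminf_le_liminf hev2
    _ = El := by
        have h0 : Tendsto (fun n : ℕ => ((n : ℝ≥0∞) + 1)⁻¹) atTop (𝓝 0) := by
          refine tendsto_of_tendsto_of_tendsto_of_le_of_le tendsto_const_nhds
            ENNReal.tendsto_inv_nat_nhds_zero (fun n => zero_le) (fun n => ?_)
          exact ENNReal.inv_le_inv.mpr (le_add_of_nonneg_right zero_le)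
        have h1 : Tendsto (fun n : ℕ => El + ((n : ℝ≥0∞) + 1)⁻¹) atTop (𝓝 (El + 0)) :=
          tendsto_const_nhds.add h0
        rw [add_zero] at h1
        exact h1.liminf_eq
end

section
/- For every dimension d ≥ 1 and every η > 0 there exists a constant C_{d,η} ∈ (0, ∞) such that for every probability measure μ on ℝ^d with finite (2+η)-th moment and every quantization level K ≥ 1, the optimal quantization error satisfies e*_{K,μ} ≤ C_{d,η} · σ_{2+η}(μ) · K^{−1/d}, where σ_r(μ) = inf_{a ∈ ℝ^d} ( ∫_{ℝ^d} ‖x − a‖^r dμ(x) )^{1/r}. -/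
set_option maxHeartbeats 1000000

open MeasureTheory Finset

/-- The optimal quantization error at level `K`. -/
noncomputable def optQuantError {d : ℕ} (μ : Measure (EuclideanSpace ℝ (Fin d))) (K : ℕ) : ℝ :=
  Real.sqrt (⨅ x : Fin K → EuclideanSpace ℝ (Fin d), distortion μ K x)

namespace PierceAux

lemma abs_coord_le {d : ℕ} (v : EuclideanSpace ℝ (Fin d)) (j : Fin d) : |v j| ≤ ‖v‖ := by
  rw [EuclideanSpace.norm_eq]
  have h1 : |v j| = Real.sqrt (‖v j‖ ^ 2) := by
    rw [Real.sqrt_sq_eq_abs, Real.norm_eq_abs, abs_abs]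
  rw [h1]
  apply Real.sqrt_le_sqrt
  exact Finset.single_le_sum (f := fun i => ‖v i‖ ^ 2) (fun i _ => by positivity) (mem_univ j)

lemma round1d {R : ℝ} (hR : 0 < R) {n : ℕ} (hn : 0 < n) {t : ℝ} (ht : |t| ≤ R) :
    ∃ m : ℕ, m < n ∧ |t - (-R + (2 * m + 1) * R / n)| ≤ R / n := by
  have hn' : (0:ℝ) < n := by exact_mod_cast hn
  have hR2 : (0:ℝ) < 2 * R := by linarith
  set u := (t + R) * n / (2 * R) with hu
  have habs := abs_le.1 ht
  have hu0 : 0 ≤ u := by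
    apply div_nonneg _ hR2.le
    have : 0 ≤ t + R := by linarith [habs.1]
    positivity
  have hq : u * (2 * R) = (t + R) * n := by
    rw [hu, div_mul_cancel₀ _ hR2.ne']
  have hun : u ≤ n := by
    rw [hu, div_le_iff₀ hR2]
    nlinarith [habs.2]
  have key : ∀ m : ℕ, (m : ℝ) * (2 * R) ≤ (t + R) * n → (t + R) * n ≤ (m + 1 : ℝ) * (2 * R) →
      |t - (-R + (2 * m + 1) * R / n)| ≤ R / n := by
    intro m h1 h2
    have hc : t - (-R + (2 * m + 1) * R / n) = ((t + R) * n - (2 * m + 1) * R) / n := by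
      field_simp
      ring
    rw [hc, abs_div, abs_of_pos hn', div_le_div_iff_of_pos_right hn']
    rw [abs_le]
    constructor <;> nlinarith
  by_cases h : ⌊u⌋₊ < n
  · refine ⟨⌊u⌋₊, h, key _ ?_ ?_⟩
    · have := Nat.floor_le hu0
      nlinarith
    · have := (Nat.lt_floor_add_one u).le
      nlinarith
  · have hn1 : n - 1 < n := Nat.sub_lt hn one_pos
    refine ⟨n - 1, hn1, ?_⟩
    have hfl : (n : ℝ) ≤ ⌊u⌋₊ := by exact_mod_cast Nat.cast_le.2 (not_lt.1 h)
    have h1 : (n : ℝ) ≤ u := le_trans hfl (Nat.floor_le hu0)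
    have huu : u = n := le_antisymm hun h1
    have hcast : ((n - 1 : ℕ) : ℝ) = (n : ℝ) - 1 := by
      rw [Nat.cast_sub hn]; simp
    refine key (n-1) ?_ ?_ <;> rw [hcast] <;> nlinarith

variable {d : ℕ}

lemma grid (a : EuclideanSpace ℝ (Fin d)) {R : ℝ} (hR : 0 < R) {n : ℕ} (hn : 0 < n) :
    ∃ s : Finset (EuclideanSpace ℝ (Fin d)), s.card ≤ n ^ d ∧
      ∀ y : EuclideanSpace ℝ (Fin d), ‖y - a‖ ≤ R →
        ∃ q ∈ s, ‖y - q‖ ≤ Real.sqrt d * R / n := by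
  classical
  have hn' : (0:ℝ) < n := by exact_mod_cast hn
  set pt : (Fin d → ℕ) → EuclideanSpace ℝ (Fin d) :=
    fun k => a + (WithLp.equiv 2 (Fin d → ℝ)).symm (fun j => -R + (2 * (k j) + 1) * R / n)
      with hpt
  refine ⟨(Fintype.piFinset (fun _ : Fin d => Finset.range n)).image pt, ?_, ?_⟩
  · refine (Finset.card_image_le).trans ?_
    rw [Fintype.card_piFinset]
    simp
  · intro y hy
    have hcoord : ∀ j : Fin d, ∃ m : ℕ, m < n ∧
        |(y - a) j - (-R + (2 * m + 1) * R / n)| ≤ R / n := by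
      intro j
      exact round1d hR hn ((abs_coord_le (y - a) j).trans hy)
    choose m hmn hmb using hcoord
    refine ⟨pt m, Finset.mem_image_of_mem _ ?_, ?_⟩
    · rw [Fintype.mem_piFinset]
      intro j
      exact Finset.mem_range.2 (hmn j)
    · have hsub : ∀ j, (y - pt m) j = (y - a) j - (-R + (2 * (m j) + 1) * R / n) := by
        intro j
        simp [hpt, PiLp.sub_apply, PiLp.add_apply, WithLp.equiv_symm_apply, PiLp.toLp_apply]
        ring
      rw [EuclideanSpace.norm_eq]
      have hbd : ∑ j : Fin d, ‖(y - pt m) j‖ ^ 2 ≤ ∑ _j : Fin d, (R / n) ^ 2 := by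
        apply Finset.sum_le_sum
        intro j _
        rw [hsub j, Real.norm_eq_abs, ← abs_pow, abs_pow]
        have := hmb j
        have h0 : (0:ℝ) ≤ R / n := by positivity
        nlinarith [abs_nonneg ((y - a) j - (-R + (2 * (m j) + 1) * R / n))]
      refine (Real.sqrt_le_sqrt hbd).trans ?_
      rw [Finset.sum_const, Finset.card_univ, Fintype.card_fin, nsmul_eq_mul]
      rw [Real.sqrt_mul (by positivity), Real.sqrt_sq (by positivity)]
      rw [mul_div_assoc]

lemma pad {α : Type*} (S : Finset α) (hS : S.Nonempty) {K : ℕ} (h : S.card ≤ K) :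
    ∃ x : Fin K → α, ∀ p ∈ S, ∃ i, x i = p := by
  classical
  obtain ⟨p₀, hp₀⟩ := hS
  let e := S.equivFin
  refine ⟨fun i => if h' : (i : ℕ) < S.card then (e.symm ⟨i, h'⟩ : α) else p₀, ?_⟩
  intro p hp
  have hlt : ((e ⟨p, hp⟩ : Fin S.card) : ℕ) < K := lt_of_lt_of_le (e ⟨p, hp⟩).2 h
  refine ⟨⟨(e ⟨p, hp⟩ : Fin S.card), hlt⟩, ?_⟩
  have h2 : ((⟨(e ⟨p, hp⟩ : Fin S.card), (e ⟨p, hp⟩).2⟩ : Fin S.card)) = e ⟨p, hp⟩ := by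
    apply Fin.ext; rfl
  simp only [dif_pos (e ⟨p, hp⟩).2, h2, Equiv.symm_apply_apply]

variable {d : ℕ} {η : ℝ}

lemma rpow_add_le {s t q : ℝ} (hs : 0 ≤ s) (ht : 0 ≤ t) (hq : 0 ≤ q) :
    (s + t) ^ q ≤ 2 ^ q * (s ^ q + t ^ q) := by
  have h1 : s + t ≤ 2 * max s t := by
    rcases le_total s t with h | h
    · rw [max_eq_right h]; linarith
    · rw [max_eq_left h]; linarith
  calc (s + t) ^ q ≤ (2 * max s t) ^ q :=
        Real.rpow_le_rpow (by linarith) h1 hq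
    _ = 2 ^ q * (max s t) ^ q := Real.mul_rpow (by norm_num) (le_max_of_le_left hs)
    _ ≤ 2 ^ q * (s ^ q + t ^ q) := by
        apply mul_le_mul_of_nonneg_left _ (by positivity)
        rcases le_total s t with h | h
        · rw [max_eq_right h]
          have : 0 ≤ s ^ q := Real.rpow_nonneg hs q
          linarith
        · rw [max_eq_left h]
          have : 0 ≤ t ^ q := Real.rpow_nonneg ht q
          linarith

variable (μ : Measure (EuclideanSpace ℝ (Fin d))) [IsProbabilityMeasure μ]

lemma cont_rpow (b : EuclideanSpace ℝ (Fin d)) (hη : 0 < η) :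
    Continuous (fun y : EuclideanSpace ℝ (Fin d) => ‖y - b‖ ^ ((2:ℝ) + η)) := by
  apply Continuous.rpow_const
  · exact (continuous_id.sub continuous_const).norm
  · intro y; right; linarith

lemma int_rpow (hη : 0 < η)
    (hint : Integrable (fun y => ‖y‖ ^ ((2:ℝ) + η)) μ) (b : EuclideanSpace ℝ (Fin d)) :
    Integrable (fun y => ‖y - b‖ ^ ((2:ℝ) + η)) μ := by
  have hp : (0:ℝ) ≤ 2 + η := by linarith
  refine Integrable.mono' ((hint.add (integrable_const (‖b‖ ^ ((2:ℝ) + η)))).const_mul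
    (2 ^ ((2:ℝ) + η))) ((cont_rpow b hη).aestronglyMeasurable) (ae_of_all _ fun y => ?_)
  rw [Real.norm_eq_abs, abs_of_nonneg (Real.rpow_nonneg (norm_nonneg _) _)]
  calc ‖y - b‖ ^ ((2:ℝ) + η) ≤ (‖y‖ + ‖b‖) ^ ((2:ℝ) + η) :=
        Real.rpow_le_rpow (norm_nonneg _) (norm_sub_le _ _) hp
    _ ≤ 2 ^ ((2:ℝ) + η) * (‖y‖ ^ ((2:ℝ) + η) + ‖b‖ ^ ((2:ℝ) + η)) :=
        rpow_add_le (norm_nonneg _) (norm_nonneg _) hp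

lemma int_sq (hη : 0 < η)
    (hint : Integrable (fun y => ‖y‖ ^ ((2:ℝ) + η)) μ) (b : EuclideanSpace ℝ (Fin d)) :
    Integrable (fun y => ‖y - b‖ ^ 2) μ := by
  refine Integrable.mono' ((integrable_const 1).add (int_rpow μ hη hint b))
    (((continuous_id.sub continuous_const).norm.pow 2).aestronglyMeasurable)
    (ae_of_all _ fun y => ?_)
  rw [Real.norm_eq_abs, abs_of_nonneg (by positivity)]
  simp only [Pi.add_apply]
  rcases le_total ‖y - b‖ 1 with h | h
  · have : ‖y - b‖ ^ 2 ≤ 1 := pow_le_one₀ (norm_nonneg _) h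
    have h2 : (0:ℝ) ≤ ‖y - b‖ ^ ((2:ℝ) + η) := Real.rpow_nonneg (norm_nonneg _) _
    linarith
  · have h2 : ‖y - b‖ ^ 2 ≤ ‖y - b‖ ^ ((2:ℝ) + η) := by
      rw [← Real.rpow_natCast ‖y - b‖ 2]
      exact Real.rpow_le_rpow_of_exponent_le h (by push_cast; linarith)
    linarith

lemma integrand_meas {K : ℕ} (x : Fin K → EuclideanSpace ℝ (Fin d)) :
    Measurable (fun y : EuclideanSpace ℝ (Fin d) => ⨅ i, ‖y - x i‖ ^ 2) :=
  Measurable.iInf fun i => ((continuous_id.sub continuous_const).norm.pow 2).measurable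

lemma integrand_nonneg {K : ℕ} (x : Fin K → EuclideanSpace ℝ (Fin d))
    (y : EuclideanSpace ℝ (Fin d)) : 0 ≤ ⨅ i, ‖y - x i‖ ^ 2 :=
  Real.iInf_nonneg fun i => by positivity

lemma integrand_le {K : ℕ} (x : Fin K → EuclideanSpace ℝ (Fin d))
    (y q : EuclideanSpace ℝ (Fin d)) (hq : ∃ i, x i = q) :
    (⨅ i, ‖y - x i‖ ^ 2) ≤ ‖y - q‖ ^ 2 := by
  obtain ⟨i, rfl⟩ := hq
  exact ciInf_le ⟨0, fun z ⟨i', hz⟩ => hz ▸ by positivity⟩ i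

lemma integrand_int (hη : 0 < η)
    (hint : Integrable (fun y => ‖y‖ ^ ((2:ℝ) + η)) μ) {K : ℕ} (hK : 1 ≤ K)
    (x : Fin K → EuclideanSpace ℝ (Fin d)) :
    Integrable (fun y => ⨅ i, ‖y - x i‖ ^ 2) μ := by
  have i₀ : Fin K := ⟨0, hK⟩
  refine Integrable.mono' (int_sq μ hη hint (x i₀)) (integrand_meas x).aestronglyMeasurable
    (ae_of_all _ fun y => ?_)
  rw [Real.norm_eq_abs, abs_of_nonneg (integrand_nonneg x y)]
  exact integrand_le x y (x i₀) ⟨i₀, rfl⟩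

lemma geom_le {t : ℝ} (h0 : 0 ≤ t) (h1 : t < 1) (N : ℕ) :
    ∑ j ∈ Finset.range N, t ^ j ≤ (1 - t)⁻¹ := by
  have hne : t ≠ 1 := ne_of_lt h1
  have ht : (0:ℝ) < 1 - t := by linarith
  rw [geom_sum_eq hne]
  have heq : (t ^ N - 1) / (t - 1) = (1 - t ^ N) / (1 - t) := by
    rw [div_eq_div_iff (by linarith) (by linarith)]; ring
  rw [heq, inv_eq_one_div, div_le_div_iff₀ ht ht]
  have : 0 ≤ t ^ N := pow_nonneg h0 N
  nlinarith

noncomputable def c1 (d : ℕ) (η : ℝ) : ℝ := (1 - (2:ℝ) ^ (-(η/4) * (d:ℝ)))⁻¹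
noncomputable def Areal (d : ℕ) (η : ℝ) : ℝ := 1 + 2 ^ d * c1 d η
noncomputable def c2 (η : ℝ) : ℝ := (1 - (2:ℝ) ^ (-(η/2)))⁻¹
noncomputable def C1 (d : ℕ) (η : ℝ) : ℝ := d * 2 ^ ((2:ℝ) + η) * c2 η + 2 ^ η

lemma c1_pos {d : ℕ} {η : ℝ} (hd : 1 ≤ d) (hη : 0 < η) : 0 < c1 d η := by
  have h : (2:ℝ) ^ (-(η/4) * (d:ℝ)) < 1 := by
    apply Real.rpow_lt_one_of_one_lt_of_neg one_lt_two
    have : (1:ℝ) ≤ d := by exact_mod_cast hd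
    nlinarith
  rw [c1]
  exact inv_pos.2 (by linarith)

lemma c2_pos {η : ℝ} (hη : 0 < η) : 0 < c2 η := by
  have h : (2:ℝ) ^ (-(η/2)) < 1 := by
    apply Real.rpow_lt_one_of_one_lt_of_neg one_lt_two
    linarith
  rw [c2]
  exact inv_pos.2 (by linarith)

lemma Areal_pos {d : ℕ} {η : ℝ} (hd : 1 ≤ d) (hη : 0 < η) : 1 ≤ Areal d η := by
  have := c1_pos hd hη
  have h2 : (0:ℝ) < 2 ^ d := by positivity
  rw [Areal]; nlinarith

lemma C1_pos {d : ℕ} {η : ℝ} (hd : 1 ≤ d) (hη : 0 < η) : 0 < C1 d η := by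
  have h1 := c2_pos hη
  have h2 : (0:ℝ) < 2 ^ η := Real.rpow_pos_of_pos (by norm_num) η
  have h3 : (0:ℝ) < 2 ^ ((2:ℝ) + η) := Real.rpow_pos_of_pos (by norm_num) _
  have hd' : (1:ℝ) ≤ d := by exact_mod_cast hd
  have hd0 : (0:ℝ) < d := by linarith
  have := mul_pos (mul_pos hd0 h3) h1
  rw [C1]; linarith

def annuli {d : ℕ} (a : EuclideanSpace ℝ (Fin d)) (r : ℕ → ℝ) : ℕ → Set (EuclideanSpace ℝ (Fin d))
  | 0 => {y | ‖y - a‖ ≤ r 0}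
  | (k+1) => {y | r k < ‖y - a‖ ∧ ‖y - a‖ ≤ r (k+1)}

lemma annuli_meas {d : ℕ} (a : EuclideanSpace ℝ (Fin d)) (r : ℕ → ℝ) (j : ℕ) :
    MeasurableSet (annuli a r j) := by
  have hm : Measurable fun y : EuclideanSpace ℝ (Fin d) => ‖y - a‖ :=
    (continuous_id.sub continuous_const).norm.measurable
  cases j with
  | zero => exact measurableSet_le hm measurable_const
  | succ k =>
      exact (measurableSet_lt measurable_const hm).inter (measurableSet_le hm measurable_const)

lemma annuli_sub {d : ℕ} (a : EuclideanSpace ℝ (Fin d)) (r : ℕ → ℝ) (j : ℕ) :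
    ∀ y ∈ annuli a r j, ‖y - a‖ ≤ r j := by
  cases j with
  | zero => exact fun y hy => hy
  | succ k => exact fun y hy => hy.2

lemma annuli_cover {d : ℕ} (a : EuclideanSpace ℝ (Fin d)) (r : ℕ → ℝ) (J : ℕ)
    (y : EuclideanSpace ℝ (Fin d)) (hy : ‖y - a‖ ≤ r J) : ∃ j ≤ J, y ∈ annuli a r j := by
  have hex : ∃ j, ‖y - a‖ ≤ r j := ⟨J, hy⟩
  obtain ⟨j₀, hle, hP, hmin⟩ : ∃ j₀, j₀ ≤ J ∧ ‖y - a‖ ≤ r j₀ ∧ ∀ k < j₀, ¬‖y - a‖ ≤ r k :=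
    ⟨Nat.find hex, Nat.find_min' hex hy, Nat.find_spec hex, fun k hk => Nat.find_min hex hk⟩
  cases j₀ with
  | zero => exact ⟨0, Nat.zero_le J, hP⟩
  | succ k => exact ⟨k + 1, hle, not_le.1 (hmin k k.lt_succ_self), hP⟩

noncomputable def Cbig (d : ℕ) (η : ℝ) : ℝ :=
  Real.sqrt (C1 d η + 2) * 2 * ((2:ℝ) ^ d * Areal d η) ^ ((1:ℝ)/d)

variable {d : ℕ} {η : ℝ}

lemma estimate (hd : 1 ≤ d) (hη : 0 < η) (μ : Measure (EuclideanSpace ℝ (Fin d)))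
    [IsProbabilityMeasure μ] (hint : Integrable (fun y => ‖y‖ ^ ((2:ℝ) + η)) μ)
    (a : EuclideanSpace ℝ (Fin d)) (M σ : ℝ)
    (hM : M = ∫ y, ‖y - a‖ ^ ((2:ℝ) + η) ∂μ) (hMpos : 0 < M)
    (hσ : σ = M ^ (1 / ((2:ℝ) + η))) (n : ℕ) (hn : 1 ≤ n) :
    ∃ S : Finset (EuclideanSpace ℝ (Fin d)), S.Nonempty ∧
      (S.card : ℝ) ≤ Areal d η * (n:ℝ) ^ d ∧
      ∀ (K : ℕ) (x : Fin K → EuclideanSpace ℝ (Fin d)), 1 ≤ K →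
        (∀ q ∈ S, ∃ i, x i = q) →
        distortion μ K x ≤ C1 d η * σ ^ 2 / (n:ℝ) ^ 2 := by
  classical
  have hp0 : (0:ℝ) < 2 + η := by linarith
  have hσ0 : 0 < σ := by rw [hσ]; exact Real.rpow_pos_of_pos hMpos _
  have hσM : σ ^ ((2:ℝ) + η) = M := by
    rw [hσ, ← Real.rpow_mul hMpos.le, one_div, inv_mul_cancel₀ (ne_of_gt hp0), Real.rpow_one]
  set θ : ℝ := η / 4 with hθdef
  have hθ : 0 < θ := by rw [hθdef]; linarith
  have hn' : (1:ℝ) ≤ (n:ℝ) := by exact_mod_cast hn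
  have hn0 : (0:ℝ) < n := by linarith
  set J : ℕ := ⌊Real.logb 2 n / θ⌋₊ with hJdef
  set r : ℕ → ℝ := fun j => 2 ^ j * σ with hrdef
  have hr : ∀ j : ℕ, 0 < r j := fun j => by
    have : (0:ℝ) < 2 ^ j := by positivity
    exact mul_pos this hσ0
  set nj : ℕ → ℕ := fun j => ⌈(n:ℝ) * (2:ℝ) ^ (-(j:ℝ) * θ)⌉₊ with hnjdef
  have hnjpos : ∀ j : ℕ, 0 < nj j := fun j => Nat.ceil_pos.2 (by positivity)
  have hnjlow : ∀ j : ℕ, (n:ℝ) * (2:ℝ) ^ (-(j:ℝ) * θ) ≤ nj j := fun j => Nat.le_ceil _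
  -- j ≤ J → 2 ^ (jθ) ≤ n
  have hjJ : ∀ j ≤ J, (2:ℝ) ^ ((j:ℝ) * θ) ≤ n := by
    intro j hj
    have hlogb : 0 ≤ Real.logb 2 n := Real.logb_nonneg one_lt_two hn'
    have h1 : (J:ℝ) ≤ Real.logb 2 n / θ := Nat.floor_le (by positivity)
    have h2 : (j:ℝ) ≤ J := by exact_mod_cast hj
    have h4 : (J:ℝ) * θ ≤ Real.logb 2 n := by
      rw [← le_div_iff₀ hθ]; exact h1
    have h3 : (j:ℝ) * θ ≤ Real.logb 2 n := by nlinarith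
    calc (2:ℝ) ^ ((j:ℝ) * θ) ≤ (2:ℝ) ^ (Real.logb 2 n) :=
          Real.rpow_le_rpow_of_exponent_le one_le_two h3
      _ = n := Real.rpow_logb (by norm_num) (by norm_num) hn0
  have hnjup : ∀ j ≤ J, (nj j : ℝ) ≤ 2 * n * (2:ℝ) ^ (-(j:ℝ) * θ) := by
    intro j hj
    have hpow : (0:ℝ) < (2:ℝ) ^ (-(j:ℝ) * θ) := Real.rpow_pos_of_pos (by norm_num) _
    have hge1 : 1 ≤ (n:ℝ) * (2:ℝ) ^ (-(j:ℝ) * θ) := by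
      have h2 : (2:ℝ) ^ ((j:ℝ) * θ) * (2:ℝ) ^ (-(j:ℝ) * θ) = 1 := by
        rw [← Real.rpow_add (by norm_num)]; norm_num
      have := hjJ j hj
      nlinarith
    have := Nat.ceil_lt_add_one (a := (n:ℝ) * (2:ℝ) ^ (-(j:ℝ) * θ)) (by positivity)
    have hle : (nj j : ℝ) < (n:ℝ) * (2:ℝ) ^ (-(j:ℝ) * θ) + 1 := this
    nlinarith
  -- grids
  have hgr : ∀ j : ℕ, ∃ s : Finset (EuclideanSpace ℝ (Fin d)), s.card ≤ (nj j) ^ d ∧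
      ∀ y : EuclideanSpace ℝ (Fin d), ‖y - a‖ ≤ r j → ∃ q ∈ s, ‖y - q‖ ≤ Real.sqrt d * r j / nj j :=
    fun j => grid a (hr j) (hnjpos j)
  choose g hg1 hg2 using hgr
  refine ⟨insert a (Finset.biUnion (range (J+1)) g), ⟨a, mem_insert_self _ _⟩, ?_, ?_⟩
  · -- cardinality bound
    have hd' : (1:ℝ) ≤ (d:ℝ) := by exact_mod_cast hd
    have hq0 : (0:ℝ) ≤ (2:ℝ) ^ (-θ * (d:ℝ)) := (Real.rpow_pos_of_pos two_pos _).le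
    have hq1 : (2:ℝ) ^ (-θ * (d:ℝ)) < 1 :=
      Real.rpow_lt_one_of_one_lt_of_neg one_lt_two (by nlinarith)
    have hc1 : c1 d η = (1 - (2:ℝ) ^ (-θ * (d:ℝ)))⁻¹ := by rw [c1, hθdef]
    have hcard : ((insert a (Finset.biUnion (range (J+1)) g)).card : ℝ) ≤
        (∑ j ∈ range (J+1), ((nj j : ℝ)) ^ d) + 1 := by
      have h1 : (insert a (Finset.biUnion (range (J+1)) g)).card ≤
          (∑ j ∈ range (J+1), (nj j) ^ d) + 1 := by
        refine (Finset.card_insert_le _ _).trans ?_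
        have h2 : (Finset.biUnion (range (J+1)) g).card ≤ ∑ j ∈ range (J+1), (nj j) ^ d :=
          (Finset.card_biUnion_le).trans (Finset.sum_le_sum fun j _ => hg1 j)
        omega
      calc ((insert a (Finset.biUnion (range (J+1)) g)).card : ℝ)
          ≤ ((∑ j ∈ range (J+1), (nj j) ^ d : ℕ) + 1 : ℕ) := by exact_mod_cast h1
        _ = (∑ j ∈ range (J+1), ((nj j : ℝ)) ^ d) + 1 := by push_cast; ring
    have hsum : ∑ j ∈ range (J+1), ((nj j : ℝ)) ^ d ≤ 2 ^ d * (n:ℝ) ^ d * c1 d η := by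
      have hterm : ∀ j ∈ range (J+1), ((nj j : ℝ)) ^ d ≤
          (2 ^ d * (n:ℝ) ^ d) * ((2:ℝ) ^ (-θ * (d:ℝ))) ^ j := by
        intro j hj
        have hjJ' : j ≤ J := Nat.lt_succ_iff.1 (Finset.mem_range.1 hj)
        have h1 : ((nj j : ℝ)) ^ d ≤ (2 * (n:ℝ) * (2:ℝ) ^ (-(j:ℝ) * θ)) ^ d :=
          pow_le_pow_left₀ (by positivity) (hnjup j hjJ') d
        have h2 : ((2:ℝ) ^ (-(j:ℝ) * θ)) ^ d = ((2:ℝ) ^ (-θ * (d:ℝ))) ^ j := by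
          rw [← Real.rpow_natCast ((2:ℝ) ^ (-(j:ℝ) * θ)) d,
            ← Real.rpow_natCast ((2:ℝ) ^ (-θ * (d:ℝ))) j,
            ← Real.rpow_mul (by norm_num), ← Real.rpow_mul (by norm_num)]
          ring_nf
        calc ((nj j : ℝ)) ^ d ≤ (2 * (n:ℝ) * (2:ℝ) ^ (-(j:ℝ) * θ)) ^ d := h1
          _ = (2 ^ d * (n:ℝ) ^ d) * ((2:ℝ) ^ (-θ * (d:ℝ))) ^ j := by
              rw [mul_pow, mul_pow, h2]
      calc ∑ j ∈ range (J+1), ((nj j : ℝ)) ^ d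
          ≤ ∑ j ∈ range (J+1), (2 ^ d * (n:ℝ) ^ d) * ((2:ℝ) ^ (-θ * (d:ℝ))) ^ j :=
            Finset.sum_le_sum hterm
        _ = (2 ^ d * (n:ℝ) ^ d) * ∑ j ∈ range (J+1), ((2:ℝ) ^ (-θ * (d:ℝ))) ^ j := by
            rw [Finset.mul_sum]
        _ ≤ (2 ^ d * (n:ℝ) ^ d) * (1 - (2:ℝ) ^ (-θ * (d:ℝ)))⁻¹ :=
            mul_le_mul_of_nonneg_left (geom_le hq0 hq1 _) (by positivity)
        _ = 2 ^ d * (n:ℝ) ^ d * c1 d η := by rw [hc1]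
    have hnd : (1:ℝ) ≤ (n:ℝ) ^ d := one_le_pow₀ hn'
    have hc1p := c1_pos hd hη
    have h2d : (0:ℝ) < 2 ^ d := by positivity
    rw [Areal]
    nlinarith [hcard, hsum]
  · -- distortion bound
    intro K x hK hcov
    have hd' : (1:ℝ) ≤ (d:ℝ) := by exact_mod_cast hd
    set f : EuclideanSpace ℝ (Fin d) → ℝ := fun y => ⨅ i, ‖y - x i‖ ^ 2 with hfdef
    have hdist : distortion μ K x = ∫ y, f y ∂μ := rfl
    have hfi : Integrable f μ := integrand_int μ hη hint hK x
    have hf0 : ∀ y, 0 ≤ f y := integrand_nonneg x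
    have hfa : ∀ y, f y ≤ ‖y - a‖ ^ 2 :=
      fun y => integrand_le x y a (hcov a (mem_insert_self _ _))
    set B : Set (EuclideanSpace ℝ (Fin d)) := {y | ‖y - a‖ ≤ r J} with hBdef
    have hB : MeasurableSet B :=
      measurableSet_le (continuous_id.sub continuous_const).norm.measurable measurable_const
    have hsplit : ∫ y, f y ∂μ = (∫ y in B, f y ∂μ) + ∫ y in Bᶜ, f y ∂μ :=
      (integral_add_compl hB hfi).symm
    have hint_sq := int_sq μ hη hint a
    have hint_p := int_rpow μ hη hint a
    have hrJ := hr J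
    -- TAIL PART
    have htail1 : ∫ y in Bᶜ, f y ∂μ ≤ ∫ y in Bᶜ, ‖y - a‖ ^ 2 ∂μ :=
      setIntegral_mono_on hfi.integrableOn hint_sq.integrableOn hB.compl fun y _ => hfa y
    have hstep : (r J) ^ η * ∫ y in Bᶜ, ‖y - a‖ ^ 2 ∂μ ≤ M := by
      rw [← integral_const_mul]
      calc ∫ y in Bᶜ, (r J) ^ η * ‖y - a‖ ^ 2 ∂μ
          ≤ ∫ y in Bᶜ, ‖y - a‖ ^ ((2:ℝ) + η) ∂μ := by
            refine setIntegral_mono_on ((hint_sq.const_mul _).integrableOn)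
              hint_p.integrableOn hB.compl fun y hy => ?_
            have ht : r J < ‖y - a‖ := not_le.1 hy
            have ht0 : 0 < ‖y - a‖ := hrJ.trans ht
            have h1 : ‖y - a‖ ^ ((2:ℝ) + η) = ‖y - a‖ ^ (2:ℕ) * ‖y - a‖ ^ η := by
              rw [Real.rpow_add ht0, Real.rpow_two]
            rw [h1]
            have h2 : (r J) ^ η ≤ ‖y - a‖ ^ η :=
              Real.rpow_le_rpow hrJ.le ht.le hη.le
            nlinarith [Real.rpow_nonneg (norm_nonneg (y - a)) η, sq_nonneg ‖y - a‖,
              Real.rpow_pos_of_pos hrJ η]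
        _ ≤ ∫ y, ‖y - a‖ ^ ((2:ℝ) + η) ∂μ :=
            setIntegral_le_integral hint_p (ae_of_all _ fun y =>
              Real.rpow_nonneg (norm_nonneg _) _)
        _ = M := hM.symm
    have hrpadd : ∀ (u v : ℝ), (2:ℝ) ^ u * (2:ℝ) ^ v = 2 ^ (u + v) :=
      fun u v => (Real.rpow_add two_pos u v).symm
    have hMr : M = (r J) ^ η * (σ ^ 2 * (2:ℝ) ^ (-(J:ℝ) * η)) := by
      have hrpow : (r J) ^ η = (2:ℝ) ^ ((J:ℝ) * η) * σ ^ η := by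
        show ((2:ℝ) ^ (J:ℕ) * σ) ^ η = _
        rw [Real.mul_rpow (by positivity) hσ0.le, ← Real.rpow_natCast 2 J,
          ← Real.rpow_mul (by norm_num)]
      have h22 : (2:ℝ) ^ ((J:ℝ) * η) * (2:ℝ) ^ (-(J:ℝ) * η) = 1 := by
        rw [hrpadd]; norm_num
      have hMs : M = σ ^ (2:ℕ) * σ ^ η := by
        rw [← hσM, Real.rpow_add hσ0, Real.rpow_two]
      rw [hMs, hrpow]
      linear_combination (-(σ ^ (2:ℕ) * σ ^ η)) * h22
    have htail : ∫ y in Bᶜ, f y ∂μ ≤ σ ^ 2 * (2:ℝ) ^ (-(J:ℝ) * η) := by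
      have hrJη : (0:ℝ) < (r J) ^ η := Real.rpow_pos_of_pos hrJ η
      have h1 : (r J) ^ η * ∫ y in Bᶜ, f y ∂μ ≤ (r J) ^ η * (σ ^ 2 * (2:ℝ) ^ (-(J:ℝ) * η)) := by
        rw [← hMr]
        exact (mul_le_mul_of_nonneg_left htail1 hrJη.le).trans hstep
      exact le_of_mul_le_mul_left h1 hrJη
    have hJbound : (2:ℝ) ^ (-(J:ℝ) * η) ≤ (2:ℝ) ^ η / (n:ℝ) ^ 2 := by
      have hlogb0 : 0 ≤ Real.logb 2 n := Real.logb_nonneg one_lt_two hn'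
      have h1 : Real.logb 2 n / θ < (J:ℝ) + 1 := by
        have := Nat.lt_floor_add_one (Real.logb 2 n / θ)
        exact_mod_cast this
      have h2 : Real.logb 2 n < ((J:ℝ) + 1) * θ := by
        rw [div_lt_iff₀ hθ] at h1; linarith
      have hn4 : (n:ℝ) ^ 2 ≤ (2:ℝ) ^ (((J:ℝ) + 1) * η) := by
        have he1 : (n:ℝ) ^ 2 = (2:ℝ) ^ (Real.logb 2 n * (2:ℝ)) := by
          rw [Real.rpow_mul (by norm_num), Real.rpow_logb (by norm_num) (by norm_num) hn0,
            Real.rpow_two]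
        rw [he1]
        apply Real.rpow_le_rpow_of_exponent_le one_le_two
        have : θ = η / 4 := hθdef
        nlinarith
      rw [le_div_iff₀ (by positivity)]
      calc (2:ℝ) ^ (-(J:ℝ) * η) * (n:ℝ) ^ 2
          ≤ (2:ℝ) ^ (-(J:ℝ) * η) * (2:ℝ) ^ (((J:ℝ) + 1) * η) :=
            mul_le_mul_of_nonneg_left hn4 (Real.rpow_pos_of_pos two_pos _).le
        _ = (2:ℝ) ^ η := by rw [hrpadd]; congr 1; ring
    have htail2 : ∫ y in Bᶜ, f y ∂μ ≤ σ ^ 2 * ((2:ℝ) ^ η / (n:ℝ) ^ 2) :=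
      htail.trans (mul_le_mul_of_nonneg_left hJbound (sq_nonneg σ))
    -- MAIN PART
    set m : ℕ → ℝ := fun j => Real.sqrt d * r j / nj j with hmdef
    have hm0 : ∀ j : ℕ, 0 ≤ m j := fun j =>
      div_nonneg (mul_nonneg (Real.sqrt_nonneg _) (hr j).le) (Nat.cast_nonneg _)
    have hSfj : ∀ j ≤ J, ∀ y : EuclideanSpace ℝ (Fin d), ‖y - a‖ ≤ r j → f y ≤ (m j) ^ 2 := by
      intro j hj y hy
      obtain ⟨q, hqmem, hqd⟩ := hg2 j y hy
      have hqS : q ∈ insert a (Finset.biUnion (range (J+1)) g) :=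
        mem_insert_of_mem (Finset.mem_biUnion.2 ⟨j, Finset.mem_range.2 (Nat.lt_succ_of_le hj), hqmem⟩)
      refine (integrand_le x y q (hcov q hqS)).trans ?_
      have := pow_le_pow_left₀ (norm_nonneg (y - q)) hqd 2
      exact this
    set h : EuclideanSpace ℝ (Fin d) → ℝ :=
      fun y => ∑ j ∈ range (J+1), (annuli a r j).indicator (fun _ => (m j) ^ 2) y with hhdef
    have hh_int : Integrable h μ :=
      integrable_finset_sum _ fun j _ => (integrable_const _).indicator (annuli_meas a r j)
    have hh0 : ∀ y, 0 ≤ h y := fun y =>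
      Finset.sum_nonneg fun j _ => Set.indicator_nonneg (fun _ _ => sq_nonneg _) y
    have hfh : ∀ y ∈ B, f y ≤ h y := by
      intro y hy
      obtain ⟨j, hjJ', hyj⟩ := annuli_cover a r J y hy
      refine (hSfj j hjJ' y (annuli_sub a r j y hyj)).trans ?_
      have h2 : (m j) ^ 2 = (annuli a r j).indicator (fun _ => (m j) ^ 2) y :=
        (Set.indicator_of_mem hyj (fun _ => (m j)^2)).symm
      rw [h2]
      exact Finset.single_le_sum
        (f := fun k => (annuli a r k).indicator (fun _ => (m k) ^ 2) y)
        (fun k _ => Set.indicator_nonneg (fun _ _ => sq_nonneg _) y)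
        (Finset.mem_range.2 (Nat.lt_succ_of_le hjJ'))
    have hmain1 : ∫ y in B, f y ∂μ ≤ ∫ y, h y ∂μ :=
      (setIntegral_mono_on hfi.integrableOn hh_int.integrableOn hB hfh).trans
        (setIntegral_le_integral hh_int (ae_of_all _ hh0))
    have hinth : ∫ y, h y ∂μ = ∑ j ∈ range (J+1), (μ (annuli a r j)).toReal * (m j) ^ 2 := by
      rw [hhdef, integral_finset_sum _
        (fun j _ => (integrable_const _).indicator (annuli_meas a r j))]
      refine Finset.sum_congr rfl fun j _ => ?_
      rw [integral_indicator_const _ (annuli_meas a r j), smul_eq_mul]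
      rfl
    -- measure bound per annulus
    have hμb : ∀ j : ℕ, (μ (annuli a r j)).toReal ≤
        2 ^ ((2:ℝ) + η) * (2:ℝ) ^ (-(j:ℝ) * ((2:ℝ) + η)) := by
      intro j
      cases j with
      | zero =>
        simp only [Nat.cast_zero, neg_zero, zero_mul, Real.rpow_zero, mul_one]
        have h1 : (μ (annuli a r 0)).toReal ≤ 1 := by
          have h2 : (μ (annuli a r 0)).toReal ≤ (μ Set.univ).toReal :=
            ENNReal.toReal_mono (measure_ne_top μ _) (measure_mono (Set.subset_univ _))
          simpa [measure_univ] using h2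
        have h2 : (1:ℝ) ≤ 2 ^ ((2:ℝ) + η) := Real.one_le_rpow one_le_two (by linarith)
        linarith
      | succ k =>
        have hsub : annuli a r (k+1) ⊆
            {y | (r k) ^ ((2:ℝ) + η) ≤ ‖y - a‖ ^ ((2:ℝ) + η)} := by
          intro y hy
          have hy1 : r k < ‖y - a‖ := hy.1
          exact Real.rpow_le_rpow (hr k).le hy1.le hp0.le
        have hmar := mul_meas_ge_le_integral_of_nonneg (μ := μ)
          (f := fun y => ‖y - a‖ ^ ((2:ℝ) + η))
          (ae_of_all _ fun y => Real.rpow_nonneg (norm_nonneg _) _) hint_p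
          ((r k) ^ ((2:ℝ) + η))
        have hμm : (μ (annuli a r (k+1))).toReal ≤
            (μ {y | (r k) ^ ((2:ℝ) + η) ≤ ‖y - a‖ ^ ((2:ℝ) + η)}).toReal :=
          ENNReal.toReal_mono (measure_ne_top μ _) (measure_mono hsub)
        have hrkp : 0 < (r k) ^ ((2:ℝ) + η) := Real.rpow_pos_of_pos (hr k) _
        have hfin : (r k) ^ ((2:ℝ) + η) * (μ (annuli a r (k+1))).toReal ≤ M := by
          refine le_trans (mul_le_mul_of_nonneg_left hμm hrkp.le) ?_
          rw [hM]
          exact hmar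
        have hMeq : M = (r k) ^ ((2:ℝ) + η) * (2:ℝ) ^ (-(k:ℝ) * ((2:ℝ) + η)) := by
          have hrp : (r k) ^ ((2:ℝ) + η) =
              (2:ℝ) ^ ((k:ℝ) * ((2:ℝ) + η)) * σ ^ ((2:ℝ) + η) := by
            show ((2:ℝ) ^ (k:ℕ) * σ) ^ ((2:ℝ) + η) = _
            rw [Real.mul_rpow (by positivity) hσ0.le, ← Real.rpow_natCast 2 k,
              ← Real.rpow_mul (by norm_num)]
          have h22 : (2:ℝ) ^ ((k:ℝ) * ((2:ℝ) + η)) * (2:ℝ) ^ (-(k:ℝ) * ((2:ℝ) + η)) = 1 := by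
            rw [hrpadd]; norm_num
          rw [hrp, ← hσM]
          linear_combination (-(σ ^ ((2:ℝ) + η))) * h22
        have h2key : (μ (annuli a r (k+1))).toReal ≤ (2:ℝ) ^ (-(k:ℝ) * ((2:ℝ) + η)) := by
          rw [hMeq] at hfin
          exact le_of_mul_le_mul_left hfin hrkp
        refine h2key.trans (le_of_eq ?_)
        rw [hrpadd]
        congr 1
        push_cast
        ring
    -- mesh bound per layer
    have hmb : ∀ j ≤ J, (m j) ^ 2 ≤
        (d:ℝ) * σ ^ 2 * (2:ℝ) ^ ((j:ℝ) * (2 + 2*θ)) / (n:ℝ) ^ 2 := by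
      intro j hj
      have hmj : m j ≤ Real.sqrt d * (σ * (2:ℝ) ^ ((j:ℝ) * (1 + θ))) / n := by
        have hnjr : (n:ℝ) * (2:ℝ) ^ (-(j:ℝ) * θ) ≤ nj j := hnjlow j
        have hpos2 : (0:ℝ) < (n:ℝ) * (2:ℝ) ^ (-(j:ℝ) * θ) := by positivity
        have hnjp : (0:ℝ) < (nj j : ℝ) := by exact_mod_cast hnjpos j
        have hinv : ((nj j : ℝ))⁻¹ ≤ ((n:ℝ) * (2:ℝ) ^ (-(j:ℝ) * θ))⁻¹ :=
          inv_anti₀ hpos2 hnjr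
        have hsplit2 : (2:ℝ) ^ ((j:ℝ) * (1 + θ)) = (2:ℝ) ^ (j:ℕ) * (2:ℝ) ^ ((j:ℝ) * θ) := by
          rw [← Real.rpow_natCast 2 j, hrpadd]
          congr 1; ring
        have hinv2 : ((2:ℝ) ^ (-(j:ℝ) * θ))⁻¹ = (2:ℝ) ^ ((j:ℝ) * θ) := by
          rw [neg_mul, Real.rpow_neg (by norm_num : (0:ℝ) ≤ 2), inv_inv]
        calc m j = Real.sqrt d * r j * ((nj j : ℝ))⁻¹ := div_eq_mul_inv _ _
          _ ≤ Real.sqrt d * r j * ((n:ℝ) * (2:ℝ) ^ (-(j:ℝ) * θ))⁻¹ := by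
              apply mul_le_mul_of_nonneg_left hinv
              exact mul_nonneg (Real.sqrt_nonneg _) (hr j).le
          _ = Real.sqrt d * (σ * (2:ℝ) ^ ((j:ℝ) * (1 + θ))) / n := by
              show Real.sqrt d * ((2:ℝ) ^ (j:ℕ) * σ) * ((n:ℝ) * (2:ℝ) ^ (-(j:ℝ) * θ))⁻¹ = _
              rw [mul_inv, hinv2, hsplit2]
              field_simp
      have hsq := pow_le_pow_left₀ (hm0 j) hmj 2
      refine hsq.trans (le_of_eq ?_)
      have hd2 : Real.sqrt d ^ 2 = (d:ℝ) := Real.sq_sqrt (by positivity)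
      have hj2 : ((2:ℝ) ^ ((j:ℝ) * (1 + θ))) ^ 2 = (2:ℝ) ^ ((j:ℝ) * (2 + 2*θ)) := by
        rw [pow_two, hrpadd]
        congr 1; ring
      rw [div_pow, mul_pow, mul_pow, hd2, hj2]
      ring
    -- per-term bound
    have hterm : ∀ j ∈ range (J+1), (μ (annuli a r j)).toReal * (m j) ^ 2 ≤
        ((d:ℝ) * 2 ^ ((2:ℝ) + η) * σ ^ 2 / (n:ℝ) ^ 2) * ((2:ℝ) ^ (-(η/2))) ^ j := by
      intro j hj
      have hjJ' : j ≤ J := Nat.lt_succ_iff.1 (Finset.mem_range.1 hj)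
      have h1 := hμb j
      have h2 := hmb j hjJ'
      have hμ0 : (0:ℝ) ≤ (μ (annuli a r j)).toReal := ENNReal.toReal_nonneg
      have hb0 : (0:ℝ) ≤ 2 ^ ((2:ℝ) + η) * (2:ℝ) ^ (-(j:ℝ) * ((2:ℝ) + η)) := by positivity
      have hprod := mul_le_mul h1 h2 (sq_nonneg (m j)) hb0
      refine hprod.trans (le_of_eq ?_)
      have hcollapse : (2:ℝ) ^ (-(j:ℝ) * ((2:ℝ) + η)) * (2:ℝ) ^ ((j:ℝ) * (2 + 2*θ)) =
          ((2:ℝ) ^ (-(η/2))) ^ j := by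
        rw [← Real.rpow_natCast ((2:ℝ) ^ (-(η/2))) j, ← Real.rpow_mul (by norm_num), hrpadd]
        congr 1
        rw [hθdef]
        ring
      rw [← hcollapse]
      ring
    -- sum bound
    have hgeom : ∑ j ∈ range (J+1), ((2:ℝ) ^ (-(η/2))) ^ j ≤ c2 η := by
      rw [c2]
      exact geom_le (Real.rpow_pos_of_pos two_pos _).le
        (Real.rpow_lt_one_of_one_lt_of_neg one_lt_two (by linarith)) _
    have hmain : ∫ y in B, f y ∂μ ≤
        ((d:ℝ) * 2 ^ ((2:ℝ) + η) * σ ^ 2 / (n:ℝ) ^ 2) * c2 η := by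
      refine hmain1.trans ?_
      rw [hinth]
      calc ∑ j ∈ range (J+1), (μ (annuli a r j)).toReal * (m j) ^ 2
          ≤ ∑ j ∈ range (J+1),
              ((d:ℝ) * 2 ^ ((2:ℝ) + η) * σ ^ 2 / (n:ℝ) ^ 2) * ((2:ℝ) ^ (-(η/2))) ^ j :=
            Finset.sum_le_sum hterm
        _ = ((d:ℝ) * 2 ^ ((2:ℝ) + η) * σ ^ 2 / (n:ℝ) ^ 2) *
              ∑ j ∈ range (J+1), ((2:ℝ) ^ (-(η/2))) ^ j := by rw [Finset.mul_sum]
        _ ≤ _ := mul_le_mul_of_nonneg_left hgeom (by positivity)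
    -- combine
    rw [hdist, hsplit]
    have hfinal : ((d:ℝ) * 2 ^ ((2:ℝ) + η) * σ ^ 2 / (n:ℝ) ^ 2) * c2 η +
        σ ^ 2 * ((2:ℝ) ^ η / (n:ℝ) ^ 2) = C1 d η * σ ^ 2 / (n:ℝ) ^ 2 := by
      rw [C1]
      field_simp
    linarith [hmain, htail2]

lemma distortion_nonneg (μ : Measure (EuclideanSpace ℝ (Fin d))) (K : ℕ)
    (x : Fin K → EuclideanSpace ℝ (Fin d)) : 0 ≤ distortion μ K x :=
  integral_nonneg fun y => integrand_nonneg x y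

lemma Cbig_pos (hd : 1 ≤ d) (hη : 0 < η) : 0 < Cbig d η := by
  have h1 := C1_pos hd hη
  have h2 : (0:ℝ) < Real.sqrt (C1 d η + 2) := Real.sqrt_pos.2 (by linarith)
  have h3 : (0:ℝ) < (2:ℝ) ^ d * Areal d η := by
    have := Areal_pos hd hη
    positivity
  have h4 : (0:ℝ) < ((2:ℝ) ^ d * Areal d η) ^ ((1:ℝ)/d) := Real.rpow_pos_of_pos h3 _
  rw [Cbig]; positivity

lemma key (hd : 1 ≤ d) (hη : 0 < η) (μ : Measure (EuclideanSpace ℝ (Fin d)))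
    [IsProbabilityMeasure μ]
    (hint : Integrable (fun y => ‖y‖ ^ ((2:ℝ) + η)) μ)
    (a : EuclideanSpace ℝ (Fin d)) (K : ℕ) (hK : 1 ≤ K) :
    optQuantError μ K ≤ Cbig d η *
      ((∫ y, ‖y - a‖ ^ ((2:ℝ) + η) ∂μ) ^ (1 / ((2:ℝ) + η))) * (K:ℝ) ^ (-(1:ℝ)/d) := by
  have hp0 : (0:ℝ) < 2 + η := by linarith
  have hd0 : (0:ℝ) < d := by exact_mod_cast hd
  have hKpos : (0:ℝ) < K := by exact_mod_cast hK
  have hCb := Cbig_pos hd hη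
  haveI : Nonempty (Fin K) := ⟨⟨0, hK⟩⟩
  obtain ⟨M, hMdef⟩ : ∃ M' : ℝ, M' = ∫ y, ‖y - a‖ ^ ((2:ℝ) + η) ∂μ := ⟨_, rfl⟩
  rw [← hMdef]
  obtain ⟨σ, hσdef⟩ : ∃ s : ℝ, s = M ^ (1 / ((2:ℝ) + η)) := ⟨_, rfl⟩
  rw [← hσdef]
  have hM0 : 0 ≤ M := hMdef ▸ integral_nonneg fun y => Real.rpow_nonneg (norm_nonneg _) _
  have hσ0 : 0 ≤ σ := hσdef ▸ Real.rpow_nonneg hM0 _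
  have hKd : (0:ℝ) < (K:ℝ) ^ ((1:ℝ)/d) := Real.rpow_pos_of_pos hKpos _
  have hexp : (K:ℝ) ^ (-(1:ℝ)/d) = ((K:ℝ) ^ ((1:ℝ)/d))⁻¹ := by
    rw [neg_div, Real.rpow_neg hKpos.le]
  have hKnd : (0:ℝ) < (K:ℝ) ^ (-(1:ℝ)/d) := by rw [hexp]; positivity
  have hbdd : BddBelow (Set.range fun x : Fin K → EuclideanSpace ℝ (Fin d) =>
      distortion μ K x) := ⟨0, by rintro z ⟨x, rfl⟩; exact distortion_nonneg μ K x⟩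
  have hopt_le : ∀ x : Fin K → EuclideanSpace ℝ (Fin d),
      optQuantError μ K ≤ Real.sqrt (distortion μ K x) :=
    fun x => Real.sqrt_le_sqrt (ciInf_le hbdd x)
  rcases eq_or_lt_of_le hM0 with hMz | hMpos
  · -- degenerate case M = 0
    have hz : (fun y => ‖y - a‖ ^ ((2:ℝ) + η)) =ᵐ[μ] 0 :=
      (integral_eq_zero_iff_of_nonneg
        (fun y => Real.rpow_nonneg (norm_nonneg _) _) (int_rpow μ hη hint a)).1 (hMdef ▸ hMz.symm)
    have hz2 : (fun y => ⨅ i : Fin K, ‖y - (fun _ => a) i‖ ^ 2) =ᵐ[μ] 0 := by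
      filter_upwards [hz] with y hy
      have hna : ‖y - a‖ = 0 :=
        (Real.rpow_eq_zero (norm_nonneg _) (ne_of_gt hp0)).1 hy
      simp only [Pi.zero_apply]
      rw [ciInf_const, hna]
      norm_num
    have hdist0 : distortion μ K (fun _ => a) = 0 := integral_eq_zero_of_ae hz2
    have h1 : optQuantError μ K ≤ 0 := by
      have := hopt_le (fun _ => a)
      rwa [hdist0, Real.sqrt_zero] at this
    refine h1.trans ?_
    positivity
  · -- M > 0
    have hσpos : 0 < σ := hσdef ▸ Real.rpow_pos_of_pos hMpos _
    have hσM : σ ^ ((2:ℝ) + η) = M := by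
      rw [hσdef, ← Real.rpow_mul hM0, one_div, inv_mul_cancel₀ (ne_of_gt hp0), Real.rpow_one]
    have hA1 : (1:ℝ) ≤ Areal d η := Areal_pos hd hη
    have hA0 : (0:ℝ) < Areal d η := by linarith
    have hC1 := C1_pos hd hη
    have hsq2 : Real.sqrt 2 ≤ Real.sqrt (C1 d η + 2) := Real.sqrt_le_sqrt (by linarith)
    by_cases hsmall : (K:ℝ) < 2 ^ d * Areal d η
    · -- small K : one-point grid
      have hdista : distortion μ K (fun _ => a) ≤ 2 * σ ^ 2 := by
        have hgi : Integrable (fun y => σ ^ 2 + σ ^ (-η) * ‖y - a‖ ^ ((2:ℝ) + η)) μ :=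
          (integrable_const _).add ((int_rpow μ hη hint a).const_mul _)
        have hfg : ∀ y, (⨅ i : Fin K, ‖y - (fun _ => a) i‖ ^ 2) ≤
            σ ^ 2 + σ ^ (-η) * ‖y - a‖ ^ ((2:ℝ) + η) := by
          intro y
          refine (integrand_le (fun _ => a) y a ⟨⟨0, hK⟩, rfl⟩).trans ?_
          have ht0 : (0:ℝ) ≤ ‖y - a‖ := norm_nonneg _
          have hmono : (0:ℝ) ≤ σ ^ (-η) * ‖y - a‖ ^ ((2:ℝ) + η) := by
            have := Real.rpow_nonneg (le_of_lt hσpos) (-η)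
            have := Real.rpow_nonneg ht0 ((2:ℝ) + η)
            positivity
          rcases le_total ‖y - a‖ σ with hle | hge
          · nlinarith [sq_nonneg ‖y - a‖]
          · have hy0 : 0 < ‖y - a‖ := lt_of_lt_of_le hσpos hge
            have h1 : ‖y - a‖ ^ ((2:ℝ) + η) = ‖y - a‖ ^ (2:ℕ) * ‖y - a‖ ^ η := by
              rw [Real.rpow_add hy0, Real.rpow_two]
            have h2 : σ ^ η ≤ ‖y - a‖ ^ η := Real.rpow_le_rpow hσpos.le hge hη.le
            have h3 : σ ^ (-η) * σ ^ η = 1 := by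
              rw [← Real.rpow_add hσpos]; norm_num
            have h4 : (0:ℝ) < σ ^ (-η) := Real.rpow_pos_of_pos hσpos _
            have h5 : σ ^ (-η) * ‖y - a‖ ^ ((2:ℝ) + η) ≥ ‖y - a‖ ^ (2:ℕ) := by
              rw [h1]
              calc σ ^ (-η) * (‖y - a‖ ^ (2:ℕ) * ‖y - a‖ ^ η)
                  ≥ σ ^ (-η) * (‖y - a‖ ^ (2:ℕ) * σ ^ η) := by
                    apply mul_le_mul_of_nonneg_left _ h4.le
                    exact mul_le_mul_of_nonneg_left h2 (by positivity)
                _ = (σ ^ (-η) * σ ^ η) * ‖y - a‖ ^ (2:ℕ) := by ring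
                _ = ‖y - a‖ ^ (2:ℕ) := by rw [h3, one_mul]
            nlinarith [sq_nonneg σ]
        have h6 : distortion μ K (fun _ => a) ≤
            ∫ y, (σ ^ 2 + σ ^ (-η) * ‖y - a‖ ^ ((2:ℝ) + η)) ∂μ := by
          refine integral_mono (integrand_int μ hη hint hK _) hgi hfg
        have h7 : ∫ y, (σ ^ 2 + σ ^ (-η) * ‖y - a‖ ^ ((2:ℝ) + η)) ∂μ = σ ^ 2 + σ ^ (-η) * M := by
          rw [integral_add (integrable_const _) ((int_rpow μ hη hint a).const_mul _),
            integral_const, integral_const_mul]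
          simp only [probReal_univ, measure_univ, ENNReal.toReal_one, smul_eq_mul, one_mul]
          rw [hMdef]
        have h8 : σ ^ (-η) * M = σ ^ 2 := by
          rw [← hσM, ← Real.rpow_add hσpos, ← Real.rpow_two σ]
          congr 1
          ring
        rw [h7, h8] at h6
        linarith
      have hsqs : Real.sqrt (distortion μ K (fun _ => a)) ≤ Real.sqrt 2 * σ := by
        refine (Real.sqrt_le_sqrt hdista).trans (le_of_eq ?_)
        rw [Real.sqrt_mul (by norm_num), Real.sqrt_sq hσ0]
      refine (hopt_le _).trans (hsqs.trans ?_)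
      -- √2 * σ ≤ Cbig * σ * K^{-1/d}
      have hKle : (K:ℝ) ^ ((1:ℝ)/d) ≤ ((2:ℝ) ^ d * Areal d η) ^ ((1:ℝ)/d) :=
        Real.rpow_le_rpow hKpos.le hsmall.le (by positivity)
      have hmain : Real.sqrt 2 * (K:ℝ) ^ ((1:ℝ)/d) ≤ Cbig d η := by
        rw [Cbig]
        have h1 : Real.sqrt 2 ≤ Real.sqrt (C1 d η + 2) * 2 := by
          nlinarith [Real.sqrt_nonneg (2:ℝ), Real.sqrt_nonneg (C1 d η + 2)]
        exact mul_le_mul h1 hKle hKd.le (by positivity)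
      have h2 : Real.sqrt 2 ≤ Cbig d η * (K:ℝ) ^ (-(1:ℝ)/d) := by
        rw [hexp, ← div_eq_mul_inv, le_div_iff₀ hKd]
        exact hmain
      calc Real.sqrt 2 * σ ≤ (Cbig d η * (K:ℝ) ^ (-(1:ℝ)/d)) * σ :=
            mul_le_mul_of_nonneg_right h2 hσ0
        _ = Cbig d η * σ * (K:ℝ) ^ (-(1:ℝ)/d) := by ring
    · -- large K
      push_neg at hsmall
      set t : ℝ := ((K:ℝ) / Areal d η) ^ ((1:ℝ)/d) with htdef
      have hKA : (0:ℝ) < (K:ℝ) / Areal d η := by positivity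
      have htpos : 0 < t := Real.rpow_pos_of_pos hKA _
      have h2d : ((2:ℝ) ^ d) ^ ((1:ℝ)/d) = 2 := by
        rw [← Real.rpow_natCast 2 d, ← Real.rpow_mul (by norm_num)]
        rw [mul_one_div, div_self (ne_of_gt hd0), Real.rpow_one]
      have ht2 : (2:ℝ) ≤ t := by
        rw [← h2d]
        apply Real.rpow_le_rpow (by positivity) _ (by positivity)
        rw [le_div_iff₀ hA0]
        exact hsmall
      set n : ℕ := ⌊t⌋₊ with hndef
      have hn2 : 2 ≤ n := Nat.le_floor (by exact_mod_cast ht2)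
      have hn1 : 1 ≤ n := le_trans one_le_two hn2
      have hn0 : (0:ℝ) < n := by exact_mod_cast hn1
      have hnt : (n:ℝ) ≤ t := Nat.floor_le htpos.le
      have htn : t ≤ 2 * n := by
        have h1 : t < n + 1 := Nat.lt_floor_add_one t
        have h2 : (1:ℝ) ≤ n := by exact_mod_cast hn1
        linarith
      have htd : t ^ d = (K:ℝ) / Areal d η := by
        rw [htdef, ← Real.rpow_natCast (((K:ℝ) / Areal d η) ^ ((1:ℝ)/d)) d,
          ← Real.rpow_mul hKA.le, one_div, inv_mul_cancel₀ (ne_of_gt hd0), Real.rpow_one]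
      obtain ⟨S, hS1, hS2, hS3⟩ := estimate hd hη μ hint a M σ hMdef hMpos hσdef n hn1
      have hcardK : S.card ≤ K := by
        have h1 : (S.card : ℝ) ≤ (K:ℝ) := by
          refine hS2.trans ?_
          have h2 : ((n:ℝ)) ^ d ≤ t ^ d := pow_le_pow_left₀ hn0.le hnt d
          calc Areal d η * (n:ℝ) ^ d ≤ Areal d η * t ^ d :=
                mul_le_mul_of_nonneg_left h2 hA0.le
            _ = (K:ℝ) := by rw [htd]; field_simp
        exact_mod_cast h1
      obtain ⟨x, hx⟩ := pad S hS1 hcardK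
      have hdistx : distortion μ K x ≤ C1 d η * σ ^ 2 / (n:ℝ) ^ 2 := hS3 K x hK hx
      -- compute the sqrt bound
      have hApow0 : (0:ℝ) < (Areal d η) ^ ((1:ℝ)/d) := Real.rpow_pos_of_pos hA0 _
      have h1t : 1 / t = (Areal d η) ^ ((1:ℝ)/d) * (K:ℝ) ^ (-(1:ℝ)/d) := by
        rw [hexp, htdef, Real.div_rpow hKpos.le hA0.le, one_div_div, div_eq_mul_inv]
      have hσn : σ / n ≤ σ * (2 * ((Areal d η) ^ ((1:ℝ)/d) * (K:ℝ) ^ (-(1:ℝ)/d))) := by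
        have h1n : (1:ℝ)/n ≤ 2/t := by
          rw [div_le_div_iff₀ hn0 htpos]
          linarith
        have h2 := mul_le_mul_of_nonneg_left h1n hσ0
        calc σ / n = σ * (1/n) := by ring
          _ ≤ σ * (2/t) := h2
          _ = σ * (2 * (1/t)) := by ring
          _ = σ * (2 * ((Areal d η) ^ ((1:ℝ)/d) * (K:ℝ) ^ (-(1:ℝ)/d))) := by rw [h1t]
      have hσn0 : (0:ℝ) ≤ σ / n := div_nonneg hσ0 hn0.le
      have hsqd : Real.sqrt (distortion μ K x) ≤ Real.sqrt (C1 d η) * (σ / n) := by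
        refine (Real.sqrt_le_sqrt hdistx).trans (le_of_eq ?_)
        have he : C1 d η * σ ^ 2 / (n:ℝ)^2 = C1 d η * (σ/n)^2 := by
          field_simp
        rw [he, Real.sqrt_mul hC1.le, Real.sqrt_sq hσn0]
      have hApowB : (Areal d η) ^ ((1:ℝ)/d) ≤ ((2:ℝ)^d * Areal d η) ^ ((1:ℝ)/d) := by
        apply Real.rpow_le_rpow hA0.le _ (by positivity)
        have h2p : (1:ℝ) ≤ 2^d := one_le_pow₀ one_le_two
        nlinarith
      refine (hopt_le x).trans (hsqd.trans ?_)
      calc Real.sqrt (C1 d η) * (σ / n)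
          ≤ Real.sqrt (C1 d η + 2) *
              (σ * (2 * ((Areal d η) ^ ((1:ℝ)/d) * (K:ℝ) ^ (-(1:ℝ)/d)))) := by
            refine mul_le_mul (Real.sqrt_le_sqrt (by linarith)) hσn hσn0 (Real.sqrt_nonneg _)
        _ = (Real.sqrt (C1 d η + 2) * 2 * (Areal d η) ^ ((1:ℝ)/d)) * σ *
              (K:ℝ) ^ (-(1:ℝ)/d) := by ring
        _ ≤ Cbig d η * σ * (K:ℝ) ^ (-(1:ℝ)/d) := by
            rw [Cbig]
            have hmono : Real.sqrt (C1 d η + 2) * 2 * (Areal d η) ^ ((1:ℝ)/d) ≤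
                Real.sqrt (C1 d η + 2) * 2 * ((2:ℝ)^d * Areal d η) ^ ((1:ℝ)/d) :=
              mul_le_mul_of_nonneg_left hApowB (by positivity)
            exact mul_le_mul_of_nonneg_right (mul_le_mul_of_nonneg_right hmono hσ0) hKnd.le
end PierceAux

theorem stmt6 (d : ℕ) (hd : 1 ≤ d) (η : ℝ) (hη : 0 < η) :
    ∃ C : ℝ, 0 < C ∧
      ∀ μ : Measure (EuclideanSpace ℝ (Fin d)), IsProbabilityMeasure μ →
        Integrable (fun y => ‖y‖ ^ ((2 : ℝ) + η)) μ →
        ∀ K : ℕ, 1 ≤ K →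
          optQuantError μ K ≤
            C * (⨅ a : EuclideanSpace ℝ (Fin d),
                  (∫ y, ‖y - a‖ ^ ((2 : ℝ) + η) ∂μ) ^ (1 / ((2 : ℝ) + η))) *
              (K : ℝ) ^ (-(1 : ℝ) / d) := by
  refine ⟨PierceAux.Cbig d η, PierceAux.Cbig_pos hd hη, ?_⟩
  intro μ hprob hint K hK
  have hKpos : (0:ℝ) < K := by exact_mod_cast hK
  have hKnd : (0:ℝ) < (K:ℝ) ^ (-(1:ℝ)/d) := Real.rpow_pos_of_pos hKpos _
  have hCK : 0 < PierceAux.Cbig d η * (K:ℝ) ^ (-(1:ℝ)/d) :=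
    mul_pos (PierceAux.Cbig_pos hd hη) hKnd
  have hle : optQuantError μ K / (PierceAux.Cbig d η * (K:ℝ) ^ (-(1:ℝ)/d)) ≤
      ⨅ a : EuclideanSpace ℝ (Fin d),
        (∫ y, ‖y - a‖ ^ ((2 : ℝ) + η) ∂μ) ^ (1 / ((2 : ℝ) + η)) := by
    refine le_ciInf fun a => ?_
    rw [div_le_iff₀ hCK]
    calc optQuantError μ K ≤ PierceAux.Cbig d η *
          ((∫ y, ‖y - a‖ ^ ((2:ℝ) + η) ∂μ) ^ (1 / ((2:ℝ) + η))) * (K:ℝ) ^ (-(1:ℝ)/d) :=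
        PierceAux.key hd hη μ hint a K hK
      _ = (∫ y, ‖y - a‖ ^ ((2:ℝ) + η) ∂μ) ^ (1 / ((2:ℝ) + η)) *
          (PierceAux.Cbig d η * (K:ℝ) ^ (-(1:ℝ)/d)) := by ring
  rw [div_le_iff₀ hCK] at hle
  calc optQuantError μ K ≤ (⨅ a : EuclideanSpace ℝ (Fin d),
        (∫ y, ‖y - a‖ ^ ((2 : ℝ) + η) ∂μ) ^ (1 / ((2 : ℝ) + η))) *
        (PierceAux.Cbig d η * (K:ℝ) ^ (-(1:ℝ)/d)) := hle
    _ = PierceAux.Cbig d η * (⨅ a : EuclideanSpace ℝ (Fin d),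
        (∫ y, ‖y - a‖ ^ ((2 : ℝ) + η) ∂μ) ^ (1 / ((2 : ℝ) + η))) * (K:ℝ) ^ (-(1:ℝ)/d) := by
      ring
end

section
/- Fix a quantization level K ≥ 1 and a dimension d ≥ 1. Let ν and μ be probability measures on ℝ^d with finite second moments whose supports each contain at least K points. Let x ∈ (ℝ^d)^K be an optimal quantizer of ν at level K, i.e. a minimizer of G_{K,ν} over (ℝ^d)^K. Then G_{K,μ}(x) − inf_{z ∈ (ℝ^d)^K} G_{K,μ}(z) ≤ 4 e*_{K,μ} W₂(ν, μ) + 4 W₂(ν, μ)², where e*_{K,μ} = ( inf_{z ∈ (ℝ^d)^K} G_{K,μ}(z) )^{1/2}. -/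
open MeasureTheory

/-- Support of a measure: points all of whose neighborhoods have positive mass. -/
def msupport {d : ℕ} (μ : Measure (EuclideanSpace ℝ (Fin d))) : Set (EuclideanSpace ℝ (Fin d)) :=
  {y | ∀ ε > 0, 0 < μ (Metric.ball y ε)}

/-- `γ` is a coupling of `ν` and `μ`. -/
def IsCoupling {d : ℕ} (ν μ : Measure (EuclideanSpace ℝ (Fin d)))
    (γ : Measure (EuclideanSpace ℝ (Fin d) × EuclideanSpace ℝ (Fin d))) : Prop :=
  IsProbabilityMeasure γ ∧ γ.map Prod.fst = ν ∧ γ.map Prod.snd = μ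

/-- The Wasserstein-2 distance between two measures on `ℝ^d`. -/
noncomputable def W2 {d : ℕ} (ν μ : Measure (EuclideanSpace ℝ (Fin d))) : ℝ :=
  Real.sqrt (sInf {c : ℝ | ∃ γ, IsCoupling ν μ γ ∧ c = ∫ p, ‖p.1 - p.2‖ ^ 2 ∂γ})

variable {d K : ℕ}

/-- distance to the grid -/
noncomputable def qdist {d K : ℕ} (x : Fin K → EuclideanSpace ℝ (Fin d))
    (y : EuclideanSpace ℝ (Fin d)) : ℝ := ⨅ i, ‖y - x i‖

lemma qdist_nonneg (hK : 0 < K) (x : Fin K → EuclideanSpace ℝ (Fin d)) (y) :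
    0 ≤ qdist x y := by
  haveI : Nonempty (Fin K) := ⟨⟨0, hK⟩⟩
  exact Real.iInf_nonneg (fun i => norm_nonneg _)

lemma qdist_exists_min (hK : 0 < K) (x : Fin K → EuclideanSpace ℝ (Fin d)) (y) :
    ∃ j, qdist x y = ‖y - x j‖ ∧ ∀ i, ‖y - x j‖ ≤ ‖y - x i‖ := by
  haveI : Nonempty (Fin K) := ⟨⟨0, hK⟩⟩
  obtain ⟨j, hj⟩ := Finite.exists_min (fun i : Fin K => ‖y - x i‖)
  refine ⟨j, le_antisymm (ciInf_le ⟨0, by rintro _ ⟨i, rfl⟩; exact norm_nonneg _⟩ j)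
    (le_ciInf hj), hj⟩

lemma sq_qdist (hK : 0 < K) (x : Fin K → EuclideanSpace ℝ (Fin d)) (y) :
    (⨅ i, ‖y - x i‖ ^ 2) = qdist x y ^ 2 := by
  haveI : Nonempty (Fin K) := ⟨⟨0, hK⟩⟩
  obtain ⟨j, hj, hmin⟩ := qdist_exists_min hK x y
  rw [hj]
  refine le_antisymm (ciInf_le ⟨0, by rintro _ ⟨i, rfl⟩; positivity⟩ j) (le_ciInf fun i => ?_)
  exact pow_le_pow_left₀ (norm_nonneg _) (hmin i) 2

lemma qdist_le (hK : 0 < K) (x : Fin K → EuclideanSpace ℝ (Fin d)) (y y') :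
    qdist x y ≤ qdist x y' + ‖y - y'‖ := by
  obtain ⟨j, hj, _⟩ := qdist_exists_min hK x y'
  obtain ⟨j', hj', hmin'⟩ := qdist_exists_min hK x y
  rw [hj', hj]
  calc ‖y - x j'‖ ≤ ‖y - x j‖ := hmin' j
    _ ≤ ‖y' - x j‖ + ‖y - y'‖ := by
        have h : y - x j = (y - y') + (y' - x j) := by abel
        rw [h]
        have := norm_add_le (y - y') (y' - x j)
        linarith

lemma continuous_qdist (hK : 0 < K) (x : Fin K → EuclideanSpace ℝ (Fin d)) :
    Continuous (qdist x) := by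
  have : LipschitzWith 1 (qdist x) := by
    refine LipschitzWith.of_dist_le_mul fun a b => ?_
    rw [Real.dist_eq, NNReal.coe_one, one_mul, abs_sub_le_iff]
    constructor
    · have := qdist_le hK x a b; rw [dist_eq_norm]; linarith
    · have := qdist_le hK x b a; rw [dist_eq_norm, norm_sub_rev]; linarith
  exact this.continuous

lemma qdist_le_norm (hK : 0 < K) (x : Fin K → EuclideanSpace ℝ (Fin d)) (y) (i : Fin K) :
    qdist x y ≤ ‖y - x i‖ := by
  obtain ⟨j, hj, hmin⟩ := qdist_exists_min hK x y; rw [hj]; exact hmin i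

lemma integrable_sq_qdist (hK : 0 < K) (x : Fin K → EuclideanSpace ℝ (Fin d))
    (α : Measure (EuclideanSpace ℝ (Fin d))) [IsProbabilityMeasure α]
    (hα2 : Integrable (fun y => ‖y‖ ^ 2) α) :
    Integrable (fun y => qdist x y ^ 2) α := by
  set i0 : Fin K := ⟨0, hK⟩
  set c := ‖x i0‖ with hc
  refine Integrable.mono ((hα2.const_mul 2).add (integrable_const (2 * c ^ 2)))
    (((continuous_qdist hK x).pow 2).aestronglyMeasurable) ?_
  refine Filter.Eventually.of_forall fun y => ?_
  have h1 : qdist x y ≤ ‖y - x i0‖ := qdist_le_norm hK x y i0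
  have h2 : ‖y - x i0‖ ≤ ‖y‖ + c := norm_sub_le _ _
  have h0 := qdist_nonneg hK x y
  have h3 : qdist x y ^ 2 ≤ (‖y‖ + c) ^ 2 := pow_le_pow_left₀ h0 (h1.trans h2) 2
  have hb : qdist x y ^ 2 ≤ 2 * ‖y‖ ^ 2 + 2 * c ^ 2 := by nlinarith [sq_nonneg (‖y‖ - c)]
  rw [Real.norm_eq_abs, abs_of_nonneg (by positivity)]
  exact hb.trans (le_abs_self _)

set_option maxHeartbeats 1000000 in
lemma key (hK : 0 < K) (x : Fin K → EuclideanSpace ℝ (Fin d))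
    (α β : Measure (EuclideanSpace ℝ (Fin d)))
    [IsProbabilityMeasure α] [IsProbabilityMeasure β]
    (hα2 : Integrable (fun y => ‖y‖ ^ 2) α) (hβ2 : Integrable (fun y => ‖y‖ ^ 2) β)
    (γ : Measure (EuclideanSpace ℝ (Fin d) × EuclideanSpace ℝ (Fin d)))
    [IsProbabilityMeasure γ]
    (hfst : γ.map Prod.fst = α) (hsnd : γ.map Prod.snd = β) :
    ∫ y, qdist x y ^ 2 ∂β ≤
      (Real.sqrt (∫ y, qdist x y ^ 2 ∂α) + Real.sqrt (∫ p, ‖p.1 - p.2‖ ^ 2 ∂γ)) ^ 2 := by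
  have hqc := continuous_qdist hK x
  have hsqm : ∀ (m : Measure (EuclideanSpace ℝ (Fin d))),
      AEStronglyMeasurable (fun y => qdist x y ^ 2) m :=
    fun m => ((hqc.pow 2)).aestronglyMeasurable
  have hnm : ∀ (m : Measure (EuclideanSpace ℝ (Fin d))),
      AEStronglyMeasurable (fun y : EuclideanSpace ℝ (Fin d) => ‖y‖ ^ 2) m :=
    fun m => ((continuous_norm.pow 2)).aestronglyMeasurable
  -- change of variables
  have cv1 : ∫ p, qdist x p.1 ^ 2 ∂γ = ∫ y, qdist x y ^ 2 ∂α := by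
    rw [← hfst, integral_map measurable_fst.aemeasurable (hsqm _)]
  have cv2 : ∫ p, qdist x p.2 ^ 2 ∂γ = ∫ y, qdist x y ^ 2 ∂β := by
    rw [← hsnd, integral_map measurable_snd.aemeasurable (hsqm _)]
  -- integrabilities
  have i1 : Integrable (fun p : _ × _ => qdist x p.1 ^ 2) γ := by
    have h := integrable_sq_qdist hK x α hα2
    rw [← hfst] at h
    simpa [Function.comp_def] using
      (integrable_map_measure (hsqm _) measurable_fst.aemeasurable).mp h
  have i2 : Integrable (fun p : _ × _ => qdist x p.2 ^ 2) γ := by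
    have h := integrable_sq_qdist hK x β hβ2
    rw [← hsnd] at h
    simpa [Function.comp_def] using
      (integrable_map_measure (hsqm _) measurable_snd.aemeasurable).mp h
  have ifst : Integrable (fun p : _ × _ => ‖p.1‖ ^ 2) γ := by
    have h := hα2; rw [← hfst] at h
    simpa [Function.comp_def] using
      (integrable_map_measure (hnm _) measurable_fst.aemeasurable).mp h
  have isnd : Integrable (fun p : _ × _ => ‖p.2‖ ^ 2) γ := by
    have h := hβ2; rw [← hsnd] at h
    simpa [Function.comp_def] using
      (integrable_map_measure (hnm _) measurable_snd.aemeasurable).mp h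
  have ih : Integrable (fun p : _ × _ => ‖p.1 - p.2‖ ^ 2) γ := by
    refine Integrable.mono ((ifst.const_mul 2).add (isnd.const_mul 2))
      (((continuous_fst.sub continuous_snd).norm.pow 2).aestronglyMeasurable) ?_
    refine Filter.Eventually.of_forall fun p => ?_
    have h1 : ‖p.1 - p.2‖ ≤ ‖p.1‖ + ‖p.2‖ := norm_sub_le _ _
    rw [Real.norm_eq_abs, abs_of_nonneg (by positivity)]
    have h2 : ‖p.1 - p.2‖ ^ 2 ≤ (‖p.1‖ + ‖p.2‖) ^ 2 := pow_le_pow_left₀ (norm_nonneg _) h1 2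
    have : ‖p.1 - p.2‖ ^ 2 ≤ 2 * ‖p.1‖ ^ 2 + 2 * ‖p.2‖ ^ 2 := by
      nlinarith [sq_nonneg (‖p.1‖ - ‖p.2‖)]
    exact this.trans (le_abs_self _)
  have icross : Integrable (fun p : _ × _ => qdist x p.1 * ‖p.1 - p.2‖) γ := by
    refine Integrable.mono (i1.add ih)
      (((hqc.comp continuous_fst).mul (continuous_fst.sub continuous_snd).norm).aestronglyMeasurable) ?_
    refine Filter.Eventually.of_forall fun p => ?_
    have h0 := qdist_nonneg hK x p.1
    have h1 := norm_nonneg (p.1 - p.2)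
    rw [Real.norm_eq_abs, abs_of_nonneg (by positivity)]
    have : qdist x p.1 * ‖p.1 - p.2‖ ≤ qdist x p.1 ^ 2 + ‖p.1 - p.2‖ ^ 2 := by
      nlinarith [sq_nonneg (qdist x p.1 - ‖p.1 - p.2‖)]
    exact this.trans (le_abs_self _)
  -- pointwise bound
  have hpt : ∀ p : EuclideanSpace ℝ (Fin d) × EuclideanSpace ℝ (Fin d),
      qdist x p.2 ^ 2 ≤ qdist x p.1 ^ 2 +
        (2 * (qdist x p.1 * ‖p.1 - p.2‖) + ‖p.1 - p.2‖ ^ 2) := by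
    intro p
    have h := qdist_le hK x p.2 p.1
    rw [norm_sub_rev] at h
    nlinarith [qdist_nonneg hK x p.2, qdist_nonneg hK x p.1, norm_nonneg (p.1 - p.2)]
  have step : ∫ p, qdist x p.2 ^ 2 ∂γ ≤
      ∫ p, (qdist x p.1 ^ 2 + (2 * (qdist x p.1 * ‖p.1 - p.2‖) + ‖p.1 - p.2‖ ^ 2)) ∂γ :=
    integral_mono i2 (i1.add ((icross.const_mul 2).add ih)) hpt
  have iX : Integrable (fun p : _ × _ =>
      2 * (qdist x p.1 * ‖p.1 - p.2‖) + ‖p.1 - p.2‖ ^ 2) γ := (icross.const_mul 2).add ih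
  rw [integral_add i1 iX, integral_add (icross.const_mul 2) ih,
    integral_const_mul] at step
  -- Cauchy-Schwarz
  have hconj : Real.HolderConjugate 2 2 := Real.HolderConjugate.two_two
  have m1 : MemLp (fun p : _ × _ => qdist x p.1) 2 γ :=
    (memLp_two_iff_integrable_sq (hqc.comp continuous_fst).aestronglyMeasurable).mpr i1
  have m2 : MemLp (fun p : _ × _ => ‖p.1 - p.2‖) 2 γ :=
    (memLp_two_iff_integrable_sq
      (continuous_fst.sub continuous_snd).norm.aestronglyMeasurable).mpr ih
  have hofReal : ENNReal.ofReal (2:ℝ) = 2 := by norm_num [ENNReal.ofReal_ofNat]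
  have m1' : MemLp (fun p : _ × _ => qdist x p.1) (ENNReal.ofReal 2) γ := by
    rw [hofReal]; exact m1
  have m2' : MemLp (fun p : _ × _ => ‖p.1 - p.2‖) (ENNReal.ofReal 2) γ := by
    rw [hofReal]; exact m2
  have CS : ∫ p, qdist x p.1 * ‖p.1 - p.2‖ ∂γ ≤
      (∫ p, qdist x p.1 ^ (2:ℝ) ∂γ) ^ (1/(2:ℝ)) * (∫ p, ‖p.1 - p.2‖ ^ (2:ℝ) ∂γ) ^ (1/(2:ℝ)) :=
    integral_mul_le_Lp_mul_Lq_of_nonneg hconj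
      (Filter.Eventually.of_forall fun p => qdist_nonneg hK x p.1)
      (Filter.Eventually.of_forall fun p => norm_nonneg _) m1' m2'
  have hr2 : ∀ t : ℝ, t ^ (2:ℝ) = t ^ 2 := fun t => by
    rw [show (2:ℝ) = ((2:ℕ):ℝ) by norm_num, Real.rpow_natCast]
  simp only [hr2] at CS
  rw [← Real.sqrt_eq_rpow, ← Real.sqrt_eq_rpow] at CS
  -- put together
  set A := Real.sqrt (∫ y, qdist x y ^ 2 ∂α) with hA
  set B := Real.sqrt (∫ p, ‖p.1 - p.2‖ ^ 2 ∂γ) with hB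
  have hA2 : A ^ 2 = ∫ y, qdist x y ^ 2 ∂α :=
    Real.sq_sqrt (integral_nonneg fun y => by positivity)
  have hB2 : B ^ 2 = ∫ p, ‖p.1 - p.2‖ ^ 2 ∂γ :=
    Real.sq_sqrt (integral_nonneg fun p => by positivity)
  rw [cv1] at CS
  rw [cv1, cv2] at step
  nlinarith [step, CS, hA2, hB2]

set_option maxHeartbeats 1000000 in
theorem stmt7 (d K : ℕ) (hd : 1 ≤ d) (hK : 1 ≤ K)
    (μ ν : Measure (EuclideanSpace ℝ (Fin d)))
    [IsProbabilityMeasure μ] [IsProbabilityMeasure ν]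
    (hμ2 : Integrable (fun y => ‖y‖ ^ 2) μ)
    (hν2 : Integrable (fun y => ‖y‖ ^ 2) ν)
    (hμsupp : ∃ s : Finset (EuclideanSpace ℝ (Fin d)), K ≤ s.card ∧
      (s : Set (EuclideanSpace ℝ (Fin d))) ⊆ msupport μ)
    (hνsupp : ∃ s : Finset (EuclideanSpace ℝ (Fin d)), K ≤ s.card ∧
      (s : Set (EuclideanSpace ℝ (Fin d))) ⊆ msupport ν)
    (x : Fin K → EuclideanSpace ℝ (Fin d))
    (hx : ∀ z : Fin K → EuclideanSpace ℝ (Fin d), distortion ν K x ≤ distortion ν K z) :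
    distortion μ K x - (⨅ z : Fin K → EuclideanSpace ℝ (Fin d), distortion μ K z) ≤
      4 * Real.sqrt (⨅ z : Fin K → EuclideanSpace ℝ (Fin d), distortion μ K z) * W2 ν μ +
        4 * W2 ν μ ^ 2 := by
  have hK0 : 0 < K := hK
  haveI : Nonempty (Fin K) := ⟨⟨0, hK0⟩⟩
  have hdist : ∀ (m : Measure (EuclideanSpace ℝ (Fin d))) (w : Fin K → EuclideanSpace ℝ (Fin d)),
      distortion m K w = ∫ y, qdist w y ^ 2 ∂m := fun m w =>
    integral_congr_ae (Filter.Eventually.of_forall fun y => sq_qdist hK0 w y)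
  set I := ⨅ z : Fin K → EuclideanSpace ℝ (Fin d), distortion μ K z with hI
  have hdnonneg : ∀ (m : Measure (EuclideanSpace ℝ (Fin d))) (w), 0 ≤ distortion m K w := by
    intro m w
    rw [hdist]
    exact integral_nonneg fun y => by positivity
  have hI0 : 0 ≤ I := Real.iInf_nonneg fun z => hdnonneg μ z
  set S := {c : ℝ | ∃ γ, IsCoupling ν μ γ ∧ c = ∫ p, ‖p.1 - p.2‖ ^ 2 ∂γ} with hSdef
  have hSne : S.Nonempty := by
    refine ⟨∫ p, ‖p.1 - p.2‖ ^ 2 ∂(ν.prod μ), ν.prod μ, ⟨inferInstance, ?_, ?_⟩, rfl⟩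
    · simp [Measure.map_fst_prod, measure_univ]
    · simp [Measure.map_snd_prod, measure_univ]
  have hS0 : ∀ c ∈ S, 0 ≤ c := by
    rintro c ⟨γ, hγ, rfl⟩
    exact integral_nonneg fun p => by positivity
  have hsInf0 : 0 ≤ sInf S := Real.sInf_nonneg hS0
  have hW : W2 ν μ = Real.sqrt (sInf S) := rfl
  have hWsq : W2 ν μ ^ 2 = sInf S := by rw [hW, Real.sq_sqrt hsInf0]
  have hW0 : 0 ≤ W2 ν μ := Real.sqrt_nonneg _
  have main : ∀ ε > 0, distortion μ K x - I ≤
      ε + 4 * Real.sqrt (I + ε) * Real.sqrt (W2 ν μ ^ 2 + ε) + 4 * (W2 ν μ ^ 2 + ε) := by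
    intro ε hε
    obtain ⟨z, hz⟩ := exists_lt_of_ciInf_lt (show I < I + ε by linarith)
    obtain ⟨c, hcS, hclt⟩ := Real.lt_sInf_add_pos hSne hε
    obtain ⟨γ, ⟨hγp, hγ1, hγ2⟩, rfl⟩ := hcS
    haveI := hγp
    set γ' := γ.map Prod.swap with hγ'def
    haveI : IsProbabilityMeasure γ' := Measure.isProbabilityMeasure_map measurable_swap.aemeasurable
    have hγ'1 : γ'.map Prod.fst = μ := by
      rw [hγ'def, Measure.map_map measurable_fst measurable_swap]
      have h : (Prod.fst ∘ Prod.swap : EuclideanSpace ℝ (Fin d) × EuclideanSpace ℝ (Fin d) → EuclideanSpace ℝ (Fin d)) = Prod.snd := rfl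
      rw [h]; exact hγ2
    have hγ'2 : γ'.map Prod.snd = ν := by
      rw [hγ'def, Measure.map_map measurable_snd measurable_swap]
      have h : (Prod.snd ∘ Prod.swap : EuclideanSpace ℝ (Fin d) × EuclideanSpace ℝ (Fin d) → EuclideanSpace ℝ (Fin d)) = Prod.fst := rfl
      rw [h]; exact hγ1
    have hcost' : ∫ p, ‖p.1 - p.2‖ ^ 2 ∂γ' = ∫ p, ‖p.1 - p.2‖ ^ 2 ∂γ := by
      rw [hγ'def, integral_map (f := fun p : EuclideanSpace ℝ (Fin d) × EuclideanSpace ℝ (Fin d) => ‖p.1 - p.2‖ ^ 2) measurable_swap.aemeasurable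
        ((continuous_fst.sub continuous_snd).norm.pow 2).aestronglyMeasurable]
      exact integral_congr_ae (Filter.Eventually.of_forall fun p => by
        simp [Prod.swap, norm_sub_rev])
    set b := Real.sqrt (∫ p, ‖p.1 - p.2‖ ^ 2 ∂γ) with hbdef
    have k1 : ∫ y, qdist x y ^ 2 ∂μ ≤ (Real.sqrt (∫ y, qdist x y ^ 2 ∂ν) + b) ^ 2 :=
      key hK0 x ν μ hν2 hμ2 γ hγ1 hγ2
    have k2 : ∫ y, qdist z y ^ 2 ∂ν ≤ (Real.sqrt (∫ y, qdist z y ^ 2 ∂μ) + b) ^ 2 := by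
      have h := key hK0 z μ ν hμ2 hν2 γ' hγ'1 hγ'2
      rwa [hcost'] at h
    set a := Real.sqrt (∫ y, qdist z y ^ 2 ∂μ) with hadef
    have ha0 : 0 ≤ a := Real.sqrt_nonneg _
    have hb0 : 0 ≤ b := Real.sqrt_nonneg _
    have ha2 : a ^ 2 = ∫ y, qdist z y ^ 2 ∂μ :=
      Real.sq_sqrt (integral_nonneg fun y => by positivity)
    have hb2 : b ^ 2 = ∫ p, ‖p.1 - p.2‖ ^ 2 ∂γ :=
      Real.sq_sqrt (integral_nonneg fun p => by positivity)
    have hxz : ∫ y, qdist x y ^ 2 ∂ν ≤ (a + b) ^ 2 := by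
      calc ∫ y, qdist x y ^ 2 ∂ν = distortion ν K x := (hdist ν x).symm
        _ ≤ distortion ν K z := hx z
        _ = ∫ y, qdist z y ^ 2 ∂ν := hdist ν z
        _ ≤ (a + b) ^ 2 := k2
    have hsx : Real.sqrt (∫ y, qdist x y ^ 2 ∂ν) ≤ a + b := by
      have h := Real.sqrt_le_sqrt hxz
      rwa [Real.sqrt_sq (by positivity)] at h
    have k3 : ∫ y, qdist x y ^ 2 ∂μ ≤ (a + 2 * b) ^ 2 := by
      refine k1.trans ?_
      have hs0 : 0 ≤ Real.sqrt (∫ y, qdist x y ^ 2 ∂ν) := Real.sqrt_nonneg _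
      have h2 : Real.sqrt (∫ y, qdist x y ^ 2 ∂ν) + b ≤ a + 2 * b := by linarith
      exact pow_le_pow_left₀ (by positivity) h2 2
    have haI : a ≤ Real.sqrt (I + ε) := by
      apply Real.sqrt_le_sqrt
      rw [← hdist μ z]
      exact hz.le
    have hbW : b ≤ Real.sqrt (W2 ν μ ^ 2 + ε) := by
      apply Real.sqrt_le_sqrt
      rw [hWsq]
      exact hclt.le
    have hprod : a * b ≤ Real.sqrt (I + ε) * Real.sqrt (W2 ν μ ^ 2 + ε) :=
      mul_le_mul haI hbW hb0 (Real.sqrt_nonneg _)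
    have hbsq : b ^ 2 ≤ W2 ν μ ^ 2 + ε := by
      rw [hb2, hWsq]; exact hclt.le
    have hasq : a ^ 2 ≤ I + ε := by
      rw [ha2, ← hdist μ z]; exact hz.le
    have hfin : distortion μ K x ≤ (a + 2 * b) ^ 2 := by rw [hdist μ x]; exact k3
    nlinarith [hfin, hprod, hbsq, hasq]
  have hlim : Filter.Tendsto
      (fun ε : ℝ => ε + 4 * Real.sqrt (I + ε) * Real.sqrt (W2 ν μ ^ 2 + ε) + 4 * (W2 ν μ ^ 2 + ε))
      (nhdsWithin 0 (Set.Ioi 0))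
      (nhds (4 * Real.sqrt I * W2 ν μ + 4 * W2 ν μ ^ 2)) := by
    apply Filter.Tendsto.mono_left _ nhdsWithin_le_nhds
    have hcont : Continuous
        (fun ε : ℝ => ε + 4 * Real.sqrt (I + ε) * Real.sqrt (W2 ν μ ^ 2 + ε) +
          4 * (W2 ν μ ^ 2 + ε)) := by
      apply Continuous.add
      apply Continuous.add continuous_id
      · exact ((continuous_const.mul
          (Real.continuous_sqrt.comp (continuous_const.add continuous_id))).mul
          (Real.continuous_sqrt.comp (continuous_const.add continuous_id)))
      · exact continuous_const.mul (continuous_const.add continuous_id)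
    have h0 := hcont.tendsto 0
    simp only [add_zero] at h0
    rw [Real.sqrt_sq hW0] at h0
    have heq : (0:ℝ) + 4 * Real.sqrt I * W2 ν μ + 4 * W2 ν μ ^ 2 =
        4 * Real.sqrt I * W2 ν μ + 4 * W2 ν μ ^ 2 := by ring
    rwa [heq] at h0
  refine ge_of_tendsto hlim ?_
  filter_upwards [self_mem_nhdsWithin] with ε hε
  exact main ε hε
end

section
/- Let d, K ≥ 1, let μ be a probability measure on ℝ^d with finite second moment, and let x = (x₁,…,x_K) ∈ (ℝ^d)^K be such that the x_i are pairwise distinct and μ(∂C_i) = 0 for each Voronoi cell C_i of x. Then the quadratic distortion G_{K,μ} : (ℝ^d)^K → ℝ is (Fréchet) differentiable at x, and its derivative in the direction (h₁,…,h_K) equals Σ_{i=1}^K ⟨ 2 ∫_{C_i} (x_i − ξ) dμ(ξ), h_i ⟩; that is, the gradient of G_{K,μ} at x has i-th component 2 ∫_{C_i} (x_i − ξ) dμ(ξ). -/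
open MeasureTheory RealInnerProductSpace

/-- The Voronoi cell of the `i`-th point of the grid `x`. -/
noncomputable def voronoiCell {d K : ℕ} (x : Fin K → EuclideanSpace ℝ (Fin d)) (i : Fin K) :
    Set (EuclideanSpace ℝ (Fin d)) :=
  {y | ‖y - x i‖ = ⨅ j : Fin K, ‖y - x j‖}



section aux
variable {K : ℕ} [Nonempty (Fin K)]

lemma exists_ciInf_eq (a : Fin K → ℝ) : ∃ i, (⨅ j, a j) = a i ∧ ∀ j, a i ≤ a j := by
  obtain ⟨i, hi⟩ := Finite.exists_min a
  exact ⟨i, le_antisymm (ciInf_le (Finite.bddBelow_range a) i) (le_ciInf hi), hi⟩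

lemma ciInf_eq_of_le (a : Fin K → ℝ) (i : Fin K) (h : ∀ j, a i ≤ a j) : (⨅ j, a j) = a i :=
  le_antisymm (ciInf_le (Finite.bddBelow_range a) i) (le_ciInf h)

lemma abs_ciInf_sub_ciInf_le (a b : Fin K → ℝ) (c : ℝ) (h : ∀ i, |a i - b i| ≤ c) :
    |(⨅ i, a i) - ⨅ i, b i| ≤ c := by
  obtain ⟨i, hi, hi'⟩ := exists_ciInf_eq a
  obtain ⟨j, hj, hj'⟩ := exists_ciInf_eq b
  rw [hi, hj, abs_le]
  constructor
  · have := (abs_le.1 (h i)).1; linarith [hj' i]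
  · have := (abs_le.1 (h j)).2; linarith [hi' j]

end aux

variable {d K : ℕ} [Nonempty (Fin K)]

lemma contInf (z : Fin K → EuclideanSpace ℝ (Fin d)) :
    Continuous fun y : EuclideanSpace ℝ (Fin d) => ⨅ i, ‖y - z i‖ ^ 2 := by
  have : (fun y : EuclideanSpace ℝ (Fin d) => ⨅ i, ‖y - z i‖ ^ 2)
      = fun y => Finset.univ.inf' Finset.univ_nonempty (fun i => ‖y - z i‖ ^ 2) := by
    ext y; rw [Finset.inf'_univ_eq_ciInf]
  rw [this]
  exact Continuous.finset_inf'_apply _ fun i _ =>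
    ((continuous_id.sub continuous_const).norm.pow 2)

/-- strict Voronoi set -/
def strictCell (x : Fin K → EuclideanSpace ℝ (Fin d)) (i : Fin K) :
    Set (EuclideanSpace ℝ (Fin d)) :=
  {y | ∀ j, j ≠ i → ‖y - x i‖ < ‖y - x j‖}

lemma strict_open (x : Fin K → EuclideanSpace ℝ (Fin d)) (i : Fin K) :
    IsOpen (strictCell x i) := by
  have h : strictCell x i = ⋂ j, {y | j ≠ i → ‖y - x i‖ < ‖y - x j‖} := by
    ext y; simp [strictCell]
  rw [h]
  refine isOpen_iInter_of_finite fun j => ?_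
  by_cases hj : j = i
  · simp [hj]
  · have h2 : {y : EuclideanSpace ℝ (Fin d) | j ≠ i → ‖y - x i‖ < ‖y - x j‖}
        = {y | ‖y - x i‖ < ‖y - x j‖} := by ext y; simp [hj]
    rw [h2]
    exact isOpen_lt ((continuous_id.sub continuous_const).norm)
      ((continuous_id.sub continuous_const).norm)

lemma strict_subset (x : Fin K → EuclideanSpace ℝ (Fin d)) (i : Fin K) :
    strictCell x i ⊆ voronoiCell x i := by
  intro y hy
  refine (ciInf_eq_of_le (fun j => ‖y - x j‖) i fun j => ?_).symm
  rcases eq_or_ne j i with rfl | hj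
  · exact le_rfl
  · exact (hy j hj).le

lemma exists_mem_cell (x : Fin K → EuclideanSpace ℝ (Fin d))
    (y : EuclideanSpace ℝ (Fin d)) : ∃ i, y ∈ voronoiCell x i := by
  obtain ⟨i, hi, _⟩ := exists_ciInf_eq (fun j => ‖y - x j‖)
  exact ⟨i, hi.symm⟩

lemma mem_frontier_of_two (x : Fin K → EuclideanSpace ℝ (Fin d)) {i j : Fin K}
    (hij : x i ≠ x j) {y : EuclideanSpace ℝ (Fin d)}
    (hyi : y ∈ voronoiCell x i) (hyj : y ∈ voronoiCell x j) :
    y ∈ frontier (voronoiCell x i) := by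
  rw [frontier, Set.mem_diff]
  refine ⟨subset_closure hyi, fun hint => ?_⟩
  set v := x j - x i with hv
  have hvne : v ≠ 0 := sub_ne_zero.2 (Ne.symm hij)
  have key : ∀ t : ℝ, 0 < t → ‖(y + t • v) - x j‖ < ‖(y + t • v) - x i‖ := by
    intro t ht
    have he : ‖y - x i‖ = ‖y - x j‖ := by rw [hyi, hyj]
    have h1 : ‖(y + t • v) - x j‖ ^ 2 < ‖(y + t • v) - x i‖ ^ 2 := by
      have e1 : (y + t • v) - x i = (y - x i) + t • v := by abel
      have e2 : (y + t • v) - x j = (y - x j) + t • v := by abel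
      rw [e1, e2, norm_add_sq_real, norm_add_sq_real, he]
      have hin : ⟪y - x j, t • v⟫ < ⟪y - x i, t • v⟫ := by
        rw [real_inner_smul_right, real_inner_smul_right]
        have h3 : ⟪y - x j, v⟫ < ⟪y - x i, v⟫ := by
          have h4 : ⟪y - x i, v⟫ - ⟪y - x j, v⟫ = ‖v‖ ^ 2 := by
            rw [← inner_sub_left]
            have h5 : (y - x i) - (y - x j) = v := by rw [hv]; abel
            rw [h5, real_inner_self_eq_norm_sq]
          nlinarith [norm_pos_iff.2 hvne, norm_nonneg v]
        exact mul_lt_mul_of_pos_left h3 ht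
      linarith
    exact lt_of_pow_lt_pow_left₀ 2 (norm_nonneg _) h1
  have htend : Filter.Tendsto (fun t : ℝ => y + t • v) (nhdsWithin (0:ℝ) (Set.Ioi 0)) (nhds y) := by
    have hc : Continuous fun t : ℝ => y + t • v :=
      continuous_const.add (continuous_id.smul continuous_const)
    have h6 : Filter.Tendsto (fun t : ℝ => y + t • v) (nhds 0) (nhds y) := by
      have := hc.tendsto 0
      simpa using this
    exact h6.mono_left nhdsWithin_le_nhds
  have hev : ∀ᶠ t : ℝ in nhdsWithin (0:ℝ) (Set.Ioi 0), (y + t • v) ∈ interior (voronoiCell x i) := by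
    filter_upwards [htend.eventually (isOpen_interior.mem_nhds hint)] with t ht using ht
  have hev2 : ∀ᶠ t : ℝ in nhdsWithin (0:ℝ) (Set.Ioi 0), (0:ℝ) < t := eventually_mem_nhdsWithin
  obtain ⟨t, hti, ht⟩ := (hev.and hev2).exists
  have hmem : (y + t • v) ∈ voronoiCell x i := interior_subset hti
  have hle : ‖(y + t • v) - x i‖ ≤ ‖(y + t • v) - x j‖ := by
    rw [hmem]; exact ciInf_le (Finite.bddBelow_range _) j
  exact absurd hle (not_le.2 (key t ht))

section deriv
variable {d K : ℕ} [Nonempty (Fin K)]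
local notation "E" => EuclideanSpace ℝ (Fin d)
local notation "P" => (Fin K → EuclideanSpace ℝ (Fin d))

/-- The candidate partial derivative linear map. -/
noncomputable def Lmap (x : Fin K → E) (i : Fin K) (y : E) : P →L[ℝ] ℝ :=
  (2 : ℝ) • ((innerSL ℝ (x i - y)).comp (ContinuousLinearMap.proj i))

lemma Lmap_apply (x : Fin K → E) (i : Fin K) (y : E) (h : P) :
    Lmap x i y h = 2 * ⟪x i - y, h i⟫ := by
  simp only [Lmap, ContinuousLinearMap.smul_apply, ContinuousLinearMap.coe_comp',
    Function.comp_apply, ContinuousLinearMap.proj_apply, innerSL_apply_apply, smul_eq_mul]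

lemma hasFDeriv_sq (x : Fin K → E) (i : Fin K) (y : E) :
    HasFDerivAt (fun z : P => ‖y - z i‖ ^ 2) (Lmap x i y) x := by
  have hf : HasFDerivAt (fun z : P => y - z i)
      (-(ContinuousLinearMap.proj i : P →L[ℝ] E)) x := by
    exact ((ContinuousLinearMap.proj i : P →L[ℝ] E)).hasFDerivAt.const_sub y
  have h1 := hf.inner ℝ hf
  have h2 : (fun z : P => ⟪y - z i, y - z i⟫) = fun z : P => ‖y - z i‖ ^ 2 := by
    ext z; rw [real_inner_self_eq_norm_sq]
  rw [h2] at h1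
  have heq : (fderivInnerCLM ℝ (y - x i, y - x i)).comp
      ((-(ContinuousLinearMap.proj i : P →L[ℝ] E)).prod (-ContinuousLinearMap.proj i))
      = Lmap x i y := by
    ext h
    rw [Lmap_apply]
    simp only [ContinuousLinearMap.coe_comp', Function.comp_apply,
      ContinuousLinearMap.prod_apply, ContinuousLinearMap.neg_apply,
      ContinuousLinearMap.proj_apply, fderivInnerCLM_apply]
    rw [inner_neg_right, inner_neg_left, inner_sub_left, inner_sub_right]
    have c1 : ⟪h i, y⟫ = ⟪y, h i⟫ := real_inner_comm _ _
    have c2 : ⟪h i, x i⟫ = ⟪x i, h i⟫ := real_inner_comm _ _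
    rw [c1, c2, inner_sub_left]; ring
  exact heq ▸ h1

lemma hasFDeriv_inf (x : Fin K → E) (i : Fin K) (y : E) (hy : y ∈ strictCell x i) :
    HasFDerivAt (fun z : P => ⨅ j, ‖y - z j‖ ^ 2) (Lmap x i y) x := by
  refine (hasFDeriv_sq x i y).congr_of_eventuallyEq ?_
  have hU : IsOpen {z : P | ∀ j, j ≠ i → ‖y - z i‖ < ‖y - z j‖} := by
    have h : {z : P | ∀ j, j ≠ i → ‖y - z i‖ < ‖y - z j‖}
        = ⋂ j, {z : P | j ≠ i → ‖y - z i‖ < ‖y - z j‖} := by ext z; simp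
    rw [h]
    refine isOpen_iInter_of_finite fun j => ?_
    by_cases hj : j = i
    · simp [hj]
    · have h2 : {z : P | j ≠ i → ‖y - z i‖ < ‖y - z j‖}
          = {z : P | ‖y - z i‖ < ‖y - z j‖} := by ext z; simp [hj]
      rw [h2]
      exact isOpen_lt (Continuous.norm (by continuity)) (Continuous.norm (by continuity))
  have hxU : x ∈ {z : P | ∀ j, j ≠ i → ‖y - z i‖ < ‖y - z j‖} := by
    intro j hj
    exact hy j hj
  filter_upwards [hU.mem_nhds hxU] with z hz
  refine ciInf_eq_of_le (fun j => ‖y - z j‖ ^ 2) i fun j => ?_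
  rcases eq_or_ne j i with rfl | hj
  · exact le_rfl
  · exact pow_le_pow_left₀ (norm_nonneg _) (hz j hj).le 2

end deriv

section more
variable {d K : ℕ} [Nonempty (Fin K)]
local notation "E" => EuclideanSpace ℝ (Fin d)
local notation "P" => (Fin K → EuclideanSpace ℝ (Fin d))

lemma strict_disjoint (x : Fin K → E) {i j : Fin K} (hij : i ≠ j)
    {y : E} (hi : y ∈ strictCell x i) (hj : y ∈ strictCell x j) : False :=
  lt_irrefl _ ((hi j (Ne.symm hij)).trans (hj i hij))

lemma exists_strict_of_not_frontier (x : Fin K → E) (hx : Function.Injective x)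
    {y : E} (hy : y ∉ ⋃ i, frontier (voronoiCell x i)) : ∃ i, y ∈ strictCell x i := by
  obtain ⟨i, hi⟩ := exists_mem_cell x y
  refine ⟨i, fun j hj => ?_⟩
  have hle : ‖y - x i‖ ≤ ‖y - x j‖ := by
    rw [hi]; exact ciInf_le (Finite.bddBelow_range _) j
  rcases hle.lt_or_eq with h | h
  · exact h
  · exfalso
    have hyj : y ∈ voronoiCell x j := by rw [voronoiCell, Set.mem_setOf_eq, ← h, hi]
    have : y ∈ frontier (voronoiCell x i) :=
      mem_frontier_of_two x (fun he => hj ((hx he).symm)) hi hyj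
    exact hy (Set.mem_iUnion.2 ⟨i, this⟩)

lemma cell_diff_subset_frontier (x : Fin K → E) (hx : Function.Injective x) (i : Fin K) :
    voronoiCell x i \ strictCell x i ⊆ frontier (voronoiCell x i) := by
  rintro y ⟨hyi, hys⟩
  simp only [strictCell, Set.mem_setOf_eq, not_forall] at hys
  obtain ⟨j, hj, hle⟩ := hys
  push_neg at hle
  have h1 : ‖y - x i‖ ≤ ‖y - x j‖ := by
    rw [hyi]; exact ciInf_le (Finite.bddBelow_range _) j
  have heq : ‖y - x j‖ = ‖y - x i‖ := le_antisymm hle h1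
  have hyj : y ∈ voronoiCell x j := by rw [voronoiCell, Set.mem_setOf_eq, heq, hyi]
  exact mem_frontier_of_two x (fun he => hj (hx he).symm) hyi hyj

end more

set_option maxHeartbeats 1000000 in
theorem stmt8 (d K : ℕ) (hd : 1 ≤ d) (hK : 1 ≤ K)
    (μ : Measure (EuclideanSpace ℝ (Fin d))) [IsProbabilityMeasure μ]
    (hμ2 : Integrable (fun y => ‖y‖ ^ 2) μ)
    (x : Fin K → EuclideanSpace ℝ (Fin d)) (hx : Function.Injective x)
    (hbd : ∀ i, μ (frontier (voronoiCell x i)) = 0) :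
    ∃ D : (Fin K → EuclideanSpace ℝ (Fin d)) →L[ℝ] ℝ,
      HasFDerivAt (fun z : Fin K → EuclideanSpace ℝ (Fin d) => distortion μ K z) D x ∧
      ∀ h : Fin K → EuclideanSpace ℝ (Fin d),
        D h = ∑ i : Fin K, ⟪(2 : ℝ) • ∫ ξ in voronoiCell x i, (x i - ξ) ∂μ, h i⟫ := by
  haveI : Nonempty (Fin K) := ⟨⟨0, hK⟩⟩
  -- basic integrability facts
  have hnorm : Integrable (fun y : EuclideanSpace ℝ (Fin d) => ‖y‖) μ := by
    refine Integrable.mono' ((integrable_const (1:ℝ)).add hμ2)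
      continuous_norm.aestronglyMeasurable (Filter.Eventually.of_forall fun y => ?_)
    simp only [Pi.add_apply]
    rw [Real.norm_eq_abs, abs_norm]
    nlinarith [sq_nonneg (‖y‖ - 1)]
  have hid : Integrable (fun y : EuclideanSpace ℝ (Fin d) => y) μ :=
    (integrable_norm_iff aestronglyMeasurable_id).1 hnorm
  -- the pointwise derivative family
  set F' : EuclideanSpace ℝ (Fin d) → ((Fin K → EuclideanSpace ℝ (Fin d)) →L[ℝ] ℝ) :=
    fun y => ∑ i, Set.indicator (strictCell x i) (fun y => Lmap x i y) y with hF'def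
  have hLcont : ∀ i : Fin K, Continuous fun y => Lmap x i y := by
    intro i
    unfold Lmap
    refine Continuous.const_smul ?_ (2 : ℝ)
    refine Continuous.clm_comp ?_ continuous_const
    exact (innerSL ℝ).continuous.comp (continuous_const.sub continuous_id)
  have hF'meas : AEStronglyMeasurable F' μ := by
    refine (Finset.stronglyMeasurable_fun_sum Finset.univ fun i _ => ?_).aestronglyMeasurable
    exact StronglyMeasurable.indicator (hLcont i).stronglyMeasurable
      (strict_open x i).measurableSet
  -- Lipschitz bound
  set bound : EuclideanSpace ℝ (Fin d) → ℝ := fun y => 2 * ‖y‖ + (2 * ‖x‖ + 1) with hbdef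
  have hbound_int : Integrable bound μ := (hnorm.const_mul 2).add (integrable_const _)
  have hlip : ∀ᵐ y ∂μ, ∀ z ∈ Metric.ball x 1,
      ‖(⨅ i, ‖y - z i‖ ^ 2) - ⨅ i, ‖y - x i‖ ^ 2‖ ≤ bound y * ‖z - x‖ := by
    refine Filter.Eventually.of_forall fun y z hz => ?_
    rw [Real.norm_eq_abs]
    refine abs_ciInf_sub_ciInf_le _ _ _ fun i => ?_
    have h1 : ‖z i - x i‖ ≤ ‖z - x‖ := by
      have := norm_le_pi_norm (z - x) i
      simpa using this
    have hz1 : ‖z - x‖ < 1 := by rwa [Metric.ball, Set.mem_setOf_eq, dist_eq_norm] at hz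
    have h2 : |‖y - z i‖ - ‖y - x i‖| ≤ ‖z i - x i‖ := by
      have := abs_norm_sub_norm_le (y - z i) (y - x i)
      simpa [sub_sub_sub_cancel_left, norm_sub_rev] using this
    have h3 : ‖y - z i‖ ≤ ‖y‖ + ‖x‖ + 1 := by
      have h4 := norm_sub_norm_le (z i) (x i)
      have h6 := norm_le_pi_norm x i
      have h7 := norm_sub_le y (z i)
      linarith [h1, hz1.le]
    have h5 : ‖y - x i‖ ≤ ‖y‖ + ‖x‖ := by
      calc ‖y - x i‖ ≤ ‖y‖ + ‖x i‖ := norm_sub_le _ _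
        _ ≤ ‖y‖ + ‖x‖ := by linarith [norm_le_pi_norm x i]
    have key : |‖y - z i‖ ^ 2 - ‖y - x i‖ ^ 2|
        = |‖y - z i‖ - ‖y - x i‖| * (‖y - z i‖ + ‖y - x i‖) := by
      rw [← abs_of_nonneg (by positivity : (0:ℝ) ≤ ‖y - z i‖ + ‖y - x i‖), ← abs_mul]
      ring_nf
    rw [key, hbdef]
    have hnn : (0:ℝ) ≤ ‖y - z i‖ + ‖y - x i‖ := by positivity
    calc |‖y - z i‖ - ‖y - x i‖| * (‖y - z i‖ + ‖y - x i‖)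
        ≤ ‖z - x‖ * (2 * ‖y‖ + (2 * ‖x‖ + 1)) := by
          apply mul_le_mul (h2.trans h1) (by linarith) hnn (norm_nonneg _)
      _ = (2 * ‖y‖ + (2 * ‖x‖ + 1)) * ‖z - x‖ := by ring
  -- integrability of F x
  have hFmeas : ∀ z ∈ Metric.ball x 1, AEStronglyMeasurable
      (fun y : EuclideanSpace ℝ (Fin d) => ⨅ i, ‖y - z i‖ ^ 2) μ :=
    fun z _ => (contInf z).aestronglyMeasurable
  have hFint : Integrable (fun y : EuclideanSpace ℝ (Fin d) => ⨅ i, ‖y - x i‖ ^ 2) μ := by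
    set i0 : Fin K := Classical.arbitrary _
    refine Integrable.mono' ((hμ2.const_mul 2).add (integrable_const (2 * ‖x i0‖ ^ 2)))
      (contInf x).aestronglyMeasurable (Filter.Eventually.of_forall fun y => ?_)
    have hnn : (0:ℝ) ≤ ⨅ i, ‖y - x i‖ ^ 2 := le_ciInf fun i => by positivity
    simp only [Pi.add_apply]
    rw [Real.norm_eq_abs, abs_of_nonneg hnn]
    have hle : (⨅ i, ‖y - x i‖ ^ 2) ≤ ‖y - x i0‖ ^ 2 := ciInf_le (Finite.bddBelow_range _) i0
    have : ‖y - x i0‖ ^ 2 ≤ 2 * ‖y‖ ^ 2 + 2 * ‖x i0‖ ^ 2 := by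
      have h8 := norm_sub_le y (x i0)
      nlinarith [norm_nonneg y, norm_nonneg (x i0), sq_nonneg (‖y‖ - ‖x i0‖),
        norm_nonneg (y - x i0)]
    linarith
  -- a.e. differentiability
  have hdiff : ∀ᵐ y ∂μ, HasFDerivAt
      (fun z : Fin K → EuclideanSpace ℝ (Fin d) => ⨅ i, ‖y - z i‖ ^ 2) (F' y) x := by
    have hnull : μ (⋃ i, frontier (voronoiCell x i)) = 0 :=
      measure_iUnion_null fun i => hbd i
    filter_upwards [measure_eq_zero_iff_ae_notMem.1 hnull] with y hy
    obtain ⟨i, hi⟩ := exists_strict_of_not_frontier x hx hy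
    have hF'y : F' y = Lmap x i y := by
      have hrfl : F' y = ∑ j, Set.indicator (strictCell x j) (fun y => Lmap x j y) y := rfl
      rw [hrfl, Finset.sum_eq_single i]
      · rw [Set.indicator_of_mem hi]
      · intro j _ hj
        rw [Set.indicator_of_notMem (fun hmem => strict_disjoint x hj hmem hi)]
      · intro hni; exact absurd (Finset.mem_univ i) hni
    rw [hF'y]
    exact hasFDeriv_inf x i y hi
  -- differentiate under the integral
  obtain ⟨hF'int, hder⟩ := hasFDerivAt_integral_of_dominated_loc_of_lip'
    (𝕜 := ℝ) (H := Fin K → EuclideanSpace ℝ (Fin d)) (E := ℝ)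
    (α := EuclideanSpace ℝ (Fin d)) (μ := μ) (x₀ := x) (s := Metric.ball x 1)
    (F := fun z (y : EuclideanSpace ℝ (Fin d)) => ⨅ i, ‖y - z i‖ ^ 2) (F' := F') (bound := bound)
    (Metric.ball_mem_nhds x zero_lt_one) hFmeas hFint hF'meas hlip hbound_int hdiff
  refine ⟨∫ y, F' y ∂μ, hder, fun h => ?_⟩
  -- compute the derivative applied to h
  rw [ContinuousLinearMap.integral_apply hF'int]
  have hswap : ∀ y, F' y h = ∑ i, Set.indicator (strictCell x i)
      (fun y => Lmap x i y h) y := by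
    intro y
    rw [hF'def, ContinuousLinearMap.sum_apply]
    refine Finset.sum_congr rfl fun i _ => ?_
    by_cases hy : y ∈ strictCell x i
    · rw [Set.indicator_of_mem hy, Set.indicator_of_mem hy]
    · rw [Set.indicator_of_notMem hy, Set.indicator_of_notMem hy]
      rfl
  have hint_i : ∀ i : Fin K, Integrable
      (fun y : EuclideanSpace ℝ (Fin d) => Lmap x i y h) μ := by
    intro i
    have : (fun y : EuclideanSpace ℝ (Fin d) => Lmap x i y h)
        = fun y => 2 * ((innerSL ℝ (h i)) (x i - y)) := by
      ext y; rw [Lmap_apply, real_inner_comm]; simp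
    rw [this]
    exact (((innerSL ℝ (h i)).integrable_comp ((integrable_const (x i)).sub hid)).const_mul 2)
  calc (∫ y, F' y h ∂μ)
      = ∫ y, ∑ i, Set.indicator (strictCell x i) (fun y => Lmap x i y h) y ∂μ := by
        congr 1; ext y; exact hswap y
    _ = ∑ i, ∫ y, Set.indicator (strictCell x i) (fun y => Lmap x i y h) y ∂μ := by
        refine integral_finset_sum _ fun i _ => ?_
        exact (hint_i i).indicator (strict_open x i).measurableSet
    _ = ∑ i : Fin K, ⟪(2 : ℝ) • ∫ ξ in voronoiCell x i, (x i - ξ) ∂μ, h i⟫ := by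
        refine Finset.sum_congr rfl fun i _ => ?_
        rw [integral_indicator (strict_open x i).measurableSet]
        have haeeq : strictCell x i =ᵐ[μ] voronoiCell x i := by
          rw [ae_eq_set]
          constructor
          · rw [Set.diff_eq_empty.2 (strict_subset x i)]; exact measure_empty
          · exact measure_mono_null (cell_diff_subset_frontier x hx i) (hbd i)
        rw [setIntegral_congr_set haeeq]
        have hLrw : (fun y => Lmap x i y h)
            = fun y => 2 * ((innerSL ℝ (h i)) (x i - y)) := by
          ext y; rw [Lmap_apply, real_inner_comm]; simp
        rw [hLrw, integral_const_mul]
        have hsub : Integrable (fun ξ : EuclideanSpace ℝ (Fin d) => x i - ξ)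
            (μ.restrict (voronoiCell x i)) :=
          ((integrable_const (x i)).sub hid).restrict
        rw [ContinuousLinearMap.integral_comp_comm _ hsub]
        rw [real_inner_smul_left, innerSL_apply_apply, real_inner_comm]
end

section
/- Let d ≥ 1, R > 0, t > 0, and let μ be a probability measure on ℝ^d whose support is contained in the closed ball of radius R centered at the origin. Define p_t(x) = ∫_{ℝ^d} (2πt)^{−d/2} exp(−‖x−z‖²/(2t)) dμ(z), the density of the convolution μ * N(0, t·I_d). Then p_t is everywhere strictly positive, log p_t is differentiable, and for all x, y ∈ ℝ^d, ⟨ x − y, ∇ log p_t(x) − ∇ log p_t(y) ⟩ ≤ (R²/t² − 1/t) ‖x − y‖². -/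
open MeasureTheory Real RealInnerProductSpace

open InnerProductSpace

variable {d : ℕ}
local notation "E" => EuclideanSpace ℝ (Fin d)

lemma kernel_hasFDeriv (t : ℝ) (z x : EuclideanSpace ℝ (Fin d)) :
    HasFDerivAt (fun x : E => Real.exp (-‖x - z‖ ^ 2 / (2 * t)))
      ((toDual ℝ E) ((Real.exp (-‖x - z‖ ^ 2 / (2 * t)) / t) • (z - x))) x := by
  have h0 : HasFDerivAt (fun x : E => x - z) (ContinuousLinearMap.id ℝ E) x := by
    simpa using (hasFDerivAt_id x).sub_const z
  have h1 := (h0.inner ℝ h0).mul_const (-(2*t)⁻¹)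
  have h2 := h1.exp
  have hfun : (fun x : E => Real.exp (-‖x - z‖ ^ 2 / (2 * t)))
      = fun x : E => Real.exp (⟪x - z, x - z⟫ * (-(2*t)⁻¹)) := by
    funext x
    rw [real_inner_self_eq_norm_sq]
    ring_nf
  rw [hfun]
  refine h2.congr_fderiv ?_
  have hv : ⟪x - z, x - z⟫ * (-(2*t)⁻¹) = -‖x - z‖ ^ 2 / (2 * t) := by
    rw [real_inner_self_eq_norm_sq]; ring
  ext w
  rw [ContinuousLinearMap.smul_apply, ContinuousLinearMap.smul_apply,
    ContinuousLinearMap.comp_apply, ContinuousLinearMap.prod_apply,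
    ContinuousLinearMap.id_apply, fderivInnerCLM_apply, toDual_apply_apply,
    real_inner_smul_left, hv, show z - x = -(x - z) by abel, inner_neg_left,
    real_inner_comm w (x - z)]
  simp only [smul_eq_mul]
  ring

lemma ae_norm_le (R : ℝ) (μ : Measure (EuclideanSpace ℝ (Fin d)))
    (hμsupp : msupport μ ⊆ Metric.closedBall 0 R) : ∀ᵐ z ∂μ, ‖z‖ ≤ R := by
  rw [ae_iff]
  apply measure_null_of_locally_null
  intro x hx
  have hx' : x ∉ msupport μ := by
    intro h
    have := hμsupp h
    rw [Metric.mem_closedBall, dist_zero_right] at this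
    exact hx this
  simp only [msupport, Set.mem_setOf_eq, not_forall] at hx'
  obtain ⟨ε, hε, h0⟩ := hx'
  refine ⟨Metric.ball x ε, mem_nhdsWithin_of_mem_nhds (Metric.ball_mem_nhds x hε), ?_⟩
  simpa using h0

lemma integrable_of_bd {G : Type*} [NormedAddCommGroup G] {μ : Measure (EuclideanSpace ℝ (Fin d))}
    [IsFiniteMeasure μ] {g : EuclideanSpace ℝ (Fin d) → G} (hm : AEStronglyMeasurable g μ)
    (C : ℝ) (h : ∀ᵐ z ∂μ, ‖g z‖ ≤ C) : Integrable g μ :=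
  (integrable_const C).mono' hm h

set_option maxHeartbeats 2000000 in
theorem stmt9 (d : ℕ) (hd : 1 ≤ d) (R t : ℝ) (hR : 0 < R) (ht : 0 < t)
    (μ : Measure (EuclideanSpace ℝ (Fin d))) [IsProbabilityMeasure μ]
    (hμsupp : msupport μ ⊆ Metric.closedBall 0 R)
    (p : EuclideanSpace ℝ (Fin d) → ℝ)
    (hp : ∀ x, p x = ∫ z, (2 * π * t) ^ (-(d : ℝ) / 2) *
      Real.exp (-‖x - z‖ ^ 2 / (2 * t)) ∂μ) :
    (∀ x, 0 < p x) ∧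
    (Differentiable ℝ fun x => Real.log (p x)) ∧
    ∀ x y : EuclideanSpace ℝ (Fin d),
      ⟪x - y, gradient (fun z => Real.log (p z)) x - gradient (fun z => Real.log (p z)) y⟫ ≤
        (R ^ 2 / t ^ 2 - 1 / t) * ‖x - y‖ ^ 2 := by
  set c : ℝ := (2 * π * t) ^ (-(d : ℝ) / 2) with hc
  have hcpos : 0 < c := rpow_pos_of_pos (by positivity) _
  set K : (EuclideanSpace ℝ (Fin d)) → (EuclideanSpace ℝ (Fin d)) → ℝ := fun x z => Real.exp (-‖x - z‖ ^ 2 / (2 * t)) with hK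
  have hKpos : ∀ x z, 0 < K x z := fun x z => exp_pos _
  have hKle : ∀ x z, K x z ≤ 1 := by
    intro x z
    apply Real.exp_le_one_iff.2
    have h1 : (0:ℝ) ≤ ‖x - z‖ ^ 2 := sq_nonneg _
    have h2t : (0:ℝ) < 2 * t := by linarith
    rw [div_nonpos_iff]
    right
    constructor <;> linarith
  have hKcont : ∀ x, Continuous (fun z : (EuclideanSpace ℝ (Fin d)) => K x z) := by
    intro x
    exact Real.continuous_exp.comp
      (((continuous_const.sub continuous_id).norm.pow 2).neg.div_const _)
  have haeR : ∀ᵐ z ∂μ, ‖z‖ ≤ R := ae_norm_le R μ hμsupp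
  have hKint : ∀ x, Integrable (fun z => K x z) μ := by
    intro x
    refine integrable_of_bd (hKcont x).aestronglyMeasurable 1 ?_
    filter_upwards with z
    rw [Real.norm_eq_abs, abs_of_pos (hKpos x z)]
    exact hKle x z
  set f : (EuclideanSpace ℝ (Fin d)) → ℝ := fun x => ∫ z, K x z ∂μ with hf
  have hppf : ∀ x, p x = c * f x := by
    intro x
    rw [hp x, hf]
    exact integral_const_mul c _
  have hfpos : ∀ x, 0 < f x := by
    intro x
    have hlb : ∀ᵐ z ∂μ, Real.exp (-(‖x‖ + R) ^ 2 / (2 * t)) ≤ K x z := by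
      filter_upwards [haeR] with z hz
      apply exp_le_exp.2
      have h1 : ‖x - z‖ ≤ ‖x‖ + R := le_trans (norm_sub_le x z) (by linarith)
      have h2 : ‖x - z‖ ^ 2 ≤ (‖x‖ + R) ^ 2 := by
        apply sq_le_sq' _ h1
        have := norm_nonneg (x - z)
        linarith
      have h2t : (0:ℝ) < 2 * t := by linarith
      exact (div_le_div_iff_of_pos_right h2t).2 (by linarith)
    have hc2 : Integrable (fun _ : (EuclideanSpace ℝ (Fin d)) => Real.exp (-(‖x‖ + R) ^ 2 / (2 * t))) μ :=
      integrable_const _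
    have := integral_mono_ae hc2 (hKint x) hlb
    rw [integral_const] at this
    simp only [probReal_univ, one_smul] at this
    exact lt_of_lt_of_le (exp_pos _) this
  have hppos : ∀ x, 0 < p x := fun x => by rw [hppf x]; exact mul_pos hcpos (hfpos x)
  -- vector integrand and its integral W
  have hveccont : ∀ x : (EuclideanSpace ℝ (Fin d)), Continuous (fun z : (EuclideanSpace ℝ (Fin d)) => (c * K x z / t) • (z - x)) :=
    fun x => ((continuous_const.mul (hKcont x)).div_const t).smul (continuous_id.sub continuous_const)
  have hvecnorm : ∀ x : (EuclideanSpace ℝ (Fin d)), ∀ᵐ z ∂μ, ‖(c * K x z / t) • (z - x)‖ ≤ c / t * (R + ‖x‖) := by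
    intro x
    filter_upwards [haeR] with z hz
    rw [norm_smul]
    have h1 : ‖z - x‖ ≤ R + ‖x‖ := (norm_sub_le z x).trans (by linarith)
    have h2 : ‖c * K x z / t‖ ≤ c / t := by
      rw [Real.norm_eq_abs, abs_of_pos (by positivity)]
      apply (div_le_div_iff_of_pos_right ht).2
      nlinarith [hKle x z, hKpos x z]
    exact mul_le_mul h2 h1 (norm_nonneg _) (by positivity)
  have hvecint : ∀ x : (EuclideanSpace ℝ (Fin d)), Integrable (fun z : (EuclideanSpace ℝ (Fin d)) => (c * K x z / t) • (z - x)) μ := fun x =>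
    integrable_of_bd (hveccont x).aestronglyMeasurable _ (hvecnorm x)
  set W : (EuclideanSpace ℝ (Fin d)) → (EuclideanSpace ℝ (Fin d)) := fun x => ∫ z, (c * K x z / t) • (z - x) ∂μ with hWdef
  have hF'int : ∀ x : (EuclideanSpace ℝ (Fin d)), Integrable (fun z : (EuclideanSpace ℝ (Fin d)) =>
      (toDual ℝ (EuclideanSpace ℝ (Fin d))) ((c * K x z / t) • (z - x))) μ := by
    intro x
    refine integrable_of_bd ((toDual ℝ (EuclideanSpace ℝ (Fin d))).continuous.comp (hveccont x)).aestronglyMeasurable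
      (c / t * (R + ‖x‖)) ?_
    filter_upwards [hvecnorm x] with z hz
    rw [LinearIsometryEquiv.norm_map]
    exact hz
  have hgradp : ∀ x : (EuclideanSpace ℝ (Fin d)), HasFDerivAt p (toDual ℝ (EuclideanSpace ℝ (Fin d)) (W x)) x := by
    intro x
    have hpfun : p = fun x : (EuclideanSpace ℝ (Fin d)) => ∫ z, c * K x z ∂μ := funext hp
    have hFint : Integrable (fun z => c * K x z) μ := (hKint x).const_mul c
    have key := hasFDerivAt_integral_of_dominated_of_fderiv_le (𝕜 := ℝ) (μ := μ)
      (F := fun (x' : (EuclideanSpace ℝ (Fin d))) (z : (EuclideanSpace ℝ (Fin d))) => c * K x' z)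
      (F' := fun (x' : (EuclideanSpace ℝ (Fin d))) (z : (EuclideanSpace ℝ (Fin d))) => toDual ℝ (EuclideanSpace ℝ (Fin d)) ((c * K x' z / t) • (z - x')))
      (x₀ := x) (bound := fun _ => c / t * (R + ‖x‖ + 1)) (Metric.ball_mem_nhds x one_pos)
      (Filter.Eventually.of_forall fun x' =>
        (continuous_const.mul (hKcont x')).aestronglyMeasurable)
      hFint ((hF'int x).aestronglyMeasurable) ?hbound (integrable_const _) ?hdiff
    case hbound =>
      filter_upwards [haeR] with z hz
      intro x' hx'
      rw [LinearIsometryEquiv.norm_map, norm_smul]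
      have hx'n : ‖x'‖ ≤ ‖x‖ + 1 := by
        have h1 := Metric.mem_ball.1 hx'
        rw [dist_eq_norm] at h1
        have := norm_sub_norm_le x' x
        linarith
      have h1 : ‖z - x'‖ ≤ R + ‖x‖ + 1 := (norm_sub_le z x').trans (by linarith)
      have h2 : ‖c * K x' z / t‖ ≤ c / t := by
        rw [Real.norm_eq_abs, abs_of_pos (by positivity)]
        apply (div_le_div_iff_of_pos_right ht).2
        nlinarith [hKle x' z, hKpos x' z]
      exact mul_le_mul h2 h1 (norm_nonneg _) (by positivity)
    case hdiff =>
      refine Filter.Eventually.of_forall fun z => fun x' _ => ?_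
      refine ((kernel_hasFDeriv t z x').const_mul c).congr_fderiv ?_
      rw [← _root_.map_smul, smul_smul]
      simp only [← mul_div_assoc]
      rfl
    rw [hpfun]
    refine key.congr_fderiv ?_
    refine ContinuousLinearMap.ext fun w => ?_
    rw [ContinuousLinearMap.integral_apply (hF'int x), toDual_apply_apply,
      real_inner_comm]
    simp only [hWdef]
    rw [← integral_inner (𝕜 := ℝ) (hvecint x) w]
    congr 1
    funext z
    rw [toDual_apply_apply, real_inner_comm]
  -- gradient of log p
  have hlog : ∀ x : (EuclideanSpace ℝ (Fin d)), HasGradientAt (fun y => Real.log (p y)) ((p x)⁻¹ • W x) x := by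
    intro x
    rw [hasGradientAt_iff_hasFDerivAt]
    refine ((hgradp x).log (ne_of_gt (hppos x))).congr_fderiv ?_
    rw [← _root_.map_smul]
  have hdiffable : Differentiable ℝ fun x => Real.log (p x) := fun x =>
    (hlog x).differentiableAt
  -- integrability of scalar integrands
  have hsint : ∀ (u : (EuclideanSpace ℝ (Fin d))) (x : (EuclideanSpace ℝ (Fin d))), Integrable (fun z => ⟪u, z⟫ * K x z) μ := by
    intro u x
    refine integrable_of_bd (((innerSL ℝ u).continuous.mul (hKcont x)).aestronglyMeasurable)
      (‖u‖ * R) ?_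
    filter_upwards [haeR] with z hz
    rw [Real.norm_eq_abs, abs_mul, abs_of_pos (hKpos x z)]
    calc |⟪u, z⟫| * K x z ≤ (‖u‖ * R) * 1 := by
          apply mul_le_mul _ (hKle x z) (hKpos x z).le (by positivity)
          exact (abs_real_inner_le_norm u z).trans
            (mul_le_mul_of_nonneg_left hz (norm_nonneg u))
      _ = ‖u‖ * R := mul_one _
  have hinner : ∀ (x : (EuclideanSpace ℝ (Fin d))) (u : (EuclideanSpace ℝ (Fin d))), ⟪u, gradient (fun y => Real.log (p y)) x⟫ =
      (1/t) * ((∫ z, ⟪u, z⟫ * K x z ∂μ) / f x - ⟪u, x⟫) := by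
    intro x u
    rw [(hlog x).gradient, real_inner_smul_right]
    have h1 : ⟪u, W x⟫ = ∫ z, ⟪u, (c * K x z / t) • (z - x)⟫ ∂μ := by
      simp only [hWdef]
      rw [← integral_inner (𝕜 := ℝ) (hvecint x) u]
    have h2 : (fun z : (EuclideanSpace ℝ (Fin d)) => ⟪u, (c * K x z / t) • (z - x)⟫)
        = fun z : (EuclideanSpace ℝ (Fin d)) => (c/t) * (⟪u, z⟫ * K x z) - (c/t*⟪u,x⟫) * K x z := by
      funext z
      rw [real_inner_smul_right, inner_sub_right]
      ring
    rw [h1, h2, integral_sub (((hsint u x).const_mul (c/t)))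
      ((hKint x).const_mul (c/t*⟪u,x⟫)), integral_const_mul, integral_const_mul]
    rw [hppf x]
    have hfx := hfpos x
    have hc0 : c ≠ 0 := ne_of_gt hcpos
    have ht0 : t ≠ 0 := ne_of_gt ht
    field_simp
    ring
  -- main inequality
  have hmain : ∀ x y : (EuclideanSpace ℝ (Fin d)),
      ⟪x - y, gradient (fun z => Real.log (p z)) x - gradient (fun z => Real.log (p z)) y⟫ ≤
        (R ^ 2 / t ^ 2 - 1 / t) * ‖x - y‖ ^ 2 := by
    intro x y
    set u : (EuclideanSpace ℝ (Fin d)) := x - y with hu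
    set xl : ℝ → (EuclideanSpace ℝ (Fin d)) := fun l => y + l • u with hxl
    have hxl1 : xl 1 = x := by simp [hxl, hu]
    have hxl0 : xl 0 = y := by simp [hxl]
    have hxlnorm : ∀ l : ℝ, ‖xl l‖ ≤ ‖y‖ + |l| * ‖u‖ := by
      intro l
      calc ‖xl l‖ ≤ ‖y‖ + ‖l • u‖ := norm_add_le _ _
        _ = ‖y‖ + |l| * ‖u‖ := by rw [norm_smul, Real.norm_eq_abs]
    have hline : ∀ l : ℝ, HasDerivAt xl u l := by
      intro l
      rw [hxl]
      simpa using ((hasDerivAt_id l).smul_const u).const_add y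
    have hker1 : ∀ (l : ℝ) (z : (EuclideanSpace ℝ (Fin d))), HasDerivAt (fun l => K (xl l) z)
        ((K (xl l) z / t) * ⟪z - xl l, u⟫) l := by
      intro l z
      have h := (kernel_hasFDeriv t z (xl l)).comp_hasDerivAt l (hline l)
      rw [toDual_apply_apply, real_inner_smul_left] at h
      exact h
    set D : ℝ → ℝ := fun l => ∫ z, K (xl l) z ∂μ with hD
    set N : ℝ → ℝ := fun l => ∫ z, ⟪u, z⟫ * K (xl l) z ∂μ with hN
    set Q : ℝ → ℝ := fun l => ∫ z, ⟪u, z⟫^2 * K (xl l) z ∂μ with hQ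
    set D' : ℝ → ℝ := fun l => ∫ z, (K (xl l) z / t) * ⟪z - xl l, u⟫ ∂μ with hD'
    set N' : ℝ → ℝ := fun l => ∫ z, ⟪u, z⟫ * ((K (xl l) z / t) * ⟪z - xl l, u⟫) ∂μ with hN'
    have hDpos : ∀ l, 0 < D l := fun l => hfpos (xl l)
    -- bound for the derivative integrands near l₀
    have hkerbd : ∀ (l₀ : ℝ), ∀ᵐ z ∂μ, ∀ l ∈ Metric.ball l₀ 1,
        |(K (xl l) z / t) * ⟪z - xl l, u⟫| ≤
          (1/t) * ((R + (‖y‖ + (|l₀|+1) * ‖u‖)) * ‖u‖) := by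
      intro l₀
      filter_upwards [haeR] with z hz
      intro l hl
      have hll : |l| ≤ |l₀| + 1 := by
        have h1 := Metric.mem_ball.1 hl
        rw [Real.dist_eq] at h1
        have := abs_sub_abs_le_abs_sub l l₀
        linarith
      have h2 : ‖z - xl l‖ ≤ R + (‖y‖ + (|l₀|+1) * ‖u‖) := by
        refine (norm_sub_le z (xl l)).trans ?_
        have h3 := hxlnorm l
        have h4 : |l| * ‖u‖ ≤ (|l₀|+1) * ‖u‖ :=
          mul_le_mul_of_nonneg_right hll (norm_nonneg u)
        linarith
      rw [abs_mul]
      have h5 : |K (xl l) z / t| ≤ 1/t := by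
        rw [abs_of_pos (by positivity)]
        exact (div_le_div_iff_of_pos_right ht).2 (hKle _ z)
      have h6 : |⟪z - xl l, u⟫| ≤ (R + (‖y‖ + (|l₀|+1) * ‖u‖)) * ‖u‖ :=
        (abs_real_inner_le_norm _ u).trans (mul_le_mul_of_nonneg_right h2 (norm_nonneg u))
      exact mul_le_mul h5 h6 (abs_nonneg _) (by positivity)
    have hDderiv : ∀ l₀ : ℝ, HasDerivAt D (D' l₀) l₀ := by
      intro l₀
      have key := hasDerivAt_integral_of_dominated_loc_of_deriv_le (μ := μ) (x₀ := l₀)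
        (F := fun l z => K (xl l) z)
        (F' := fun l z => (K (xl l) z / t) * ⟪z - xl l, u⟫)
        (bound := fun _ => (1/t) * ((R + (‖y‖ + (|l₀|+1) * ‖u‖)) * ‖u‖)) (Metric.ball_mem_nhds l₀ one_pos)
        (Filter.Eventually.of_forall fun l => (hKcont (xl l)).aestronglyMeasurable)
        (hKint (xl l₀))
        ((((hKcont (xl l₀)).div_const t).mul
          ((continuous_id.sub continuous_const).inner continuous_const)).aestronglyMeasurable)
        (hkerbd l₀) (integrable_const _)
        (Filter.Eventually.of_forall fun z l _ => hker1 l z)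
      exact key.2
    have hNderiv : ∀ l₀ : ℝ, HasDerivAt N (N' l₀) l₀ := by
      intro l₀
      have key := hasDerivAt_integral_of_dominated_loc_of_deriv_le (μ := μ) (x₀ := l₀)
        (F := fun l z => ⟪u, z⟫ * K (xl l) z)
        (F' := fun l z => ⟪u, z⟫ * ((K (xl l) z / t) * ⟪z - xl l, u⟫))
        (bound := fun _ => (‖u‖ * R) * ((1/t) * ((R + (‖y‖ + (|l₀|+1) * ‖u‖)) * ‖u‖))) (Metric.ball_mem_nhds l₀ one_pos)
        (Filter.Eventually.of_forall fun l =>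
          (((innerSL ℝ u).continuous.mul (hKcont (xl l))).aestronglyMeasurable))
        (hsint u (xl l₀))
        (((innerSL ℝ u).continuous.mul (((hKcont (xl l₀)).div_const t).mul
          ((continuous_id.sub continuous_const).inner continuous_const))).aestronglyMeasurable)
        ?_ (integrable_const _)
        (Filter.Eventually.of_forall fun z l _ => (hker1 l z).const_mul ⟪u, z⟫)
      · exact key.2
      · filter_upwards [hkerbd l₀, haeR] with z hz1 hz2
        intro l hl
        rw [Real.norm_eq_abs, abs_mul]
        refine mul_le_mul ?_ (hz1 l hl) (abs_nonneg _) (by positivity)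
        exact (abs_real_inner_le_norm u z).trans
          (mul_le_mul_of_nonneg_left hz2 (norm_nonneg u))
    have hQint : ∀ l : ℝ, Integrable (fun z => ⟪u, z⟫^2 * K (xl l) z) μ := by
      intro l
      refine integrable_of_bd ((((innerSL ℝ u).continuous.pow 2).mul
        (hKcont (xl l))).aestronglyMeasurable) ((‖u‖ * R)^2) ?_
      filter_upwards [haeR] with z hz
      rw [Real.norm_eq_abs, abs_mul, abs_of_pos (hKpos _ z)]
      have h7 : |⟪u, z⟫| ≤ ‖u‖ * R := (abs_real_inner_le_norm u z).trans
        (mul_le_mul_of_nonneg_left hz (norm_nonneg u))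
      calc |⟪u, z⟫^2| * K (xl l) z ≤ (‖u‖ * R)^2 * 1 := by
            refine mul_le_mul ?_ (hKle _ z) (hKpos _ z).le (by positivity)
            rw [abs_pow]
            exact pow_le_pow_left₀ (abs_nonneg _) h7 2
        _ = (‖u‖ * R)^2 := mul_one _
    have hinnerexp : ∀ (l : ℝ) (z : (EuclideanSpace ℝ (Fin d))), ⟪z - xl l, u⟫ = ⟪u, z⟫ - ⟪u, xl l⟫ := by
      intro l z
      rw [real_inner_comm, inner_sub_right]
    have hD'eq : ∀ l, D' l = (1/t) * (N l - ⟪u, xl l⟫ * D l) := by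
      intro l
      have h8 : (fun z : (EuclideanSpace ℝ (Fin d)) => (K (xl l) z / t) * ⟪z - xl l, u⟫)
          = fun z : (EuclideanSpace ℝ (Fin d)) => (1/t) * (⟪u, z⟫ * K (xl l) z) - (⟪u, xl l⟫/t) * K (xl l) z := by
        funext z
        rw [hinnerexp l z]
        ring
      simp only [hD', hN, hD, h8]
      rw [integral_sub ((hsint u (xl l)).const_mul _) ((hKint (xl l)).const_mul _),
        integral_const_mul, integral_const_mul]
      ring
    have hN'eq : ∀ l, N' l = (1/t) * (Q l - ⟪u, xl l⟫ * N l) := by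
      intro l
      have h8 : (fun z : (EuclideanSpace ℝ (Fin d)) => ⟪u, z⟫ * ((K (xl l) z / t) * ⟪z - xl l, u⟫))
          = fun z : (EuclideanSpace ℝ (Fin d)) => (1/t) * (⟪u, z⟫^2 * K (xl l) z)
              - (⟪u, xl l⟫/t) * (⟪u, z⟫ * K (xl l) z) := by
        funext z
        rw [hinnerexp l z]
        ring
      simp only [hN', hQ, hN, h8]
      rw [integral_sub ((hQint l).const_mul _) ((hsint u (xl l)).const_mul _),
        integral_const_mul, integral_const_mul]
      ring
    have hQle : ∀ l, Q l ≤ R^2 * ‖u‖^2 * D l := by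
      intro l
      have hae : ∀ᵐ z ∂μ, ⟪u, z⟫^2 * K (xl l) z ≤ (R^2 * ‖u‖^2) * K (xl l) z := by
        filter_upwards [haeR] with z hz
        refine mul_le_mul_of_nonneg_right ?_ (hKpos _ z).le
        have h7 : |⟪u, z⟫| ≤ ‖u‖ * R := (abs_real_inner_le_norm u z).trans
          (mul_le_mul_of_nonneg_left hz (norm_nonneg u))
        calc ⟪u, z⟫^2 = |⟪u, z⟫|^2 := (sq_abs _).symm
          _ ≤ (‖u‖ * R)^2 := pow_le_pow_left₀ (abs_nonneg _) h7 2
          _ = R^2 * ‖u‖^2 := by ring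
      simp only [hQ, hD]
      calc (∫ z, ⟪u, z⟫^2 * K (xl l) z ∂μ)
          ≤ ∫ z, (R^2 * ‖u‖^2) * K (xl l) z ∂μ :=
            integral_mono_ae (hQint l) ((hKint (xl l)).const_mul _) hae
        _ = R^2 * ‖u‖^2 * ∫ z, K (xl l) z ∂μ := integral_const_mul _ _
    have hφ'le : ∀ l, (N' l * D l - N l * D' l) / (D l)^2 ≤ R^2 * ‖u‖^2 / t := by
      intro l
      have h9 : N' l * D l - N l * D' l = (Q l * D l - (N l)^2) / t := by
        rw [hN'eq l, hD'eq l]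
        ring
      have h10 : Q l * D l - (N l)^2 ≤ R^2 * ‖u‖^2 * (D l)^2 := by
        have h11 : Q l * D l ≤ (R^2 * ‖u‖^2 * D l) * D l :=
          mul_le_mul_of_nonneg_right (hQle l) (hDpos l).le
        nlinarith [sq_nonneg (N l)]
      rw [h9, div_div, mul_comm t ((D l)^2), ← div_div]
      apply (div_le_div_iff_of_pos_right ht).2
      rw [div_le_iff₀ (pow_pos (hDpos l) 2)]
      nlinarith [h10]
    have hφd : ∀ l, HasDerivAt (fun l => N l / D l)
        ((N' l * D l - N l * D' l) / (D l)^2) l :=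
      fun l => (hNderiv l).div (hDderiv l) (ne_of_gt (hDpos l))
    set K0 : ℝ := R^2 * ‖u‖^2 / t with hK0
    have hψd : ∀ l : ℝ, HasDerivAt (fun l => K0 * l - N l / D l)
        (K0 - (N' l * D l - N l * D' l) / (D l)^2) l := by
      intro l
      have h := (((hasDerivAt_id l).const_mul K0).sub (hφd l))
      simp at h
      exact h
    have hmono : Monotone (fun l => K0 * l - N l / D l) := by
      apply monotone_of_deriv_nonneg
      · exact fun l => (hψd l).differentiableAt
      · intro l
        rw [(hψd l).deriv]
        have := hφ'le l
        linarith
    have hkey : N 1 / D 1 - N 0 / D 0 ≤ K0 := by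
      have h01 := hmono zero_le_one
      simp only [mul_zero, mul_one] at h01
      linarith
    -- assembly
    rw [inner_sub_right, hinner x u, hinner y u]
    have e1 : (∫ z, ⟪u, z⟫ * K x z ∂μ) = N 1 := by
      simp only [hN, hxl1]
    have e0 : (∫ z, ⟪u, z⟫ * K y z ∂μ) = N 0 := by
      simp only [hN, hxl0]
    have e1' : f x = D 1 := by
      rw [hf]
      simp only [hD, hxl1]
    have e0' : f y = D 0 := by
      rw [hf]
      simp only [hD, hxl0]
    rw [e1, e0, e1', e0']
    have h5 : ⟪u, x⟫ - ⟪u, y⟫ = ‖u‖^2 := by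
      rw [← inner_sub_right, ← hu, real_inner_self_eq_norm_sq]
    have hfin : (1/t) * ((N 1 / D 1) - ⟪u, x⟫) - (1/t) * ((N 0 / D 0) - ⟪u, y⟫)
        = (1/t) * ((N 1 / D 1 - N 0 / D 0) - ‖u‖^2) := by
      rw [← h5]
      ring
    rw [hfin]
    have hstep : (1/t) * ((N 1 / D 1 - N 0 / D 0) - ‖u‖^2) ≤ (1/t) * (K0 - ‖u‖^2) := by
      apply mul_le_mul_of_nonneg_left _ (by positivity)
      linarith
    refine hstep.trans (le_of_eq ?_)
    rw [hK0]
    field_simp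
  exact ⟨hppos, hdiffable, hmain⟩
end

section
/- Let d ≥ 1, R > 0, t > 0, set s = 1 − e^{−t} ∈ (0,1), and let μ be a probability measure on ℝ^d whose support is contained in the closed ball of radius R centered at the origin. Define q(x) = ∫_{ℝ^d} (2πs)^{−d/2} exp(−‖x − e^{−t/2} z‖²/(2s)) dμ(z), the density of the law of e^{−t/2} X + Z where X ∼ μ and Z ∼ N(0, s·I_d) are independent. Then q is everywhere strictly positive, log q is differentiable, and for all x, y ∈ ℝ^d, ⟨ x − y, ∇ log q(x) − ∇ log q(y) ⟩ ≤ ( R² e^{−t} / s² − 1/s ) ‖x − y‖². -/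
open MeasureTheory Real RealInnerProductSpace

set_option maxHeartbeats 1000000 in
set_option synthInstance.maxHeartbeats 400000 in
theorem stmt11 (d : ℕ) (hd : 1 ≤ d) (R t s : ℝ) (hR : 0 < R) (ht : 0 < t)
    (hs : s = 1 - Real.exp (-t))
    (μ : Measure (EuclideanSpace ℝ (Fin d))) [IsProbabilityMeasure μ]
    (hμsupp : msupport μ ⊆ Metric.closedBall 0 R)
    (q : EuclideanSpace ℝ (Fin d) → ℝ)
    (hq : ∀ x, q x = ∫ z, (2 * π * s) ^ (-(d : ℝ) / 2) *
      Real.exp (-‖x - Real.exp (-t / 2) • z‖ ^ 2 / (2 * s)) ∂μ) :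
    (∀ x, 0 < q x) ∧
    (Differentiable ℝ fun x => Real.log (q x)) ∧
    ∀ x y : EuclideanSpace ℝ (Fin d),
      ⟪x - y, gradient (fun z => Real.log (q z)) x - gradient (fun z => Real.log (q z)) y⟫ ≤
        (R ^ 2 * Real.exp (-t) / s ^ 2 - 1 / s) * ‖x - y‖ ^ 2 := by
  classical
  have hse : Real.exp (-t) < 1 := by
    rw [Real.exp_lt_one_iff]; linarith
  have hs0 : 0 < s := by rw [hs]; linarith
  set a : ℝ := Real.exp (-t / 2) with ha_def
  have ha0 : 0 < a := Real.exp_pos _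
  have ha1 : a ≤ 1 := Real.exp_le_one_iff.2 (by linarith)
  have ha2 : a * a = Real.exp (-t) := by
    rw [ha_def, ← Real.exp_add]; ring_nf
  set c : ℝ := (2 * π * s) ^ (-(d : ℝ) / 2) with hc_def
  have hc0 : 0 < c := Real.rpow_pos_of_pos (by positivity) _
  -- a.e. bound on the support
  have hae : ∀ᵐ z ∂μ, ‖z‖ ≤ R := by
    have h0 : μ (Metric.closedBall (0 : (EuclideanSpace ℝ (Fin d))) R)ᶜ = 0 := by
      apply measure_null_of_locally_null
      intro z hz
      have hz' : z ∉ msupport μ := fun h => hz (hμsupp h)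
      simp only [msupport, Set.mem_setOf_eq, not_forall] at hz'
      obtain ⟨ε, hε, hμε⟩ := hz'
      exact ⟨Metric.ball z ε, mem_nhdsWithin_of_mem_nhds (Metric.ball_mem_nhds z hε),
        le_antisymm (not_lt.1 hμε) zero_le⟩
    have h1 : ∀ᵐ z ∂μ, z ∈ Metric.closedBall (0 : (EuclideanSpace ℝ (Fin d))) R := by
      rw [ae_iff]
      exact h0
    filter_upwards [h1] with z hz
    simpa [mem_closedBall_zero_iff] using hz
  -- basic structure of q
  set ρ : (EuclideanSpace ℝ (Fin d)) → (EuclideanSpace ℝ (Fin d)) → ℝ := fun x z => Real.exp (-‖x - a • z‖ ^ 2 / (2 * s)) with hρ_def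
  have hρ_cont : ∀ x, Continuous (ρ x) := by
    intro x
    apply Real.continuous_exp.comp
    apply Continuous.div_const
    apply Continuous.neg
    exact (continuous_const.sub (continuous_const_smul a)).norm.pow 2
  have hρ_pos : ∀ x z, 0 < ρ x z := fun x z => Real.exp_pos _
  have hρ_le : ∀ x z, ρ x z ≤ 1 := by
    intro x z
    apply Real.exp_le_one_iff.2
    apply div_nonpos_of_nonpos_of_nonneg
    · simp only [neg_nonpos]; positivity
    · linarith
  have hρ_int : ∀ x, Integrable (ρ x) μ := by
    intro x
    refine (integrable_const (1 : ℝ)).mono' (hρ_cont x).aestronglyMeasurable ?_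
    filter_upwards with z
    rw [Real.norm_eq_abs, abs_of_pos (hρ_pos x z)]
    exact hρ_le x z
  have hq' : ∀ x, q x = c * ∫ z, ρ x z ∂μ := by
    intro x; rw [hq x]; exact integral_const_mul c _
  -- positivity
  have hψ_pos : ∀ x, 0 < ∫ z, ρ x z ∂μ := by
    intro x
    have hlb : ∀ᵐ z ∂μ, Real.exp (-(‖x‖ + a * R) ^ 2 / (2 * s)) ≤ ρ x z := by
      filter_upwards [hae] with z hz
      apply Real.exp_le_exp.2
      have h1 : ‖x - a • z‖ ≤ ‖x‖ + a * R := by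
        calc ‖x - a • z‖ ≤ ‖x‖ + ‖a • z‖ := norm_sub_le _ _
        _ ≤ ‖x‖ + a * R := by
            rw [norm_smul, Real.norm_eq_abs, abs_of_pos ha0]
            have : a * ‖z‖ ≤ a * R := by nlinarith
            linarith
      have h2 : ‖x - a • z‖ ^ 2 ≤ (‖x‖ + a * R) ^ 2 := by
        nlinarith [norm_nonneg (x - a • z)]
      have h2s : (0:ℝ) < 2 * s := by linarith
      exact (div_le_div_iff_of_pos_right h2s).2 (by linarith)
    have h2 : Real.exp (-(‖x‖ + a * R) ^ 2 / (2 * s)) ≤ ∫ z, ρ x z ∂μ := by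
      have := integral_mono_ae (integrable_const _) (hρ_int x) hlb
      rwa [integral_const, probReal_univ, one_smul] at this
    exact lt_of_lt_of_le (Real.exp_pos _) h2
  have hq_pos : ∀ x, 0 < q x := by
    intro x; rw [hq' x]; exact mul_pos hc0 (hψ_pos x)
  -- multivariate differentiability
  have hFder : ∀ (z x : (EuclideanSpace ℝ (Fin d))), HasFDerivAt (fun x => ρ x z)
      ((ρ x z * (-s⁻¹)) • innerSL ℝ (x - a • z)) x := by
    intro z x
    have h2 : HasFDerivAt (fun x : (EuclideanSpace ℝ (Fin d)) => ‖x - a • z‖ ^ 2)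
        (2 • (innerSL ℝ (x - a • z))) x := by
      simpa using ((hasFDerivAt_id x).sub_const (a • z)).norm_sq
    have h3 := (h2.neg.const_mul (2 * s)⁻¹).exp
    simp only [hρ_def]
    rw [show (fun x : (EuclideanSpace ℝ (Fin d)) => Real.exp (-‖x - a • z‖ ^ 2 / (2 * s)))
      = fun x => Real.exp ((2 * s)⁻¹ * -‖x - a • z‖ ^ 2) by
        funext y; rw [div_eq_inv_mul]]
    refine h3.congr_fderiv ?_
    ext v
    simp only [ContinuousLinearMap.smul_apply, ContinuousLinearMap.neg_apply, smul_eq_mul,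
      ContinuousLinearMap.coe_smul', Pi.smul_apply, nsmul_eq_mul, hρ_def, Pi.neg_apply]
    rw [div_eq_inv_mul]
    field_simp
    ring
  have hψ_diff : ∀ x₀ : (EuclideanSpace ℝ (Fin d)), HasFDerivAt (fun x => ∫ z, ρ x z ∂μ)
      (∫ z, (ρ x₀ z * (-s⁻¹)) • innerSL ℝ (x₀ - a • z) ∂μ) x₀ := by
    intro x₀
    apply hasFDerivAt_integral_of_dominated_of_fderiv_le 
      (F := fun x z => ρ x z)
      (F' := fun (x z : EuclideanSpace ℝ (Fin d)) => (ρ x z * (-s⁻¹)) • innerSL ℝ (x - a • z))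
      (bound := fun _ => s⁻¹ * (‖x₀‖ + 1 + R)) (Metric.ball_mem_nhds x₀ one_pos)
    · exact Filter.Eventually.of_forall fun x => (hρ_cont x).aestronglyMeasurable
    · exact hρ_int x₀
    · apply Continuous.aestronglyMeasurable
      apply Continuous.smul (f := fun z => ρ x₀ z * (-s⁻¹)) (g := fun z => innerSL ℝ (x₀ - a • z))
      · exact ((hρ_cont x₀).mul continuous_const)
      · exact (innerSL ℝ).continuous.comp (continuous_const.sub (continuous_const_smul a))
    · filter_upwards [hae] with z hz
      intro x hx
      have hns : ‖(ρ x z * (-s⁻¹)) • innerSL ℝ (x - a • z)‖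
          ≤ ‖ρ x z * (-s⁻¹)‖ * ‖x - a • z‖ := by
        refine le_trans (ContinuousLinearMap.opNorm_smul_le _ _) ?_
        rw [innerSL_apply_norm]
      have h1 : ‖x - a • z‖ ≤ ‖x₀‖ + 1 + R := by
        have hxx : ‖x‖ ≤ ‖x₀‖ + 1 := by
          have := mem_ball_iff_norm.1 hx
          have h := norm_sub_norm_le x x₀
          linarith
        calc ‖x - a • z‖ ≤ ‖x‖ + ‖a • z‖ := norm_sub_le _ _
        _ ≤ ‖x₀‖ + 1 + R := by
            rw [norm_smul, Real.norm_eq_abs, abs_of_pos ha0]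
            nlinarith [norm_nonneg z]
      have h2 : ‖ρ x z * (-s⁻¹)‖ ≤ s⁻¹ := by
        rw [Real.norm_eq_abs, abs_mul, abs_neg, abs_of_pos (hρ_pos x z),
          abs_of_pos (inv_pos.2 hs0)]
        nlinarith [hρ_le x z, hρ_pos x z, inv_pos.2 hs0]
      exact le_trans hns (mul_le_mul h2 h1 (norm_nonneg _) (le_of_lt (inv_pos.2 hs0)))
    · exact integrable_const _
    · filter_upwards with z
      intro x hx
      exact hFder z x
  have hq_diff : ∀ x₀ : (EuclideanSpace ℝ (Fin d)), DifferentiableAt ℝ q x₀ := by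
    intro x₀
    have h1 : DifferentiableAt ℝ (fun x => c * ∫ z, ρ x z ∂μ) x₀ :=
      ((hψ_diff x₀).differentiableAt).const_mul c
    have h2 : q = fun x => c * ∫ z, ρ x z ∂μ := funext hq'
    rw [h2]
    exact h1
  have hlog_diff : Differentiable ℝ fun x => Real.log (q x) := by
    intro x₀
    exact DifferentiableAt.log (hq_diff x₀) (ne_of_gt (hq_pos x₀))
  refine ⟨hq_pos, hlog_diff, ?_⟩
  -- the gradient monotonicity estimate
  intro x y
  set u : (EuclideanSpace ℝ (Fin d)) := x - y with hu_def
  set γ : ℝ → (EuclideanSpace ℝ (Fin d)) := fun τ => y + τ • u with hγ_def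
  have hγ1 : γ 1 = x := by simp [hγ_def, hu_def]
  have hγ0 : γ 0 = y := by simp [hγ_def]
  set b : (EuclideanSpace ℝ (Fin d)) → ℝ := fun z => ⟪u, a • z - y⟫ / s with hb_def
  set w : (EuclideanSpace ℝ (Fin d)) → ℝ := fun z => Real.exp (-‖y - a • z‖ ^ 2 / (2 * s)) with hw_def
  set β : (EuclideanSpace ℝ (Fin d)) → ℝ := fun z => (a / s) * ⟪u, z⟫ with hβ_def
  set c₀ : ℝ := ⟪u, y⟫ / s with hc₀_def
  have hbβ : ∀ z, b z = β z - c₀ := by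
    intro z
    simp only [hb_def, hβ_def, hc₀_def, inner_sub_right, real_inner_smul_right]
    ring
  set B : ℝ := ‖u‖ * (a * R + ‖y‖) / s with hB_def
  have hB0 : 0 ≤ B := by
    simp only [hB_def]
    have : 0 ≤ a * R := by positivity
    positivity
  have hbB : ∀ᵐ z ∂μ, |b z| ≤ B := by
    filter_upwards [hae] with z hz
    simp only [hb_def, hB_def]
    rw [abs_div, abs_of_pos hs0]
    apply (div_le_div_iff_of_pos_right hs0).2
    calc |⟪u, a • z - y⟫| ≤ ‖u‖ * ‖a • z - y‖ := abs_real_inner_le_norm _ _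
    _ ≤ ‖u‖ * (a * R + ‖y‖) := by
        apply mul_le_mul_of_nonneg_left ?_ (norm_nonneg u)
        calc ‖a • z - y‖ ≤ ‖a • z‖ + ‖y‖ := norm_sub_le _ _
        _ ≤ a * R + ‖y‖ := by
            rw [norm_smul, Real.norm_eq_abs, abs_of_pos ha0]
            nlinarith
  set K : ℝ := a * R * ‖u‖ / s with hK_def
  have hβK : ∀ᵐ z ∂μ, |β z| ≤ K := by
    filter_upwards [hae] with z hz
    simp only [hβ_def, hK_def]
    rw [abs_mul, abs_div, abs_of_pos ha0, abs_of_pos hs0]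
    rw [div_mul_eq_mul_div, div_le_div_iff₀ hs0 hs0]
    have h1 : |⟪u, z⟫| ≤ ‖u‖ * R := by
      calc |⟪u, z⟫| ≤ ‖u‖ * ‖z‖ := abs_real_inner_le_norm _ _
      _ ≤ ‖u‖ * R := mul_le_mul_of_nonneg_left hz (norm_nonneg u)
    nlinarith [mul_le_mul_of_nonneg_left h1 (le_of_lt (mul_pos ha0 hs0)), ha0, hs0]
  have hK0 : 0 ≤ K := by simp only [hK_def]; positivity
  have hw_pos : ∀ z, 0 < w z := fun z => Real.exp_pos _
  have hw_le : ∀ z, w z ≤ 1 := by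
    intro z
    apply Real.exp_le_one_iff.2
    apply div_nonpos_of_nonpos_of_nonneg
    · simp only [neg_nonpos]; positivity
    · linarith
  have hb_cont : Continuous b := by
    apply Continuous.div_const
    exact (continuous_const.inner ((continuous_const_smul a).sub continuous_const))
  have hβ_cont : Continuous β := by
    apply Continuous.mul continuous_const
    exact continuous_const.inner continuous_id
  have hw_cont : Continuous w := by
    apply Real.continuous_exp.comp
    apply Continuous.div_const
    apply Continuous.neg
    exact (continuous_const.sub (continuous_const_smul a)).norm.pow 2
  -- generic integrability
  have hint : ∀ (h : (EuclideanSpace ℝ (Fin d)) → ℝ) (C : ℝ), Continuous h → (∀ᵐ z ∂μ, |h z| ≤ C) → ∀ τ : ℝ,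
      Integrable (fun z => h z * Real.exp (τ * b z) * w z) μ := by
    intro h C hc hC τ
    refine (integrable_const (C * Real.exp (|τ| * B))).mono' ?_ ?_
    · exact (((hc.mul (Real.continuous_exp.comp ((continuous_const.mul hb_cont)))).mul
        hw_cont)).aestronglyMeasurable
    · filter_upwards [hC, hbB] with z h1 h2
      rw [Real.norm_eq_abs, abs_mul, abs_mul, abs_of_pos (hw_pos z),
        abs_of_pos (Real.exp_pos _)]
      have hC0 : 0 ≤ C := le_trans (abs_nonneg _) h1
      have he : Real.exp (τ * b z) ≤ Real.exp (|τ| * B) := by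
        apply Real.exp_le_exp.2
        calc τ * b z ≤ |τ * b z| := le_abs_self _
        _ = |τ| * |b z| := abs_mul _ _
        _ ≤ |τ| * B := mul_le_mul_of_nonneg_left h2 (abs_nonneg τ)
      have := mul_le_mul (mul_le_mul h1 he (le_of_lt (Real.exp_pos _)) hC0)
        (hw_le z) (le_of_lt (hw_pos z)) (by positivity)
      linarith [this]
  have hint1 : ∀ τ : ℝ, Integrable (fun z => Real.exp (τ * b z) * w z) μ := by
    intro τ
    have := hint (fun _ => 1) 1 continuous_const
      (Filter.Eventually.of_forall fun z => by norm_num) τ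
    simpa using this
  have hintb : ∀ τ : ℝ, Integrable (fun z => b z * Real.exp (τ * b z) * w z) μ :=
    fun τ => hint b B hb_cont hbB τ
  have hintb2 : ∀ τ : ℝ, Integrable (fun z => b z ^ 2 * Real.exp (τ * b z) * w z) μ :=
    fun τ => hint (fun z => b z ^ 2) (B ^ 2) (hb_cont.pow 2)
      (by filter_upwards [hbB] with z hz
          rw [abs_of_nonneg (sq_nonneg _), ← sq_abs]
          exact pow_le_pow_left₀ (abs_nonneg _) hz 2) τ
  set M : ℝ → ℝ := fun τ => ∫ z, Real.exp (τ * b z) * w z ∂μ with hM_def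
  set M₁ : ℝ → ℝ := fun τ => ∫ z, b z * Real.exp (τ * b z) * w z ∂μ with hM₁_def
  set M₂ : ℝ → ℝ := fun τ => ∫ z, b z ^ 2 * Real.exp (τ * b z) * w z ∂μ with hM₂_def
  set N₁ : ℝ → ℝ := fun τ => ∫ z, β z * Real.exp (τ * b z) * w z ∂μ with hN₁_def
  set N₂ : ℝ → ℝ := fun τ => ∫ z, β z ^ 2 * Real.exp (τ * b z) * w z ∂μ with hN₂_def
  have hintβ : ∀ τ : ℝ, Integrable (fun z => β z * Real.exp (τ * b z) * w z) μ :=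
    fun τ => hint β K hβ_cont hβK τ
  have hintβ2 : ∀ τ : ℝ, Integrable (fun z => β z ^ 2 * Real.exp (τ * b z) * w z) μ :=
    fun τ => hint (fun z => β z ^ 2) (K ^ 2) (hβ_cont.pow 2)
      (by filter_upwards [hβK] with z hz
          rw [abs_of_nonneg (sq_nonneg _), ← sq_abs]
          exact pow_le_pow_left₀ (abs_nonneg _) hz 2) τ
  -- the key pointwise identity
  have hnorm : ∀ (τ : ℝ) (z : EuclideanSpace ℝ (Fin d)),
      ‖y + τ • u - a • z‖ ^ 2
        = ‖y - a • z‖ ^ 2 + 2 * (τ * ⟪y - a • z, u⟫) + τ ^ 2 * ‖u‖ ^ 2 := by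
    intro τ z
    rw [show y + τ • u - a • z = (y - a • z) + τ • u from add_sub_right_comm y (τ • u) (a • z)]
    rw [norm_add_sq_real, real_inner_smul_right, norm_smul]
    simp only [Real.norm_eq_abs, mul_pow, sq_abs]
  have hkey : ∀ (τ : ℝ) (z : EuclideanSpace ℝ (Fin d)), ρ (γ τ) z
      = Real.exp (-(τ ^ 2 * ‖u‖ ^ 2) / (2 * s)) * (Real.exp (τ * b z) * w z) := by
    intro τ z
    simp only [hρ_def, hγ_def, hw_def, hb_def]
    rw [← Real.exp_add, ← Real.exp_add]
    congr 1
    rw [hnorm τ z]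
    have hip : ⟪y - a • z, u⟫ = -⟪u, a • z - y⟫ := by
      rw [real_inner_comm, show y - a • z = -(a • z - y) from (neg_sub _ _).symm,
        inner_neg_right]
    rw [hip]
    field_simp
    ring
  have hMq : ∀ τ : ℝ, q (γ τ)
      = c * (Real.exp (-(τ ^ 2 * ‖u‖ ^ 2) / (2 * s)) * M τ) := by
    intro τ
    rw [hq' (γ τ)]
    congr 1
    simp only [hM_def]
    rw [← integral_const_mul]
    apply integral_congr_ae
    filter_upwards with z
    exact hkey τ z
  have hM_pos : ∀ τ : ℝ, 0 < M τ := by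
    intro τ
    have h1 := hq_pos (γ τ)
    rw [hMq τ] at h1
    by_contra h
    push_neg at h
    nlinarith [Real.exp_pos (-(τ ^ 2 * ‖u‖ ^ 2) / (2 * s)), hc0,
      mul_pos hc0 (Real.exp_pos (-(τ ^ 2 * ‖u‖ ^ 2) / (2 * s)))]
  -- derivatives of M and M₁
  have habs : ∀ (τ₀ τ : ℝ), τ ∈ Metric.ball τ₀ 1 → |τ| ≤ |τ₀| + 1 := by
    intro τ₀ τ hτ
    have h := mem_ball_iff_norm.1 hτ
    rw [Real.norm_eq_abs] at h
    have := abs_sub_abs_le_abs_sub τ τ₀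
    linarith
  have hexp_le : ∀ (τ₀ τ : ℝ) (z : EuclideanSpace ℝ (Fin d)), |b z| ≤ B →
      τ ∈ Metric.ball τ₀ 1 → Real.exp (τ * b z) ≤ Real.exp ((|τ₀| + 1) * B) := by
    intro τ₀ τ z hz hτ
    apply Real.exp_le_exp.2
    calc τ * b z ≤ |τ * b z| := le_abs_self _
    _ = |τ| * |b z| := abs_mul _ _
    _ ≤ (|τ₀| + 1) * B := mul_le_mul (habs τ₀ τ hτ) hz (abs_nonneg _) (by positivity)
  have hM_deriv : ∀ τ₀ : ℝ, HasDerivAt M (M₁ τ₀) τ₀ := by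
    intro τ₀
    have key := hasDerivAt_integral_of_dominated_loc_of_deriv_le (Metric.ball_mem_nhds τ₀ one_pos)
      (F := fun (τ : ℝ) z => Real.exp (τ * b z) * w z)
      (F' := fun (τ : ℝ) z => b z * Real.exp (τ * b z) * w z)
      (bound := fun _ => B * Real.exp ((|τ₀| + 1) * B))
      (Filter.Eventually.of_forall fun τ =>
        ((Real.continuous_exp.comp (continuous_const.mul hb_cont)).mul
          hw_cont).aestronglyMeasurable)
      (hint1 τ₀) ((hintb τ₀).aestronglyMeasurable) ?_ (integrable_const _) ?_
    · exact key.2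
    · filter_upwards [hbB] with z hz
      intro τ hτ
      rw [Real.norm_eq_abs, abs_mul, abs_mul, abs_of_pos (Real.exp_pos _),
        abs_of_pos (hw_pos z)]
      calc |b z| * Real.exp (τ * b z) * w z ≤ B * Real.exp ((|τ₀| + 1) * B) * 1 := by
            apply mul_le_mul ?_ (hw_le z) (le_of_lt (hw_pos z))
              (mul_nonneg hB0 (le_of_lt (Real.exp_pos _)))
            exact mul_le_mul hz (hexp_le τ₀ τ z hz hτ) (le_of_lt (Real.exp_pos _)) hB0
      _ = B * Real.exp ((|τ₀| + 1) * B) := mul_one _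
    · filter_upwards with z
      intro τ hτ
      have h := (hasDerivAt_mul_const (b z) (x := τ)).exp.mul_const (w z)
      refine h.congr_deriv ?_
      ring
  have hM₁_deriv : ∀ τ₀ : ℝ, HasDerivAt M₁ (M₂ τ₀) τ₀ := by
    intro τ₀
    have key := hasDerivAt_integral_of_dominated_loc_of_deriv_le (Metric.ball_mem_nhds τ₀ one_pos)
      (F := fun (τ : ℝ) z => b z * Real.exp (τ * b z) * w z)
      (F' := fun (τ : ℝ) z => b z ^ 2 * Real.exp (τ * b z) * w z)
      (bound := fun _ => B ^ 2 * Real.exp ((|τ₀| + 1) * B))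
      (Filter.Eventually.of_forall fun τ =>
        ((hb_cont.mul (Real.continuous_exp.comp (continuous_const.mul hb_cont))).mul
          hw_cont).aestronglyMeasurable)
      (hintb τ₀) ((hintb2 τ₀).aestronglyMeasurable) ?_ (integrable_const _) ?_
    · exact key.2
    · filter_upwards [hbB] with z hz
      intro τ hτ
      rw [Real.norm_eq_abs, abs_mul, abs_mul, abs_of_pos (Real.exp_pos _),
        abs_of_pos (hw_pos z), abs_of_nonneg (sq_nonneg (b z))]
      have hb2 : b z ^ 2 ≤ B ^ 2 := by
        rw [← sq_abs]
        exact pow_le_pow_left₀ (abs_nonneg _) hz 2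
      calc b z ^ 2 * Real.exp (τ * b z) * w z
          ≤ B ^ 2 * Real.exp ((|τ₀| + 1) * B) * 1 := by
            apply mul_le_mul ?_ (hw_le z) (le_of_lt (hw_pos z))
              (mul_nonneg (sq_nonneg B) (le_of_lt (Real.exp_pos _)))
            exact mul_le_mul hb2 (hexp_le τ₀ τ z hz hτ) (le_of_lt (Real.exp_pos _))
              (sq_nonneg B)
      _ = B ^ 2 * Real.exp ((|τ₀| + 1) * B) := mul_one _
    · filter_upwards with z
      intro τ hτ
      have h := (((hasDerivAt_mul_const (b z) (x := τ)).exp.const_mul (b z)).mul_const (w z))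
      refine h.congr_deriv ?_
      ring
  -- decomposition and variance bound
  have hM₁N : ∀ τ : ℝ, M₁ τ = N₁ τ - c₀ * M τ := by
    intro τ
    simp only [hM₁_def, hN₁_def, hM_def]
    rw [← integral_const_mul c₀, ← integral_sub (hintβ τ) ((hint1 τ).const_mul c₀)]
    apply integral_congr_ae
    filter_upwards with z
    rw [hbβ z]
    ring
  have hM₂N : ∀ τ : ℝ, M₂ τ = N₂ τ - 2 * c₀ * N₁ τ + c₀ ^ 2 * M τ := by
    intro τ
    simp only [hM₂_def, hN₂_def, hN₁_def, hM_def]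
    have h1 := hintβ2 τ
    have h2 := (hintβ τ).const_mul (2 * c₀)
    have h3 := (hint1 τ).const_mul (c₀ ^ 2)
    have h12 : Integrable (fun z => β z ^ 2 * Real.exp (τ * b z) * w z
        - 2 * c₀ * (β z * Real.exp (τ * b z) * w z)) μ := h1.sub h2
    have e1 : (∫ z, (β z ^ 2 * Real.exp (τ * b z) * w z
          - 2 * c₀ * (β z * Real.exp (τ * b z) * w z)
          + c₀ ^ 2 * (Real.exp (τ * b z) * w z)) ∂μ)
        = (∫ z, β z ^ 2 * Real.exp (τ * b z) * w z ∂μ)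
          - 2 * c₀ * (∫ z, β z * Real.exp (τ * b z) * w z ∂μ)
          + c₀ ^ 2 * (∫ z, Real.exp (τ * b z) * w z ∂μ) := by
      rw [integral_add h12 h3, integral_sub h1 h2, integral_const_mul, integral_const_mul]
    rw [← e1]
    apply integral_congr_ae
    filter_upwards with z
    rw [hbβ z]
    ring
  have hN₂_le : ∀ τ : ℝ, N₂ τ ≤ K ^ 2 * M τ := by
    intro τ
    simp only [hN₂_def, hM_def]
    rw [← integral_const_mul (K ^ 2)]
    apply integral_mono_ae (hintβ2 τ) ((hint1 τ).const_mul _)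
    filter_upwards [hβK] with z hz
    have h1 : β z ^ 2 ≤ K ^ 2 := by
      rw [← sq_abs]
      exact pow_le_pow_left₀ (abs_nonneg _) hz 2
    have h2 : 0 < Real.exp (τ * b z) * w z := mul_pos (Real.exp_pos _) (hw_pos z)
    nlinarith
  have hvar : ∀ τ : ℝ, M₂ τ * M τ - M₁ τ ^ 2 ≤ K ^ 2 * (M τ) ^ 2 := by
    intro τ
    have h1 : M₂ τ * M τ - M₁ τ ^ 2 = N₂ τ * M τ - N₁ τ ^ 2 := by
      rw [hM₂N τ, hM₁N τ]
      ring
    rw [h1]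
    nlinarith [hN₂_le τ, hM_pos τ, sq_nonneg (N₁ τ),
      mul_le_mul_of_nonneg_right (hN₂_le τ) (le_of_lt (hM_pos τ))]
  -- the 1-d logarithmic derivative
  set C : ℝ := (R ^ 2 * Real.exp (-t) / s ^ 2 - 1 / s) * ‖u‖ ^ 2 with hC_def
  set g : ℝ → ℝ := fun τ => -(τ * ‖u‖ ^ 2) / s + M₁ τ / M τ with hg_def
  have hf_eq : (fun τ : ℝ => Real.log (q (γ τ)))
      = fun τ => Real.log c + -(τ ^ 2 * ‖u‖ ^ 2) / (2 * s) + Real.log (M τ) := by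
    funext τ
    rw [hMq τ, Real.log_mul (ne_of_gt hc0)
      (ne_of_gt (mul_pos (Real.exp_pos _) (hM_pos τ))),
      Real.log_mul (ne_of_gt (Real.exp_pos _)) (ne_of_gt (hM_pos τ)), Real.log_exp]
    ring
  have hf_deriv : ∀ τ : ℝ, HasDerivAt (fun τ => Real.log (q (γ τ))) (g τ) τ := by
    intro τ
    rw [hf_eq]
    have h1 : HasDerivAt (fun τ : ℝ => -(τ ^ 2 * ‖u‖ ^ 2) / (2 * s)) (-(τ * ‖u‖ ^ 2) / s) τ := by
      have h := ((hasDerivAt_pow 2 τ).mul_const (‖u‖ ^ 2)).neg.div_const (2 * s)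
      refine h.congr_deriv ?_
      field_simp
      ring
    have h2 : HasDerivAt (fun τ => Real.log (M τ)) (M₁ τ / M τ) τ :=
      (hM_deriv τ).log (ne_of_gt (hM_pos τ))
    have h3 := ((hasDerivAt_const τ (Real.log c)).add h1).add h2
    refine h3.congr_deriv ?_
    simp only [hg_def]
    ring
  have hg_deriv : ∀ τ : ℝ,
      HasDerivAt g ((M₂ τ * M τ - M₁ τ ^ 2) / (M τ) ^ 2 - ‖u‖ ^ 2 / s) τ := by
    intro τ
    have h1 : HasDerivAt (fun τ : ℝ => -(τ * ‖u‖ ^ 2) / s) (-(‖u‖ ^ 2) / s) τ := by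
      have h := ((hasDerivAt_mul_const (‖u‖ ^ 2) (x := τ)).neg.div_const s)
      exact h
    have h2 := (hM₁_deriv τ).div (hM_deriv τ) (ne_of_gt (hM_pos τ))
    have h3 := h1.add h2
    refine h3.congr_deriv ?_
    ring
  have hg_le : ∀ τ : ℝ, (M₂ τ * M τ - M₁ τ ^ 2) / (M τ) ^ 2 - ‖u‖ ^ 2 / s ≤ C := by
    intro τ
    have h1 : (M₂ τ * M τ - M₁ τ ^ 2) / (M τ) ^ 2 ≤ K ^ 2 := by
      rw [div_le_iff₀ (pow_pos (hM_pos τ) 2)]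
      exact hvar τ
    have hC' : C = K ^ 2 - ‖u‖ ^ 2 / s := by
      simp only [hC_def, hK_def]
      rw [show (a * R * ‖u‖ / s) ^ 2 = a * a * R ^ 2 * ‖u‖ ^ 2 / s ^ 2 by ring, ha2]
      ring
    rw [hC']
    linarith
  have hg10 : g 1 - g 0 ≤ C := by
    have hmono : Monotone (fun τ => τ * C - g τ) := by
      apply monotone_of_deriv_nonneg
      · intro τ
        exact ((hasDerivAt_mul_const C).sub (hg_deriv τ)).differentiableAt
      · intro τ
        have h := (hasDerivAt_mul_const C (x := τ)).sub (hg_deriv τ)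
        rw [show (fun τ => τ * C - g τ) = (fun x => x * C) - g from rfl, h.deriv]
        have := hg_le τ
        linarith
    have h01 := hmono (by norm_num : (0 : ℝ) ≤ 1)
    simp only [zero_mul, one_mul] at h01
    linarith
  -- assemble
  have hgrad : ∀ (p v : EuclideanSpace ℝ (Fin d)),
      ⟪v, gradient (fun z => Real.log (q z)) p⟫
        = fderiv ℝ (fun z => Real.log (q z)) p v := by
    intro p v
    rw [real_inner_comm, gradient, InnerProductSpace.toDual_symm_apply]
  have hfd : ∀ τ : ℝ, g τ = fderiv ℝ (fun z => Real.log (q z)) (γ τ) u := by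
    intro τ
    have hγd : HasDerivAt γ u τ := by
      simp only [hγ_def]
      simpa using ((hasDerivAt_id τ).smul_const u).const_add y
    have h1 : HasDerivAt (fun τ => Real.log (q (γ τ)))
        (fderiv ℝ (fun z => Real.log (q z)) (γ τ) u) τ :=
      ((hlog_diff (γ τ)).hasFDerivAt.comp_hasDerivAt τ hγd)
    exact (hf_deriv τ).unique h1
  calc ⟪u, gradient (fun z => Real.log (q z)) x - gradient (fun z => Real.log (q z)) y⟫
      = ⟪u, gradient (fun z => Real.log (q z)) x⟫
        - ⟪u, gradient (fun z => Real.log (q z)) y⟫ := inner_sub_right _ _ _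
  _ = g 1 - g 0 := by
      rw [hgrad, hgrad, ← hγ1, ← hγ0, ← hfd 1, ← hfd 0]
  _ ≤ C := hg10
end
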